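/- arXiv:1401.3738 — 9 statements merged into one kernel-verified Lean document; each statement's English description precedes it below -/
import Mathlib

section
/- Let E be a nontrivial finite-dimensional real inner product space, let p ≥ 2 be an integer, and let F : E → ℝ be a differentiable function that is homogeneous of degree p, i.e. F(c • x) = c^p F(x) for all c ∈ ℝ and x ∈ E. Suppose v̂ ∈ E satisfies ‖v̂‖ = 1, F(v̂) > 0, and F(v̂) ≥ F(w) for every w ∈ E with ‖w‖ = 1. Then for every λ > 0, the gradient of F at λ • v̂ equals (p · λ^(p-1) · F(v̂)) • v̂. -/
open RealInnerProductSpace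

/-- For a differentiable `p`-homogeneous function `F` (`p ≥ 2`) on a nontrivial
finite-dimensional real inner product space, if `F` attains a positive maximum on the unit
sphere at `v̂`, then for every `λ > 0` the gradient of `F` at `λ • v̂` equals
`(p · λ^(p-1) · F(v̂)) • v̂`. -/
theorem radial_gradient_at_sphere_max
    {E : Type*} [NormedAddCommGroup E] [InnerProductSpace ℝ E]
    [FiniteDimensional ℝ E] [Nontrivial E]
    (p : ℕ) (hp : 2 ≤ p)
    (F : E → ℝ) (hF : Differentiable ℝ F)
    (hhom : ∀ (c : ℝ) (x : E), F (c • x) = c ^ p * F x)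
    (v : E) (hv : ‖v‖ = 1) (hpos : 0 < F v)
    (hmax : ∀ w : E, ‖w‖ = 1 → F w ≤ F v) :
    ∀ l : ℝ, 0 < l →
      gradient F (l • v) = ((p : ℝ) * l ^ (p - 1) * F v) • v := by
  -- fderiv in terms of gradient
  have key : ∀ x w : E, fderiv ℝ F x w = ⟪gradient F x, w⟫ := by
    intro x w
    have h := (hF x).hasGradientAt
    rw [hasGradientAt_iff_hasFDerivAt] at h
    rw [h.fderiv]
    exact (InnerProductSpace.toDual_apply_apply)
  -- Euler identity at v
  have euler : fderiv ℝ F v v = (p : ℝ) * F v := by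
    have hs : HasDerivAt (fun t : ℝ => t • v) v 1 := by
      simpa using (hasDerivAt_id (1 : ℝ)).smul_const v
    have h1 : HasDerivAt (fun t : ℝ => F (t • v)) (fderiv ℝ F v v) 1 := by
      have hFv : HasFDerivAt F (fderiv ℝ F v) ((1 : ℝ) • v) := by
        simpa using (hF v).hasFDerivAt
      exact hFv.comp_hasDerivAt 1 hs
    have h2 : HasDerivAt (fun t : ℝ => t ^ p * F v) ((p : ℝ) * F v) 1 := by
      simpa using (hasDerivAt_pow p (1 : ℝ)).mul_const (F v)
    have h3 : (fun t : ℝ => F (t • v)) = fun t : ℝ => t ^ p * F v :=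
      funext fun t => hhom t v
    rw [h3] at h1
    exact h1.unique h2
  -- orthogonal directions are critical
  have orth : ∀ w : E, ⟪v, w⟫ = 0 → fderiv ℝ F v w = 0 := by
    intro w hw
    rcases eq_or_ne w 0 with rfl | hw0
    · simp
    · set u : E := ‖w‖⁻¹ • w with hu_def
      have hwn : (0 : ℝ) < ‖w‖ := norm_pos_iff.mpr hw0
      have hu : ‖u‖ = 1 := by
        rw [hu_def, norm_smul, norm_inv, norm_norm, inv_mul_cancel₀ hwn.ne']
      have huv : ⟪v, u⟫ = 0 := by
        rw [hu_def, inner_smul_right, hw, mul_zero]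
      -- the great circle through v in direction u
      have hnorm : ∀ t : ℝ, ‖Real.cos t • v + Real.sin t • u‖ = 1 := by
        intro t
        have hsq : ‖Real.cos t • v + Real.sin t • u‖ ^ 2 = 1 := by
          rw [norm_add_sq_real, inner_smul_left, inner_smul_right, huv,
            norm_smul, norm_smul, hv, hu]
          simp only [Real.norm_eq_abs, mul_one, mul_zero, starRingEnd_apply, star_trivial]
          rw [sq_abs, sq_abs]
          nlinarith [Real.sin_sq_add_cos_sq t]
        nlinarith [norm_nonneg (Real.cos t • v + Real.sin t • u)]
      have hc0 : (Real.cos 0 • v + Real.sin 0 • u) = v := by simp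
      have hder : HasDerivAt (fun t : ℝ => Real.cos t • v + Real.sin t • u) u 0 := by
        have h1 := (Real.hasDerivAt_cos 0).smul_const v
        have h2 := (Real.hasDerivAt_sin 0).smul_const u
        have h3 := h1.add h2
        simp at h3
        exact h3
      have hcomp : HasDerivAt (fun t : ℝ => F (Real.cos t • v + Real.sin t • u))
          (fderiv ℝ F v u) 0 := by
        have hFv : HasFDerivAt F (fderiv ℝ F v) (Real.cos 0 • v + Real.sin 0 • u) := by
          rw [hc0]; exact (hF v).hasFDerivAt
        exact hFv.comp_hasDerivAt 0 hder
      have hlm : IsLocalMax (fun t : ℝ => F (Real.cos t • v + Real.sin t • u)) 0 := by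
        apply Filter.Eventually.of_forall
        intro t
        have := hmax _ (hnorm t)
        simpa [hc0] using this
      have hzero : fderiv ℝ F v u = 0 := hlm.hasDerivAt_eq_zero hcomp
      have hw' : w = ‖w‖ • u := by
        rw [hu_def, smul_smul, mul_inv_cancel₀ hwn.ne', one_smul]
      rw [hw', map_smul, hzero, smul_zero]
  -- gradient at v
  have gradv : gradient F v = ((p : ℝ) * F v) • v := by
    set g := gradient F v with hg
    have hgv : ⟪g, v⟫ = (p : ℝ) * F v := by rw [← key]; exact euler
    have hvv : ⟪v, v⟫ = 1 := by
      rw [real_inner_self_eq_norm_sq, hv, one_pow]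
    set r : E := g - ((p : ℝ) * F v) • v with hr
    have hvr : ⟪v, r⟫ = 0 := by
      rw [hr, inner_sub_right, inner_smul_right, hvv, real_inner_comm, hgv]
      ring
    have hgr : ⟪g, r⟫ = 0 := by
      rw [← key]; exact orth r hvr
    have hrr : ⟪r, r⟫ = 0 := by
      have hsplit : ⟪r, r⟫ = ⟪g, r⟫ - ((p : ℝ) * F v) * ⟪v, r⟫ := by
        rw [hr, inner_sub_left, real_inner_smul_left]
      rw [hsplit, hgr, hvr]
      ring
    have : r = 0 := inner_self_eq_zero.mp hrr
    have := sub_eq_zero.mp this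
    exact this
  -- scaling of the derivative
  intro l hl
  have hl0 : l ≠ 0 := hl.ne'
  have hp1 : p - 1 + 1 = p := by omega
  have scale : ∀ w : E, fderiv ℝ F (l • v) w = l ^ (p - 1) * fderiv ℝ F v w := by
    intro w
    have h1 : HasFDerivAt (fun x : E => F (l • x)) ((l ^ p : ℝ) • fderiv ℝ F v) v := by
      have heq : (fun x : E => F (l • x)) = fun x : E => l ^ p * F x :=
        funext fun x => hhom l x
      rw [heq]
      exact (hF v).hasFDerivAt.const_mul (l ^ p)
    have hs : HasFDerivAt (fun x : E => l • x) (l • ContinuousLinearMap.id ℝ E) v := by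
      have := (l • ContinuousLinearMap.id ℝ E).hasFDerivAt (x := v)
      rw [show (fun x : E => l • x) = ⇑(l • ContinuousLinearMap.id ℝ E) from by ext x; simp]
      exact this
    have h2 : HasFDerivAt (fun x : E => F (l • x))
        ((fderiv ℝ F (l • v)).comp (l • ContinuousLinearMap.id ℝ E)) v :=
      (hF (l • v)).hasFDerivAt.comp v hs
    have heq := h1.unique h2
    have happ := congrFun (congrArg (fun f : E →L[ℝ] ℝ => (f : E → ℝ)) heq) w
    simp only [ContinuousLinearMap.smul_apply, ContinuousLinearMap.coe_comp',
      Function.comp_apply, ContinuousLinearMap.smul_apply, ContinuousLinearMap.coe_id',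
      id_eq, smul_eq_mul, map_smul] at happ
    have hlp : l ^ p = l ^ (p - 1) * l := by
      conv_lhs => rw [← hp1]
      rw [pow_succ]
    have hmm : l * fderiv ℝ F (l • v) w = l * (l ^ (p - 1) * fderiv ℝ F v w) := by
      rw [← happ, hlp]; ring
    exact mul_left_cancel₀ hl0 hmm
  -- conclude
  have hfin : ∀ w : E, ⟪gradient F (l • v), w⟫
      = ⟪((p : ℝ) * l ^ (p - 1) * F v) • v, w⟫ := by
    intro w
    rw [← key, scale w, key, gradv, real_inner_smul_left, real_inner_smul_left]
    ring
  exact ext_inner_right ℝ hfin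
end

section
/- Let k ≥ 1 be an integer, let c > 0, T > 0, let μ₁, …, μ_k ∈ ℝ, and let γ ∈ ℝ satisfy c·γ ≠ μ_j for every j. Let E = (E₁, …, E_k) : [0,∞) → ℝ^k be continuous with M := sup_{t ≥ 0} (T+t)^(1+γ) max_j |E_j(t)| < ∞. Then there exists a unique differentiable function u = (u₁, …, u_k) : [0,∞) → ℝ^k such that: (i) c·u_j'(t) + (μ_j/(T+t))·u_j(t) = E_j(t) for all t ≥ 0 and all j; (ii) sup_{t ≥ 0} (T+t)^γ max_j |u_j(t)| < ∞; and (iii) u_j(0) = 0 for every index j with μ_j > c·γ. Moreover, there is a constant C > 0 depending only on c, γ, μ₁, …, μ_k (in particular, independent of T and of E) such that sup_{t ≥ 0} (T+t)^γ max_j |u_j(t)| ≤ C·M. -/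
open Set MeasureTheory Filter Topology


lemma aux_int_Icc (T p : ℝ) (hT : 0 < T) (hp : p ≠ -1) (t : ℝ) (ht : 0 ≤ t) :
    ∫ s in (0:ℝ)..t, (T + s) ^ p = ((T + t) ^ (p + 1) - T ^ (p + 1)) / (p + 1) := by
  have h := intervalIntegral.integral_comp_add_left (a := (0:ℝ)) (b := t)
    (fun x : ℝ => x ^ p) T
  rw [h, integral_rpow (Or.inr ⟨hp, by
    rw [uIcc_of_le (by linarith : T + 0 ≤ T + t)]
    rintro ⟨h1, -⟩; linarith⟩)]
  norm_num

lemma aux_int_Ioi (T p : ℝ) (hT : 0 < T) (hp : p < -1) (a : ℝ) (ha : 0 ≤ a) :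
    IntegrableOn (fun s => (T + s) ^ p) (Ioi a) ∧
      ∫ s in Ioi a, (T + s) ^ p = (T + a) ^ (p + 1) / (-(p + 1)) := by
  have hp1 : p + 1 ≠ 0 := by linarith
  have hderiv : ∀ x ∈ Ici a, HasDerivAt (fun s : ℝ => (T + s) ^ (p + 1) / (p + 1))
      ((T + x) ^ p) x := by
    intro x hx
    have hx0 : (0:ℝ) < T + x := by have := hx.out; linarith
    have h1 : HasDerivAt (fun s : ℝ => T + s) 1 x := (hasDerivAt_id x).const_add T
    have h2 := (h1.rpow_const (p := p + 1) (Or.inl hx0.ne')).div_const (p + 1)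
    have : 1 * (p + 1) * (T + x) ^ (p + 1 - 1) / (p + 1) = (T + x) ^ p := by
      field_simp
      rw [add_sub_cancel_right]
    rwa [this] at h2
  have hpos : ∀ x ∈ Ioi a, 0 ≤ (T + x) ^ p := by
    intro x hx
    have : (0:ℝ) < T + x := by have := hx.out; linarith
    positivity
  have htend : Tendsto (fun s : ℝ => (T + s) ^ (p + 1) / (p + 1)) atTop (𝓝 0) := by
    have h1 : Tendsto (fun s : ℝ => T + s) atTop atTop :=
      tendsto_atTop_add_const_left _ T tendsto_id
    have h2 : Tendsto (fun x : ℝ => x ^ (p + 1)) atTop (𝓝 0) := by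
      have := tendsto_rpow_neg_atTop (y := -(p+1)) (by linarith)
      simpa using this
    have := (h2.comp h1).div_const (p + 1)
    simpa using this
  refine ⟨integrableOn_Ioi_deriv_of_nonneg' hderiv hpos htend, ?_⟩
  rw [integral_Ioi_of_hasDerivAt_of_nonneg' hderiv hpos htend]
  field_simp
  ring


lemma scalar_ode (c γ T μ M : ℝ) (hc : 0 < c) (hT : 0 < T) (hμ : c * γ ≠ μ)
    (f : ℝ → ℝ) (hf : ContinuousOn f (Ici 0))
    (hfM : ∀ t ∈ Ici (0:ℝ), |f t| ≤ M * (T + t) ^ (-(1 + γ))) :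
    ∃ u : ℝ → ℝ,
      (∀ t ∈ Ici (0:ℝ), ∃ d, HasDerivWithinAt u d (Ici 0) t ∧ c * d + μ / (T + t) * u t = f t) ∧
      (c * γ < μ → u 0 = 0) ∧
      (∀ t ∈ Ici (0:ℝ), |u t| ≤ (c * |μ / c - γ|)⁻¹ * M * (T + t) ^ (-γ)) ∧
      (∀ v : ℝ → ℝ,
        (∀ t ∈ Ici (0:ℝ), ∃ d, HasDerivWithinAt v d (Ici 0) t ∧ c * d + μ / (T + t) * v t = f t) →
        (∃ B, ∀ t ∈ Ici (0:ℝ), (T + t) ^ γ * |v t| ≤ B) →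
        (c * γ < μ → v 0 = 0) →
        ∀ t ∈ Ici (0:ℝ), v t = u t) := by
  have hc' : c ≠ 0 := hc.ne'
  set m : ℝ := μ / c with hm
  have hμm : μ = c * m := by rw [hm]; field_simp
  have hmγ : m ≠ γ := by
    intro h; exact hμ (by rw [hμm, h])
  -- the integrand of the integrating-factor formula, extended continuously to all of ℝ
  set g : ℝ → ℝ := fun s => (T + max s 0) ^ m * f (max s 0) with hgdef
  have hmax : Continuous fun s : ℝ => max s 0 := continuous_id.max continuous_const
  have hg_cont : Continuous g := by
    apply Continuous.mul
    · apply Continuous.rpow_const (continuous_const.add hmax)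
      intro s; left
      have : (0:ℝ) < T + max s 0 := by positivity
      exact this.ne'
    · exact hf.comp_continuous hmax fun s => mem_Ici.2 (le_max_right _ _)
  have hg_eq : ∀ t ∈ Ici (0:ℝ), g t = (T + t) ^ m * f t := by
    intro t ht; simp only [hgdef, max_eq_left ht.out]
  have hg_bound : ∀ s ∈ Ici (0:ℝ), |g s| ≤ M * (T + s) ^ (m - 1 - γ) := by
    intro s hs
    have hs0 : (0:ℝ) ≤ s := hs.out
    have hX : (0:ℝ) < T + s := by linarith
    rw [hg_eq s hs, abs_mul, abs_of_nonneg (Real.rpow_nonneg hX.le m)]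
    calc (T + s) ^ m * |f s| ≤ (T + s) ^ m * (M * (T + s) ^ (-(1 + γ))) :=
          mul_le_mul_of_nonneg_left (hfM s hs) (Real.rpow_nonneg hX.le m)
      _ = M * (T + s) ^ (m - 1 - γ) := by
          rw [mul_comm, mul_assoc, ← Real.rpow_add hX]
          ring_nf
  have hM0 : 0 ≤ M := by
    have h0 := (abs_nonneg (f 0)).trans (hfM 0 self_mem_Ici)
    have hp : (0:ℝ) < (T + 0) ^ (-(1 + γ)) := Real.rpow_pos_of_pos (by linarith) _
    nlinarith
  set I : ℝ → ℝ := fun t => ∫ s in (0:ℝ)..t, g s with hIdef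
  have hI : ∀ t : ℝ, HasDerivAt I (g t) t := by
    intro t
    exact intervalIntegral.integral_hasDerivAt_right (hg_cont.intervalIntegrable _ _)
      (hg_cont.stronglyMeasurable.stronglyMeasurableAtFilter) hg_cont.continuousAt
  set A : ℝ := if γ < m then 0 else -(∫ s in Ioi (0:ℝ), g s) with hAdef
  set u : ℝ → ℝ := fun t => (T + t) ^ (-m) * (I t + A) / c with hudef
  -- (i)
  have hui : ∀ t ∈ Ici (0:ℝ), ∃ d, HasDerivWithinAt u d (Ici 0) t ∧
      c * d + μ / (T + t) * u t = f t := by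
    intro t ht
    have hX : (0:ℝ) < T + t := by have := ht.out; linarith
    have h1 : HasDerivAt (fun s : ℝ => T + s) 1 t := (hasDerivAt_id t).const_add T
    have h2 := h1.rpow_const (p := -m) (Or.inl hX.ne')
    have h3 : HasDerivAt (fun s => I s + A) (g t) t := (hI t).add_const A
    have h4 := (h2.mul h3).div_const c
    refine ⟨_, h4.hasDerivWithinAt, ?_⟩
    have e1 : (T + t) ^ (-m) * (T + t) ^ m = 1 := by
      rw [← Real.rpow_add hX]; simp
    have e2 : (T + t) ^ (-m - 1) * (T + t) = (T + t) ^ (-m) := by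
      rw [← Real.rpow_add_one hX.ne']; ring_nf
    rw [hg_eq t ht, hμm]
    show c * ((1 * -m * (T + t) ^ (-m - 1) * (I t + A) +
        (T + t) ^ (-m) * ((T + t) ^ m * f t)) / c) +
        c * m / (T + t) * ((T + t) ^ (-m) * (I t + A) / c) = f t
    have e2' : (T + t) ^ (-m - 1) = (T + t) ^ (-m) / (T + t) := by rw [← e2]; field_simp
    rw [e2', ← mul_assoc ((T + t) ^ (-m)), e1]
    field_simp
    ring
  -- (iii)
  have hu0 : c * γ < μ → u 0 = 0 := by
    intro h
    have hγm : γ < m := by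
      rw [hμm] at h
      exact lt_of_mul_lt_mul_left (by linarith) hc.le
    have hA0 : A = 0 := if_pos hγm
    simp [hudef, hIdef, hA0]
  -- the pointwise estimate
  have hδ : (0:ℝ) < |m - γ| := abs_pos.2 (sub_ne_zero.2 hmγ)
  have hue : ∀ t ∈ Ici (0:ℝ), |u t| ≤ (c * |m - γ|)⁻¹ * M * (T + t) ^ (-γ) := by
    intro t ht
    have ht0 : (0:ℝ) ≤ t := ht.out
    have hX : (0:ℝ) < T + t := by linarith
    have hQ : |I t + A| ≤ M * (T + t) ^ (m - γ) / |m - γ| := by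
      rcases hmγ.lt_or_gt with hlt | hgt
      · -- m < γ : decaying case, A = -∫_{Ioi 0} g
        have hAeq : A = -(∫ s in Ioi (0:ℝ), g s) := if_neg (by push_neg; exact hlt.le)
        have hp : m - 1 - γ < -1 := by linarith
        obtain ⟨hbint, hbval⟩ := aux_int_Ioi T (m - 1 - γ) hT hp t ht0
        have hgint : ∀ a : ℝ, 0 ≤ a → IntegrableOn g (Ioi a) := by
          intro a ha
          obtain ⟨hbi, -⟩ := aux_int_Ioi T (m - 1 - γ) hT hp a ha
          refine Integrable.mono' (hbi.const_mul M)
            hg_cont.aestronglyMeasurable.restrict ?_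
          rw [ae_restrict_iff' measurableSet_Ioi]
          exact .of_forall fun s hs => by
            rw [Real.norm_eq_abs]
            exact hg_bound s (mem_Ici.2 (le_trans ha hs.out.le))
        have hsplit : I t + A = -(∫ s in Ioi t, g s) := by
          have h7 : ∫ s in Ioi (0:ℝ), g s = (∫ s in Ioc 0 t, g s) + ∫ s in Ioi t, g s := by
            rw [← Ioc_union_Ioi_eq_Ioi ht0,
              setIntegral_union (Ioc_disjoint_Ioi le_rfl) measurableSet_Ioi
                ((hg_cont.intervalIntegrable 0 t).1) (hgint t ht0)]
          have h8 : I t = ∫ s in Ioc (0:ℝ) t, g s := intervalIntegral.integral_of_le ht0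
          rw [hAeq, h8, h7]; ring
        rw [hsplit, abs_neg, ← Real.norm_eq_abs]
        calc ‖∫ s in Ioi t, g s‖ ≤ ∫ s in Ioi t, M * (T + s) ^ (m - 1 - γ) := by
              apply norm_integral_le_of_norm_le (hbint.const_mul M)
              rw [ae_restrict_iff' measurableSet_Ioi]
              exact .of_forall fun s hs => by
                rw [Real.norm_eq_abs]
                exact hg_bound s (mem_Ici.2 (le_trans ht0 hs.out.le))
          _ = M * ((T + t) ^ (m - 1 - γ + 1) / (-(m - 1 - γ + 1))) := by
              rw [integral_const_mul, hbval]
          _ = M * (T + t) ^ (m - γ) / |m - γ| := by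
              rw [abs_of_neg (sub_neg.2 hlt)]
              ring_nf
      · -- γ < m : growing case, A = 0
        have hA0 : A = 0 := if_pos hgt
        have hp1 : m - 1 - γ ≠ -1 := by intro h; exact hmγ (by linarith)
        have hbc : ContinuousOn (fun s : ℝ => M * (T + s) ^ (m - 1 - γ)) (Icc 0 t) := by
          apply ContinuousOn.mul continuousOn_const
          apply ContinuousOn.rpow_const (continuousOn_const.add (continuousOn_id))
          intro s hs; left
          have : (0:ℝ) < T + s := by have := hs.1; linarith
          exact this.ne'
        have h5 : |I t| ≤ ∫ s in (0:ℝ)..t, M * (T + s) ^ (m - 1 - γ) := by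
          calc |I t| ≤ ∫ s in (0:ℝ)..t, |g s| :=
                intervalIntegral.abs_integral_le_integral_abs ht0
            _ ≤ ∫ s in (0:ℝ)..t, M * (T + s) ^ (m - 1 - γ) := by
                apply intervalIntegral.integral_mono_on ht0
                  (hg_cont.abs.intervalIntegrable _ _)
                  (hbc.intervalIntegrable_of_Icc ht0)
                exact fun s hs => hg_bound s (mem_Ici.2 hs.1)
        rw [hA0, add_zero]
        calc |I t| ≤ ∫ s in (0:ℝ)..t, M * (T + s) ^ (m - 1 - γ) := h5
          _ = M * (((T + t) ^ (m - 1 - γ + 1) - T ^ (m - 1 - γ + 1)) / (m - 1 - γ + 1)) := by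
              rw [intervalIntegral.integral_const_mul, aux_int_Icc T _ hT hp1 t ht0]
          _ ≤ M * (T + t) ^ (m - γ) / |m - γ| := by
              rw [abs_of_pos (sub_pos.2 hgt)]
              have h9 : m - 1 - γ + 1 = m - γ := by ring
              rw [h9]
              have hTn : (0:ℝ) ≤ T ^ (m - γ) := Real.rpow_nonneg hT.le _
              rw [mul_div_assoc]
              apply mul_le_mul_of_nonneg_left _ hM0
              have hd : (0:ℝ) < m - γ := sub_pos.2 hgt
              gcongr
              · linarith [Real.rpow_nonneg hT.le (m - γ)]
    have e3 : (T + t) ^ (-m) * (T + t) ^ (m - γ) = (T + t) ^ (-γ) := by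
      rw [← Real.rpow_add hX]; ring_nf
    have habs : |u t| = (T + t) ^ (-m) * |I t + A| / c := by
      simp only [hudef]
      rw [abs_div, abs_mul, abs_of_nonneg (Real.rpow_nonneg hX.le _), abs_of_pos hc]
    rw [habs]
    calc (T + t) ^ (-m) * |I t + A| / c
        ≤ (T + t) ^ (-m) * (M * (T + t) ^ (m - γ) / |m - γ|) / c := by
          gcongr
      _ = (c * |m - γ|)⁻¹ * M * (T + t) ^ (-γ) := by
          rw [← e3]; field_simp
  refine ⟨u, hui, hu0, hue, ?_⟩
  rintro v hv ⟨B, hvB⟩ hv0 t ht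
  set w : ℝ → ℝ := fun s => v s - u s with hwdef
  have hwd : ∀ s ∈ Ici (0:ℝ), ∃ d, HasDerivWithinAt w d (Ici 0) s ∧
      c * d + μ / (T + s) * w s = 0 := by
    intro s hs
    obtain ⟨dv, hdv, hev⟩ := hv s hs
    obtain ⟨du, hdu, heu⟩ := hui s hs
    exact ⟨dv - du, hdv.sub hdu, by simp only [hwdef]; linear_combination hev - heu⟩
  have hwcont : ContinuousOn w (Ici 0) := fun s hs =>
    ((hwd s hs).choose_spec.1).continuousWithinAt
  have hkey : ∀ s ∈ Ici (0:ℝ), w s * (T + s) ^ m = w 0 * T ^ m := by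
    intro s hs
    have hcont : ContinuousOn (fun r => w r * (T + r) ^ m) (Icc 0 s) := by
      apply ContinuousOn.mul (hwcont.mono Icc_subset_Ici_self)
      apply ContinuousOn.rpow_const (continuousOn_const.add continuousOn_id)
      intro r hr; left
      have : (0:ℝ) < T + r := by have := hr.1; linarith
      exact this.ne'
    have hderiv : ∀ x ∈ Ico 0 s, HasDerivWithinAt (fun r => w r * (T + r) ^ m) 0 (Ici x) x := by
      intro x hx
      obtain ⟨d, hd, heq⟩ := hwd x (mem_Ici.2 hx.1)
      have hx0 : (0:ℝ) < T + x := by have := hx.1; linarith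
      have hd' : HasDerivWithinAt w d (Ici x) x := hd.mono (Ici_subset_Ici.2 hx.1)
      have h1 : HasDerivAt (fun r : ℝ => T + r) 1 x := (hasDerivAt_id x).const_add T
      have hr := h1.rpow_const (p := m) (Or.inl hx0.ne')
      have h2 := hd'.mul hr.hasDerivWithinAt
      have e : (T + x) ^ (m - 1) * (T + x) = (T + x) ^ m := by
        rw [← Real.rpow_add_one hx0.ne']; ring_nf
      have h0 : d * (T + x) ^ m + w x * (1 * m * (T + x) ^ (m - 1)) = 0 := by
        rw [hμm] at heq
        field_simp at heq
        have hcc : c * (d * (T + x) + m * w x) = 0 := by linear_combination heq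
        have hdx : d * (T + x) + m * w x = 0 := (mul_eq_zero.1 hcc).resolve_left hc'
        linear_combination (T + x) ^ (m - 1) * hdx - d * e
      rw [h0] at h2
      exact h2
    have hmain := constant_of_has_deriv_right_zero hcont hderiv s (right_mem_Icc.2 hs.out)
    simpa using hmain
  have hw0 : w 0 = 0 := by
    rcases hmγ.lt_or_gt with hlt | hgt
    · set K : ℝ := B + (c * |m - γ|)⁻¹ * M with hKdef
      have hBK : ∀ s ∈ Ici (0:ℝ), |w 0| * T ^ m ≤ K * (T + s) ^ (m - γ) := by
        intro s hs
        have hs0 : (0:ℝ) ≤ s := hs.out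
        have hX : (0:ℝ) < T + s := by linarith
        have h1 : (T + s) ^ γ * |w s| ≤ K := by
          have h2 := hvB s hs
          have h3 := hue s hs
          have h4 : (T + s) ^ γ * |u s| ≤ (c * |m - γ|)⁻¹ * M := by
            calc (T + s) ^ γ * |u s| ≤ (T + s) ^ γ * ((c * |m - γ|)⁻¹ * M * (T + s) ^ (-γ)) :=
                  mul_le_mul_of_nonneg_left h3 (Real.rpow_nonneg hX.le _)
              _ = (c * |m - γ|)⁻¹ * M * ((T + s) ^ γ * (T + s) ^ (-γ)) := by ring
              _ = (c * |m - γ|)⁻¹ * M := by rw [← Real.rpow_add hX]; simp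
          have htri : |w s| ≤ |v s| + |u s| := by
            simp only [hwdef]
            exact (abs_sub _ _)
          calc (T + s) ^ γ * |w s| ≤ (T + s) ^ γ * (|v s| + |u s|) :=
                mul_le_mul_of_nonneg_left htri (Real.rpow_nonneg hX.le _)
            _ ≤ K := by rw [mul_add, hKdef]; exact add_le_add h2 h4
        have h5 : |w 0| * T ^ m = |w s| * (T + s) ^ m := by
          calc |w 0| * T ^ m = |w 0 * T ^ m| := by
                rw [abs_mul, abs_of_nonneg (Real.rpow_nonneg hT.le m)]
            _ = |w s * (T + s) ^ m| := by rw [hkey s hs]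
            _ = |w s| * (T + s) ^ m := by
                rw [abs_mul, abs_of_nonneg (Real.rpow_nonneg hX.le m)]
        have e4 : (T + s) ^ m = (T + s) ^ γ * (T + s) ^ (m - γ) := by
          rw [← Real.rpow_add hX]; ring_nf
        calc |w 0| * T ^ m = ((T + s) ^ γ * |w s|) * (T + s) ^ (m - γ) := by
              rw [h5, e4]; ring
          _ ≤ K * (T + s) ^ (m - γ) :=
              mul_le_mul_of_nonneg_right h1 (Real.rpow_nonneg hX.le _)
      have htend : Tendsto (fun s : ℝ => K * (T + s) ^ (m - γ)) atTop (𝓝 0) := by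
        have h1 : Tendsto (fun s : ℝ => T + s) atTop atTop :=
          tendsto_atTop_add_const_left _ T tendsto_id
        have h2 : Tendsto (fun x : ℝ => x ^ (m - γ)) atTop (𝓝 0) := by
          have := tendsto_rpow_neg_atTop (y := γ - m) (by linarith)
          simpa using this
        simpa using ((h2.comp h1).const_mul K)
      have h6 : |w 0| * T ^ m ≤ 0 :=
        ge_of_tendsto htend ((eventually_ge_atTop 0).mono fun s hs => hBK s hs)
      have h7 : (0:ℝ) < T ^ m := Real.rpow_pos_of_pos hT m
      have h8 := abs_nonneg (w 0)
      have h9 : |w 0| = 0 := by nlinarith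
      exact abs_eq_zero.1 h9
    · have hμγ : c * γ < μ := by rw [hμm]; exact (mul_lt_mul_iff_right₀ hc).2 hgt
      have h1 : v 0 = 0 := hv0 hμγ
      have h2 : u 0 = 0 := hu0 hμγ
      simp [hwdef, h1, h2]
  have h10 := hkey t ht
  rw [hw0, zero_mul] at h10
  have hX : (0:ℝ) < T + t := by have := ht.out; linarith
  have hXm : (T + t) ^ m ≠ 0 := (Real.rpow_pos_of_pos hX m).ne'
  have h11 : w t = 0 := by
    rcases mul_eq_zero.1 h10 with h | h
    · exact h
    · exact absurd h hXm
  have := sub_eq_zero.1 h11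
  exact this


/-- Solvability with polynomial decay estimates, uniquely subject to vanishing
initial conditions in the unstable directions, of the system of ODEs
`c·u_j' + (μ_j/(T+t))·u_j = E_j` on `[0,∞)`, with a constant independent of `T` and `E`. -/
theorem kernel_projected_ODE_system
    (k : ℕ) (hk : 1 ≤ k) (c γ : ℝ) (hc : 0 < c) (μ : Fin k → ℝ)
    (hγ : ∀ j, c * γ ≠ μ j) :
    ∃ C : ℝ, 0 < C ∧
      ∀ T : ℝ, 0 < T →
      ∀ E : ℝ → Fin k → ℝ, (∀ j, ContinuousOn (fun t => E t j) (Ici 0)) →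
      ∀ M : ℝ,
        (∀ t ∈ Ici (0 : ℝ), ∀ j, |E t j| ≤ M * (T + t) ^ (-(1 + γ))) →
        ∃ u : ℝ → Fin k → ℝ,
          -- (i) the ODE `c·u_j' + (μ_j/(T+t))·u_j = E_j` holds on `[0,∞)`
          ((∀ t ∈ Ici (0 : ℝ), ∀ j, ∃ d : ℝ,
              HasDerivWithinAt (fun s => u s j) d (Ici 0) t ∧
              c * d + μ j / (T + t) * u t j = E t j) ∧
           -- (ii) the weighted sup norm is finite
           (∃ B : ℝ, ∀ t ∈ Ici (0 : ℝ), ∀ j, (T + t) ^ γ * |u t j| ≤ B) ∧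
           -- (iii) vanishing initial conditions when `μ_j > c·γ`
           (∀ j, c * γ < μ j → u 0 j = 0)) ∧
          -- uniqueness on `[0,∞)` among solutions satisfying (i)-(iii)
          (∀ v : ℝ → Fin k → ℝ,
            ((∀ t ∈ Ici (0 : ℝ), ∀ j, ∃ d : ℝ,
                HasDerivWithinAt (fun s => v s j) d (Ici 0) t ∧
                c * d + μ j / (T + t) * v t j = E t j) ∧
             (∃ B : ℝ, ∀ t ∈ Ici (0 : ℝ), ∀ j, (T + t) ^ γ * |v t j| ≤ B) ∧
             (∀ j, c * γ < μ j → v 0 j = 0)) →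
            ∀ t ∈ Ici (0 : ℝ), ∀ j, v t j = u t j) ∧
          -- the a priori estimate with constant independent of `T` and `E`
          (∀ t ∈ Ici (0 : ℝ), ∀ j, |u t j| ≤ C * M * (T + t) ^ (-γ)) := by
  set C : ℝ := 1 + ∑ j : Fin k, (c * |μ j / c - γ|)⁻¹ with hCdef
  have hterm : ∀ j : Fin k, 0 ≤ (c * |μ j / c - γ|)⁻¹ := by
    intro j
    have : 0 ≤ c * |μ j / c - γ| := mul_nonneg hc.le (abs_nonneg _)
    positivity
  have hC : 0 < C := by
    have : 0 ≤ ∑ j : Fin k, (c * |μ j / c - γ|)⁻¹ := Finset.sum_nonneg fun j _ => hterm j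
    rw [hCdef]; linarith
  have hCj : ∀ j : Fin k, (c * |μ j / c - γ|)⁻¹ ≤ C := by
    intro j
    have := Finset.single_le_sum (f := fun j : Fin k => (c * |μ j / c - γ|)⁻¹)
      (fun i _ => hterm i) (Finset.mem_univ j)
    rw [hCdef]; linarith
  refine ⟨C, hC, ?_⟩
  intro T hT E hE M hEM
  have hM0 : 0 ≤ M := by
    have j0 : Fin k := ⟨0, hk⟩
    have h0 := (abs_nonneg (E 0 j0)).trans (hEM 0 self_mem_Ici j0)
    have hp : (0:ℝ) < (T + 0) ^ (-(1 + γ)) := Real.rpow_pos_of_pos (by linarith) _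
    nlinarith
  choose U h1 h2 h3 h4 using fun j : Fin k =>
    scalar_ode c γ T (μ j) M hc hT (hγ j) (fun t => E t j) (hE j)
      (fun t ht => hEM t ht j)
  refine ⟨fun t j => U j t, ⟨fun t ht j => h1 j t ht, ⟨C * M, ?_⟩, fun j hj => h2 j hj⟩,
    ?_, ?_⟩
  · -- (ii)
    intro t ht j
    have hX : (0:ℝ) < T + t := by have := ht.out; linarith
    have hest : |U j t| ≤ C * M * (T + t) ^ (-γ) := by
      calc |U j t| ≤ (c * |μ j / c - γ|)⁻¹ * M * (T + t) ^ (-γ) := h3 j t ht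
        _ ≤ C * M * (T + t) ^ (-γ) := by
            apply mul_le_mul_of_nonneg_right _ (Real.rpow_nonneg hX.le _)
            exact mul_le_mul_of_nonneg_right (hCj j) hM0
    calc (T + t) ^ γ * |U j t| ≤ (T + t) ^ γ * (C * M * (T + t) ^ (-γ)) :=
          mul_le_mul_of_nonneg_left hest (Real.rpow_nonneg hX.le _)
      _ = C * M * ((T + t) ^ γ * (T + t) ^ (-γ)) := by ring
      _ = C * M := by rw [← Real.rpow_add hX]; simp
  · -- uniqueness
    rintro v ⟨hv1, ⟨B, hvB⟩, hv3⟩ t ht j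
    exact h4 j (fun s => v s j) (fun s hs => hv1 s hs j)
      ⟨B, fun s hs => hvB s hs j⟩ (fun h => hv3 j h) t ht
  · -- estimate
    intro t ht j
    have hX : (0:ℝ) < T + t := by have := ht.out; linarith
    calc |U j t| ≤ (c * |μ j / c - γ|)⁻¹ * M * (T + t) ^ (-γ) := h3 j t ht
      _ ≤ C * M * (T + t) ^ (-γ) := by
          apply mul_le_mul_of_nonneg_right _ (Real.rpow_nonneg hX.le _)
          exact mul_le_mul_of_nonneg_right (hCj j) hM0
end

section
/- Let δ > 0, q ≥ 0, T > 0, and t ≥ 0. Then ∫_0^t e^{δ(τ - t)} (T+τ)^(-q) dτ ≤ δ^(-1) T^(-q) (e^{-δ t/2} - e^{-δ t}) + δ^(-1) (T + t/2)^(-q) (1 - e^{-δ t/2}). -/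
open intervalIntegral Real

lemma exp_int (δ t a b : ℝ) (hδ : 0 < δ) :
    ∫ τ in a..b, Real.exp (δ * (τ - t)) =
      δ⁻¹ * (Real.exp (δ * (b - t)) - Real.exp (δ * (a - t))) := by
  have h : ∀ x : ℝ, HasDerivAt (fun τ => δ⁻¹ * Real.exp (δ * (τ - t)))
      (Real.exp (δ * (x - t))) x := by
    intro x
    have : HasDerivAt (fun τ : ℝ => δ * (τ - t)) δ x := by
      simpa using ((hasDerivAt_id x).sub_const t).const_mul δ
    have := (this.exp).const_mul δ⁻¹
    refine this.congr_deriv ?_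
    rw [mul_comm (Real.exp _) δ, inv_mul_cancel_left₀ hδ.ne']
  rw [intervalIntegral.integral_eq_sub_of_hasDerivAt (fun x _ => h x)
    ((Real.continuous_exp.comp (by continuity)).intervalIntegrable a b)]
  ring

/-- For `δ > 0`, `q ≥ 0`, `T > 0` and `t ≥ 0`,
`∫_0^t e^{δ(τ-t)} (T+τ)^(-q) dτ ≤ δ⁻¹ T^(-q) (e^{-δt/2} - e^{-δt})
  + δ⁻¹ (T+t/2)^(-q) (1 - e^{-δt/2})`. -/
theorem exponential_polynomial_integral_bound
    (δ q T t : ℝ) (hδ : 0 < δ) (hq : 0 ≤ q) (hT : 0 < T) (ht : 0 ≤ t) :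
    (∫ τ in (0 : ℝ)..t, Real.exp (δ * (τ - t)) * (T + τ) ^ (-q)) ≤
      δ⁻¹ * T ^ (-q) * (Real.exp (-(δ * t) / 2) - Real.exp (-(δ * t))) +
      δ⁻¹ * (T + t / 2) ^ (-q) * (1 - Real.exp (-(δ * t) / 2)) := by
  have hcont : ContinuousOn (fun τ => Real.exp (δ * (τ - t)) * (T + τ) ^ (-q))
      (Set.Icc 0 t) := by
    apply ContinuousOn.mul (by fun_prop)
    apply ContinuousOn.rpow_const (by fun_prop)
    intro x hx
    exact Or.inl (by nlinarith [hx.1])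
  have hint : ∀ a b : ℝ, Set.uIcc a b ⊆ Set.Icc 0 t →
      IntervalIntegrable (fun τ => Real.exp (δ * (τ - t)) * (T + τ) ^ (-q))
        MeasureTheory.volume a b := fun a b hab =>
    (hcont.mono hab).intervalIntegrable
  have h0 : Set.uIcc (0:ℝ) (t/2) ⊆ Set.Icc 0 t := by
    rw [Set.uIcc_of_le (by linarith)]; exact Set.Icc_subset_Icc le_rfl (by linarith)
  have h1 : Set.uIcc (t/2) t ⊆ Set.Icc 0 t := by
    rw [Set.uIcc_of_le (by linarith)]; exact Set.Icc_subset_Icc (by linarith) le_rfl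
  have hsplit : (∫ τ in (0:ℝ)..t, Real.exp (δ * (τ - t)) * (T + τ) ^ (-q)) =
      (∫ τ in (0:ℝ)..(t/2), Real.exp (δ * (τ - t)) * (T + τ) ^ (-q)) +
      (∫ τ in (t/2)..t, Real.exp (δ * (τ - t)) * (T + τ) ^ (-q)) :=
    (intervalIntegral.integral_add_adjacent_intervals (hint _ _ h0) (hint _ _ h1)).symm
  rw [hsplit]
  have hb1 : (∫ τ in (0:ℝ)..(t/2), Real.exp (δ * (τ - t)) * (T + τ) ^ (-q)) ≤
      δ⁻¹ * T ^ (-q) * (Real.exp (-(δ * t) / 2) - Real.exp (-(δ * t))) := by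
    have key : (∫ τ in (0:ℝ)..(t/2), Real.exp (δ * (τ - t)) * (T + τ) ^ (-q)) ≤
        ∫ τ in (0:ℝ)..(t/2), Real.exp (δ * (τ - t)) * T ^ (-q) := by
      apply intervalIntegral.integral_mono_on (by linarith) (hint _ _ h0)
        ((Continuous.intervalIntegrable (by fun_prop) _ _))
      intro x hx
      have : (T + x) ^ (-q) ≤ T ^ (-q) :=
        Real.rpow_le_rpow_of_nonpos hT (by linarith [hx.1]) (by linarith)
      exact mul_le_mul_of_nonneg_left this (Real.exp_nonneg _)
    calc _ ≤ _ := key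
      _ = δ⁻¹ * T ^ (-q) * (Real.exp (-(δ * t) / 2) - Real.exp (-(δ * t))) := by
        rw [intervalIntegral.integral_mul_const, exp_int δ t _ _ hδ]
        ring_nf
  have hb2 : (∫ τ in (t/2)..t, Real.exp (δ * (τ - t)) * (T + τ) ^ (-q)) ≤
      δ⁻¹ * (T + t / 2) ^ (-q) * (1 - Real.exp (-(δ * t) / 2)) := by
    have key : (∫ τ in (t/2)..t, Real.exp (δ * (τ - t)) * (T + τ) ^ (-q)) ≤
        ∫ τ in (t/2)..t, Real.exp (δ * (τ - t)) * (T + t/2) ^ (-q) := by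
      apply intervalIntegral.integral_mono_on (by linarith) (hint _ _ h1)
        ((Continuous.intervalIntegrable (by fun_prop) _ _))
      intro x hx
      have : (T + x) ^ (-q) ≤ (T + t/2) ^ (-q) :=
        Real.rpow_le_rpow_of_nonpos (by linarith) (by linarith [hx.1]) (by linarith)
      exact mul_le_mul_of_nonneg_left this (Real.exp_nonneg _)
    calc _ ≤ _ := key
      _ = δ⁻¹ * (T + t / 2) ^ (-q) * (1 - Real.exp (-(δ * t) / 2)) := by
        rw [intervalIntegral.integral_mul_const, exp_int δ t _ _ hδ]
        simp [Real.exp_zero]; ring_nf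
  linarith
end

section
/- Let δ > 0, q ≥ 0, and T ≥ 1. Let E : [0,∞) → ℝ be continuous and suppose M ≥ 0 satisfies |E(t)| ≤ M·(T+t)^(-q) for all t ≥ 0. Then the function u(t) = ∫_0^t e^{δ(τ - t)} E(τ) dτ is differentiable, satisfies u'(t) + δ·u(t) = E(t) for all t ≥ 0 and u(0) = 0, and there exists a constant C > 0 depending only on δ and q (in particular, independent of T, M and E) such that |u(t)| ≤ C·M·(T+t)^(-q) for all t ≥ 0. -/
open Set


lemma one_add_le_exp_aux (ε x : ℝ) (hε : 0 < ε) (hx : 0 ≤ x) :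
    1 + x ≤ (2*(1+1/ε)) * Real.exp (ε*x) := by
  have h := Real.add_one_le_exp (ε*x)
  have h2 : 0 < 1/ε := by positivity
  have h3 : (1/ε)*ε = 1 := by field_simp
  have h4 : (0:ℝ) ≤ 2*(1+1/ε) := by positivity
  nlinarith [mul_le_mul_of_nonneg_left h h4, mul_nonneg hε.le hx, mul_nonneg h2.le (mul_nonneg hε.le hx)]

lemma exp_integral_le_aux (c t : ℝ) (hc : 0 < c) (ht : 0 ≤ t) :
    ∫ τ in (0:ℝ)..t, Real.exp (c*(τ-t)) ≤ 1/c := by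
  have hder : ∀ τ ∈ Set.uIcc (0:ℝ) t,
      HasDerivAt (fun s => Real.exp (c*(s-t))/c) (Real.exp (c*(τ-t))) τ := by
    intro τ _
    have h1 : HasDerivAt (fun s : ℝ => c*(s-t)) c τ := by
      simpa using ((hasDerivAt_id τ).sub_const t).const_mul c
    have h2 := (h1.exp).div_const c
    simpa [mul_div_assoc, div_self hc.ne'] using h2
  have hint : IntervalIntegrable (fun τ => Real.exp (c*(τ-t))) MeasureTheory.volume 0 t :=
    (Real.continuous_exp.comp (by continuity)).intervalIntegrable 0 t
  rw [intervalIntegral.integral_eq_sub_of_hasDerivAt hder hint]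
  have := (Real.exp_pos (c*(0-t))).le
  have h0 : Real.exp (c*(t-t)) = 1 := by simp
  rw [h0]
  have : 0 ≤ Real.exp (c*(0-t))/c := by positivity
  linarith

lemma decay_pointwise_aux (δ q T τ t : ℝ) (hδ : 0 < δ) (hq : 0 ≤ q) (hT : 1 ≤ T)
    (hτ : 0 ≤ τ) (hτt : τ ≤ t) :
    Real.exp (δ*(τ-t)) * (T+τ)^(-q) ≤
      (2*(1+1/(δ/(2*(q+1)))))^q * (Real.exp (δ/2*(τ-t)) * (T+t)^(-q)) := by
  set ε : ℝ := δ/(2*(q+1)) with hεdef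
  have hε : 0 < ε := by positivity
  set K : ℝ := 2*(1+1/ε) with hKdef
  have hK : 0 < K := by positivity
  set x : ℝ := t - τ with hxdef
  have hx : 0 ≤ x := by simp [hxdef]; linarith
  have hTτ : (0:ℝ) < T + τ := by linarith
  have hTt : (0:ℝ) < T + t := by linarith
  have h1 : T + t ≤ (T+τ) * (K * Real.exp (ε*x)) := by
    have hA := one_add_le_exp_aux ε x hε hx
    have h1x : T + t ≤ (T+τ) * (1+x) := by nlinarith
    calc T + t ≤ (T+τ)*(1+x) := h1x
      _ ≤ (T+τ) * (K * Real.exp (ε*x)) := by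
          apply mul_le_mul_of_nonneg_left hA hTτ.le
  have h2 : (T+t)^q ≤ (T+τ)^q * (K^q * Real.exp (δ/2*x)) := by
    have := Real.rpow_le_rpow hTt.le h1 hq
    rw [Real.mul_rpow hTτ.le (by positivity), Real.mul_rpow hK.le (Real.exp_pos _).le,
        ← Real.exp_mul] at this
    refine this.trans ?_
    have hεq2 : ε*q ≤ δ/2 := by
      rw [hεdef, div_mul_eq_mul_div, div_le_div_iff₀ (by positivity) (by norm_num)]
      nlinarith
    have hεq : ε*x*q ≤ δ/2*x := by nlinarith [mul_le_mul_of_nonneg_right hεq2 hx]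
    have := Real.exp_le_exp.mpr hεq
    apply mul_le_mul_of_nonneg_left
    exact mul_le_mul_of_nonneg_left this (by positivity)
    positivity
  -- now conclude
  rw [Real.rpow_neg hTτ.le, Real.rpow_neg hTt.le]
  rw [← one_div, ← one_div]
  rw [mul_one_div, mul_one_div, ← mul_div_assoc]
  rw [div_le_div_iff₀ (by positivity) (by positivity)]
  have hexp : Real.exp (δ*(τ-t)) * Real.exp (δ/2*x) = Real.exp (δ/2*(τ-t)) := by
    rw [← Real.exp_add]; congr 1; rw [hxdef]; ring
  calc Real.exp (δ*(τ-t)) * (T+t)^q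
      ≤ Real.exp (δ*(τ-t)) * ((T+τ)^q * (K^q * Real.exp (δ/2*x))) :=
        mul_le_mul_of_nonneg_left h2 (Real.exp_pos _).le
    _ = K^q * Real.exp (δ/2*(τ-t)) * (T+τ)^q := by rw [← hexp]; ring

/-- For `δ > 0`, `q ≥ 0` there is a constant `C > 0` depending only on `δ` and
`q` such that for all `T ≥ 1` and continuous `E` with `|E(t)| ≤ M(T+t)^(-q)` on `[0,∞)`, the
function `u(t) = ∫_0^t e^{δ(τ-t)} E(τ) dτ` solves `u' + δu = E` with `u(0) = 0` and obeys
`|u(t)| ≤ C·M·(T+t)^(-q)`. -/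
theorem damped_scalar_ODE_polynomial_decay
    (δ q : ℝ) (hδ : 0 < δ) (hq : 0 ≤ q) :
    ∃ C : ℝ, 0 < C ∧
      ∀ T : ℝ, 1 ≤ T →
      ∀ E : ℝ → ℝ, ContinuousOn E (Ici 0) →
      ∀ M : ℝ, 0 ≤ M →
        (∀ t ∈ Ici (0 : ℝ), |E t| ≤ M * (T + t) ^ (-q)) →
        ∀ u : ℝ → ℝ,
          (∀ t : ℝ, u t = ∫ τ in (0 : ℝ)..t, Real.exp (δ * (τ - t)) * E τ) →
          (∀ t ∈ Ici (0 : ℝ), ∃ d : ℝ,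
            HasDerivWithinAt u d (Ici 0) t ∧ d + δ * u t = E t) ∧
          u 0 = 0 ∧
          (∀ t ∈ Ici (0 : ℝ), |u t| ≤ C * M * (T + t) ^ (-q)) := by
  set ε : ℝ := δ/(2*(q+1)) with hεdef
  have hε : 0 < ε := by positivity
  set K : ℝ := 2*(1+1/ε) with hKdef
  have hK : 0 < K := by positivity
  have hKq : 0 < K^q := Real.rpow_pos_of_pos hK q
  refine ⟨K^q * (2/δ), by positivity, ?_⟩
  intro T hT E hE M hM hEb u hu
  set f : ℝ → ℝ := fun τ => Real.exp (δ*τ) * E τ with hfdef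
  have hfc : ContinuousOn f (Ici 0) :=
    ((Real.continuous_exp.comp (continuous_const.mul continuous_id)).continuousOn).mul hE
  set g : ℝ → ℝ := fun t => ∫ τ in (0:ℝ)..t, f τ with hgdef
  have hu2 : ∀ t : ℝ, u t = Real.exp (-(δ*t)) * g t := by
    intro t
    rw [hu t, hgdef]
    rw [← intervalIntegral.integral_const_mul]
    apply intervalIntegral.integral_congr
    intro τ _
    show Real.exp (δ*(τ-t)) * E τ = Real.exp (-(δ*t)) * (Real.exp (δ*τ) * E τ)
    rw [← mul_assoc, ← Real.exp_add]
    congr 2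
    ring
  have hfint : ∀ t : ℝ, 0 ≤ t → IntervalIntegrable f MeasureTheory.volume 0 t := by
    intro t ht
    apply ContinuousOn.intervalIntegrable
    apply hfc.mono
    rw [uIcc_of_le ht]
    exact Icc_subset_Ici_self
  constructor
  · -- derivative claim
    intro t ht
    have ht0 : (0:ℝ) ≤ t := ht
    have hgd : HasDerivWithinAt g (f t) (Ici 0) t := by
      rcases eq_or_lt_of_le ht0 with h0 | h0
      · -- t = 0
        subst h0
        have : HasDerivWithinAt g (f 0) (Ici (0:ℝ)) 0 := by
          apply intervalIntegral.integral_hasDerivWithinAt_right (t := Ioi (0:ℝ))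
            (hfint 0 le_rfl)
          · exact ⟨Ici 0, Filter.mem_of_superset self_mem_nhdsWithin Ioi_subset_Ici_self,
              hfc.aestronglyMeasurable measurableSet_Ici⟩
          · exact (hfc 0 Set.self_mem_Ici).mono Ioi_subset_Ici_self
        exact this
      · -- t > 0
        have hmeas : StronglyMeasurableAtFilter f (nhds t) MeasureTheory.volume :=
          ⟨Ici 0, Ici_mem_nhds h0, hfc.aestronglyMeasurable measurableSet_Ici⟩
        have hct : ContinuousAt f t := (hfc t ht).continuousAt (Ici_mem_nhds h0)
        exact ((intervalIntegral.integral_hasDerivAt_right (hfint t ht0) hmeas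
          hct)).hasDerivWithinAt
    have hed : HasDerivWithinAt (fun s : ℝ => Real.exp (-(δ*s))) (-δ * Real.exp (-(δ*t)))
        (Ici 0) t := by
      have h1 : HasDerivAt (fun s : ℝ => -(δ*s)) (-δ) t := by
        simpa [Pi.neg_def] using ((hasDerivAt_id t).const_mul δ).neg
      simpa [mul_comm] using (h1.exp).hasDerivWithinAt
    have hud : HasDerivWithinAt u
        (-δ * Real.exp (-(δ*t)) * g t + Real.exp (-(δ*t)) * f t) (Ici 0) t := by
      have huf : u = fun s => Real.exp (-(δ*s)) * g s := funext hu2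
      rw [huf]
      exact hed.mul hgd
    refine ⟨_, hud, ?_⟩
    rw [hu2 t, hfdef]
    have hee : Real.exp (-(δ*t)) * Real.exp (δ*t) = 1 := by
      rw [← Real.exp_add]; simp
    show -δ * Real.exp (-(δ*t)) * g t +
        Real.exp (-(δ*t)) * (Real.exp (δ*t) * E t) + δ * (Real.exp (-(δ*t)) * g t) = E t
    calc -δ * Real.exp (-(δ*t)) * g t + Real.exp (-(δ*t)) * (Real.exp (δ*t) * E t)
          + δ * (Real.exp (-(δ*t)) * g t)
        = (Real.exp (-(δ*t)) * Real.exp (δ*t)) * E t := by ring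
      _ = E t := by rw [hee, one_mul]
  constructor
  · rw [hu 0]; simp
  · -- the decay bound
    intro t ht
    have ht0 : (0:ℝ) ≤ t := ht
    have hTt : (0:ℝ) < T + t := by linarith
    have hIcc : Icc (0:ℝ) t ⊆ Ici 0 := Icc_subset_Ici_self
    have hcc : ContinuousOn (fun τ => Real.exp (δ*(τ-t)) * E τ) (Icc 0 t) := by
      apply ContinuousOn.mul
      · exact (Real.continuous_exp.comp (by continuity)).continuousOn
      · exact hE.mono hIcc
    have hint1 : IntervalIntegrable (fun τ => |Real.exp (δ*(τ-t)) * E τ|)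
        MeasureTheory.volume 0 t := by
      apply ContinuousOn.intervalIntegrable
      rw [uIcc_of_le ht0]
      exact hcc.abs
    have hint2 : IntervalIntegrable
        (fun τ => (M * K^q * (T+t)^(-q)) * Real.exp (δ/2*(τ-t)))
        MeasureTheory.volume 0 t := by
      apply Continuous.intervalIntegrable
      exact continuous_const.mul (Real.continuous_exp.comp (by continuity))
    have hptwise : ∀ τ ∈ Icc (0:ℝ) t,
        |Real.exp (δ*(τ-t)) * E τ| ≤ (M * K^q * (T+t)^(-q)) * Real.exp (δ/2*(τ-t)) := by
      intro τ hτ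
      have hτ0 : 0 ≤ τ := hτ.1
      have h1 : |Real.exp (δ*(τ-t)) * E τ| = Real.exp (δ*(τ-t)) * |E τ| := by
        rw [abs_mul, abs_of_pos (Real.exp_pos _)]
      rw [h1]
      have h2 : Real.exp (δ*(τ-t)) * |E τ| ≤ Real.exp (δ*(τ-t)) * (M * (T+τ)^(-q)) :=
        mul_le_mul_of_nonneg_left (hEb τ hτ0) (Real.exp_pos _).le
      refine h2.trans ?_
      have h3 := decay_pointwise_aux δ q T τ t hδ hq hT hτ0 hτ.2
      calc Real.exp (δ*(τ-t)) * (M * (T+τ)^(-q))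
          = M * (Real.exp (δ*(τ-t)) * (T+τ)^(-q)) := by ring
        _ ≤ M * (K^q * (Real.exp (δ/2*(τ-t)) * (T+t)^(-q))) :=
            mul_le_mul_of_nonneg_left h3 hM
        _ = (M * K^q * (T+t)^(-q)) * Real.exp (δ/2*(τ-t)) := by ring
    calc |u t| = |∫ τ in (0:ℝ)..t, Real.exp (δ*(τ-t)) * E τ| := by rw [hu t]
      _ ≤ ∫ τ in (0:ℝ)..t, |Real.exp (δ*(τ-t)) * E τ| :=
          intervalIntegral.abs_integral_le_integral_abs ht0
      _ ≤ ∫ τ in (0:ℝ)..t, (M * K^q * (T+t)^(-q)) * Real.exp (δ/2*(τ-t)) :=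
          intervalIntegral.integral_mono_on ht0 hint1 hint2 hptwise
      _ = (M * K^q * (T+t)^(-q)) * ∫ τ in (0:ℝ)..t, Real.exp (δ/2*(τ-t)) :=
          intervalIntegral.integral_const_mul _ _
      _ ≤ (M * K^q * (T+t)^(-q)) * (1/(δ/2)) := by
          apply mul_le_mul_of_nonneg_left (exp_integral_le_aux (δ/2) t (by positivity) ht0)
          positivity
      _ = K^q * (2/δ) * M * (T+t)^(-q) := by
          rw [one_div_div]; ring
end

section
/- Let (M, d) be a nonempty compact metric space and let μ be a finite Borel measure on M whose support is all of M. Fix α ∈ (0,1]. Then for every ε > 0 there exists a constant C = C(ε) > 0 such that for every continuous function f : M → ℝ with finite α-Hölder seminorm [f]_α := sup_{x ≠ y} |f(x) - f(y)| / d(x,y)^α, one has sup_{x ∈ M} |f(x)| ≤ C·(∫_M |f|² dμ)^(1/2) + ε·( sup_{x ∈ M} |f(x)| + [f]_α ). -/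
open MeasureTheory Metric

/-- Uniform positive lower bound for measures of balls of a fixed radius on a compact
space with an open-positive measure. -/
lemma uniform_ball_measure_lb
    {M : Type*} [MetricSpace M] [CompactSpace M] [Nonempty M]
    [MeasurableSpace M] [BorelSpace M]
    (μ : Measure M) [IsFiniteMeasure μ] [μ.IsOpenPosMeasure]
    {r : ℝ} (hr : 0 < r) :
    ∃ m > (0 : ℝ), ∀ x : M, m ≤ (μ (ball x r)).toReal := by
  have hcov : (Set.univ : Set M) ⊆ ⋃ x : M, ball x (r / 2) := by
    intro x _
    exact Set.mem_iUnion.2 ⟨x, mem_ball_self (by linarith)⟩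
  obtain ⟨t, ht⟩ := isCompact_univ.elim_finite_subcover
    (fun x : M => ball x (r / 2)) (fun x => isOpen_ball) hcov
  have htne : t.Nonempty := by
    rcases ‹Nonempty M› with ⟨x⟩
    rcases Set.mem_iUnion₂.1 (ht (Set.mem_univ x)) with ⟨i, hi, _⟩
    exact ⟨i, hi⟩
  set m : ℝ := t.inf' htne (fun i => (μ (ball i (r / 2))).toReal) with hm
  refine ⟨m, ?_, ?_⟩
  · rw [hm, gt_iff_lt, Finset.lt_inf'_iff]
    intro i _
    have hpos : 0 < μ (ball i (r / 2)) :=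
      measure_ball_pos μ i (by linarith)
    exact ENNReal.toReal_pos hpos.ne' (measure_ne_top μ _)
  · intro x
    rcases Set.mem_iUnion₂.1 (ht (Set.mem_univ x)) with ⟨i, hi, hxi⟩
    have hsub : ball i (r / 2) ⊆ ball x r := by
      intro y hy
      have h1 : dist y i < r / 2 := mem_ball.1 hy
      have h2 : dist i x < r / 2 := by rw [dist_comm]; exact mem_ball.1 hxi
      have := dist_triangle y i x
      exact mem_ball.2 (by linarith)
    calc m ≤ (μ (ball i (r / 2))).toReal :=
            Finset.inf'_le _ hi
      _ ≤ (μ (ball x r)).toReal :=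
            ENNReal.toReal_mono (measure_ne_top μ _) (measure_mono hsub)

/-- On a nonempty compact metric space with a finite Borel measure of full
support, for every `ε > 0` there is `C > 0` such that every continuous `α`-Hölder function
`f` satisfies `sup |f| ≤ C·‖f‖_{L²} + ε·(sup |f| + [f]_α)`; here the Hölder seminorm is
encoded by quantifying over all Hölder constants `H` of `f`. -/
theorem sup_bound_by_L2_and_Holder
    {M : Type*} [MetricSpace M] [CompactSpace M] [Nonempty M]
    [MeasurableSpace M] [BorelSpace M]
    (μ : Measure M) [IsFiniteMeasure μ] [μ.IsOpenPosMeasure]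
    (α : ℝ) (hα : α ∈ Set.Ioc (0 : ℝ) 1) :
    ∀ ε > (0 : ℝ), ∃ C > (0 : ℝ),
      ∀ f : M → ℝ, Continuous f →
      ∀ H : ℝ, 0 ≤ H →
        (∀ x y : M, |f x - f y| ≤ H * dist x y ^ α) →
        (⨆ x : M, |f x|) ≤
          C * (∫ x, |f x| ^ 2 ∂μ) ^ ((1 : ℝ) / 2) +
          ε * ((⨆ x : M, |f x|) + H) := by
  obtain ⟨hα0, hα1⟩ := hα
  intro ε hε
  -- radius r with r ^ α ≤ ε
  set r : ℝ := (min ε 1) ^ (1 / α) with hrdef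
  have hminpos : 0 < min ε 1 := lt_min hε one_pos
  have hrpos : 0 < r := Real.rpow_pos_of_pos hminpos _
  have hrα : r ^ α = min ε 1 := by
    rw [hrdef, ← Real.rpow_mul hminpos.le, one_div_mul_cancel hα0.ne', Real.rpow_one]
  have hrε : r ^ α ≤ ε := by rw [hrα]; exact min_le_left _ _
  obtain ⟨m, hm0, hm⟩ := uniform_ball_measure_lb μ hrpos
  refine ⟨1 / Real.sqrt m, by positivity, ?_⟩
  intro f hf H hH hHol
  -- sup is attained
  have habs : Continuous fun x => |f x| := hf.abs
  obtain ⟨x₀, hx₀⟩ : ∃ x₀ : M, ∀ x : M, |f x| ≤ |f x₀| := by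
    obtain ⟨x₀, _, hx₀⟩ := isCompact_univ.exists_isMaxOn Set.univ_nonempty
      habs.continuousOn
    exact ⟨x₀, fun x => hx₀ (Set.mem_univ x)⟩
  have hbdd : BddAbove (Set.range fun x => |f x|) := ⟨|f x₀|, by rintro _ ⟨x, rfl⟩; exact hx₀ x⟩
  have hsup : (⨆ x : M, |f x|) = |f x₀| :=
    le_antisymm (ciSup_le hx₀) (le_ciSup hbdd x₀)
  set S : ℝ := |f x₀| with hSdef
  have hS0 : 0 ≤ S := abs_nonneg _
  rw [hsup]
  -- integral is nonnegative
  have hint_nonneg : 0 ≤ ∫ x, |f x| ^ 2 ∂μ :=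
    integral_nonneg fun x => by positivity
  have hterm1 : 0 ≤ 1 / Real.sqrt m * (∫ x, |f x| ^ 2 ∂μ) ^ ((1 : ℝ) / 2) := by
    positivity
  by_cases hcase : S ≤ ε * (S + H)
  · calc S ≤ ε * (S + H) := hcase
      _ ≤ _ := le_add_of_nonneg_left hterm1
  push_neg at hcase
  -- main case
  set T : ℝ := S - H * r ^ α with hTdef
  have hHr : H * r ^ α ≤ ε * (S + H) := by
    have : H * r ^ α ≤ H * ε := by
      exact mul_le_mul_of_nonneg_left hrε hH
    calc H * r ^ α ≤ H * ε := this
      _ = ε * H := mul_comm _ _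
      _ ≤ ε * (S + H) := by nlinarith
  have hT0 : 0 < T := by simp only [hTdef]; linarith
  -- lower bound on f on the ball
  have hball : ∀ x ∈ ball x₀ r, T ≤ |f x| := by
    intro x hx
    have hd : dist x₀ x ^ α ≤ r ^ α := by
      apply Real.rpow_le_rpow dist_nonneg _ hα0.le
      rw [dist_comm]
      exact (mem_ball.1 hx).le
    have h1 : |f x₀ - f x| ≤ H * r ^ α :=
      le_trans (hHol x₀ x) (mul_le_mul_of_nonneg_left hd hH)
    have h2 : |f x₀| - |f x| ≤ H * r ^ α :=
      le_trans (abs_sub_abs_le_abs_sub _ _) h1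
    simp only [hTdef]
    linarith
  -- integrability
  have hint : Integrable (fun x => |f x| ^ 2) μ := by
    have : ContinuousOn (fun x => |f x| ^ 2) Set.univ := ((habs.pow 2)).continuousOn
    exact integrableOn_univ.1 (this.integrableOn_compact isCompact_univ)
  have hIb : T ^ 2 * (μ (ball x₀ r)).toReal ≤ ∫ x, |f x| ^ 2 ∂μ := by
    have h1 : ∫ x in ball x₀ r, T ^ 2 ∂μ ≤ ∫ x in ball x₀ r, |f x| ^ 2 ∂μ := by
      apply setIntegral_mono_on (integrableOn_const (measure_ball_lt_top).ne)
        hint.integrableOn measurableSet_ball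
      intro x hx
      have := hball x hx
      nlinarith [abs_nonneg (f x)]
    have h2 : ∫ x in ball x₀ r, |f x| ^ 2 ∂μ ≤ ∫ x, |f x| ^ 2 ∂μ :=
      setIntegral_le_integral hint (Filter.Eventually.of_forall fun x => by positivity)
    have h3 : ∫ x in ball x₀ r, T ^ 2 ∂μ = T ^ 2 * (μ (ball x₀ r)).toReal := by
      rw [setIntegral_const, smul_eq_mul, mul_comm]; rfl
    linarith
  have hIm : T ^ 2 * m ≤ ∫ x, |f x| ^ 2 ∂μ := by
    have := hm x₀
    nlinarith
  -- T ≤ sqrt(I)/sqrt(m)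
  have hTle : T ≤ 1 / Real.sqrt m * (∫ x, |f x| ^ 2 ∂μ) ^ ((1 : ℝ) / 2) := by
    rw [← Real.sqrt_eq_rpow]
    have h1 : T ^ 2 ≤ (∫ x, |f x| ^ 2 ∂μ) / m := by
      rw [le_div_iff₀ hm0]; linarith
    calc T = Real.sqrt (T ^ 2) := (Real.sqrt_sq hT0.le).symm
      _ ≤ Real.sqrt ((∫ x, |f x| ^ 2 ∂μ) / m) := Real.sqrt_le_sqrt h1
      _ = Real.sqrt (∫ x, |f x| ^ 2 ∂μ) / Real.sqrt m := by
            rw [Real.sqrt_div hint_nonneg]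
      _ = 1 / Real.sqrt m * Real.sqrt (∫ x, |f x| ^ 2 ∂μ) := by ring
  have : S = T + H * r ^ α := by simp [hTdef]
  rw [this]
  have : H * r ^ α ≤ ε * (S + H) := hHr
  linarith
end

section
/- Fix an integer n ≥ 3 and set N = 2n/(n-2). Let u : ℝ → ℝ be a twice continuously differentiable function with u(t) > 0 for all t, solving 4u''(t) - (n-2)² u(t) + n(n-2) u(t)^(N-1) = 0 for all t ∈ ℝ (where u(t)^(N-1) is the real power). Suppose u is periodic (there exists T > 0 with u(t+T) = u(t) for all t) and u is not constant. Then for every t ∈ ℝ one has 2u'(t)² + ((n-2)²/2)·(u(t)^N - u(t)²) < 0; in particular 0 < u(t) < 1 for all t. -/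
open Set

/-- Auxiliary: if `0 < x`, `2 < N` and `x ^ N < x ^ (2:ℕ)` (rpow vs npow), then `x < 1`. -/
lemma aux_lt_one {x N : ℝ} (hx : 0 < x) (hN : 2 < N) (h : x ^ N < x ^ (2:ℕ)) : x < 1 := by
  by_contra hge
  push_neg at hge
  have h1 : (1:ℝ) ≤ x ^ (N - 2) := Real.one_le_rpow hge (by linarith)
  have h2 : x ^ N = x ^ (2:ℕ) * x ^ (N - 2) := by
    rw [← Real.rpow_natCast x 2, ← Real.rpow_add hx]
    norm_num
  nlinarith [pow_pos hx 2]

/-- For `n ≥ 3`, `N = 2n/(n-2)`, any positive non-constant periodic `C²`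
solution of `4u'' - (n-2)²u + n(n-2)u^(N-1) = 0` has negative Hamiltonian:
`2u'(t)² + ((n-2)²/2)(u(t)^N - u(t)²) < 0` for all `t`; in particular `0 < u(t) < 1`. -/
theorem periodic_solution_negative_energy
    (n : ℕ) (hn : 3 ≤ n) (N : ℝ) (hN : N = 2 * (n : ℝ) / ((n : ℝ) - 2))
    (u : ℝ → ℝ) (hreg : ContDiff ℝ 2 u) (hpos : ∀ t : ℝ, 0 < u t)
    (hODE : ∀ t : ℝ, 4 * deriv (deriv u) t - ((n : ℝ) - 2) ^ 2 * u t
        + (n : ℝ) * ((n : ℝ) - 2) * u t ^ (N - 1) = 0)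
    (hper : ∃ T : ℝ, 0 < T ∧ Function.Periodic u T)
    (hnc : ∃ t₁ t₂ : ℝ, u t₁ ≠ u t₂) :
    ∀ t : ℝ,
      2 * (deriv u t) ^ 2 + (((n : ℝ) - 2) ^ 2 / 2) * (u t ^ N - u t ^ 2) < 0 ∧
      0 < u t ∧ u t < 1 := by
  obtain ⟨T, hT, hperT⟩ := hper
  have hn3 : (3:ℝ) ≤ (n:ℝ) := by exact_mod_cast hn
  have hn2 : (0:ℝ) < (n:ℝ) - 2 := by linarith
  set c : ℝ := ((n:ℝ) - 2) ^ 2 with hc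
  have hc0 : 0 < c := by positivity
  have hN2 : 2 < N := by
    rw [hN, lt_div_iff₀ hn2]; linarith
  have hcN : c * N = 2 * (n:ℝ) * ((n:ℝ) - 2) := by
    rw [hc, hN]; field_simp
  -- differentiability
  have hdiff : Differentiable ℝ u := hreg.differentiable (by norm_num)
  have hvC : ContDiff ℝ 1 (deriv u) := by
    have := (contDiff_succ_iff_deriv (n := 1)).mp (by exact_mod_cast hreg)
    exact this.2.2
  have hvdiff : Differentiable ℝ (deriv u) := hvC.differentiable (by norm_num)
  set v : ℝ → ℝ := deriv u with hv
  have hu' : ∀ t, HasDerivAt u (v t) t := fun t => (hdiff t).hasDerivAt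
  have hv' : ∀ t, HasDerivAt v (deriv v t) t := fun t => (hvdiff t).hasDerivAt
  -- Hamiltonian
  set H : ℝ → ℝ := fun t => 2 * (v t) ^ 2 + c / 2 * (u t ^ N - u t ^ 2) with hH
  have hHd : ∀ t, HasDerivAt H 0 t := by
    intro t
    have h1 : HasDerivAt (fun s => u s ^ N) (v t * N * u t ^ (N - 1)) t :=
      (hu' t).rpow_const (Or.inl (hpos t).ne')
    have h2 : HasDerivAt (fun s => u s ^ (2:ℕ)) ((2:ℕ) * u t ^ (1:ℕ) * v t) t := (hu' t).pow 2
    have h3 : HasDerivAt (fun s => (v s) ^ (2:ℕ)) ((2:ℕ) * v t ^ (1:ℕ) * deriv v t) t :=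
      (hv' t).pow 2
    have h4 := (h3.const_mul 2).add ((h1.sub h2).const_mul (c / 2))
    refine h4.congr_deriv (Eq.symm ?_)
    have hode := hODE t
    have : deriv (deriv u) t = deriv v t := rfl
    rw [this] at hode
    push_cast
    linear_combination (-(v t)) * hode + (-(u t ^ (N - 1) * v t / 2)) * hcN
  have hHconst : ∀ s t, H s = H t :=
    is_const_of_deriv_eq_zero (fun t => (hHd t).differentiableAt) (fun t => (hHd t).deriv)
  -- extrema on a period
  have hcont : Continuous u := hreg.continuous
  obtain ⟨a, _, hamax⟩ := isCompact_Icc.exists_isMaxOn (α := ℝ) ⟨0, left_mem_Icc.mpr hT.le⟩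
    (hcont.continuousOn (s := Icc 0 T))
  obtain ⟨b, _, hbmin⟩ := isCompact_Icc.exists_isMinOn (α := ℝ) ⟨0, left_mem_Icc.mpr hT.le⟩
    (hcont.continuousOn (s := Icc 0 T))
  have hmax : ∀ t, u t ≤ u a := by
    intro t
    obtain ⟨y, hy, hyt⟩ := hperT.exists_mem_Ico₀ hT t
    rw [hyt]; exact hamax (Ico_subset_Icc_self hy)
  have hmin : ∀ t, u b ≤ u t := by
    intro t
    obtain ⟨y, hy, hyt⟩ := hperT.exists_mem_Ico₀ hT t
    rw [hyt]; exact hbmin (Ico_subset_Icc_self hy)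
  have hda : v a = 0 := by
    have : IsLocalMax u a := Filter.Eventually.of_forall hmax
    exact this.deriv_eq_zero
  have hdb : v b = 0 := by
    have : IsLocalMin u b := Filter.Eventually.of_forall hmin
    exact this.deriv_eq_zero
  set m := u b with hm
  set M := u a with hM
  have hmM : m < M := by
    obtain ⟨t₁, t₂, hne⟩ := hnc
    rcases lt_or_eq_of_le (hmin b |>.trans (hmax b)) with h | h
    · exact h
    · exfalso
      have h1 : u t₁ = m := le_antisymm (h ▸ hmax t₁) (hmin t₁)
      have h2 : u t₂ = m := le_antisymm (h ▸ hmax t₂) (hmin t₂)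
      exact hne (h1.trans h2.symm)
  have hm0 : 0 < m := hpos b
  have hM0 : 0 < M := hpos a
  -- equal energies at extrema
  have hEeq : M ^ N - M ^ (2:ℕ) = m ^ N - m ^ (2:ℕ) := by
    have := hHconst a b
    rw [hH] at this
    simp only [hda, hdb] at this
    have h2 : c / 2 * (M ^ N - M ^ 2) = c / 2 * (m ^ N - m ^ 2) := by
      simpa using this
    have := mul_left_cancel₀ (by positivity : (c/2 : ℝ) ≠ 0) h2
    simpa using this
  -- strict monotonicity of g on [1, ∞)
  have gmono : StrictMonoOn (fun x : ℝ => x ^ N - x ^ (2:ℕ)) (Ici 1) := by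
    apply strictMonoOn_of_deriv_pos (convex_Ici 1)
    · apply ContinuousOn.sub
      · exact fun x hx => (Real.continuousAt_rpow_const x N
          (Or.inl (one_pos.trans_le hx).ne')).continuousWithinAt
      · exact (continuous_pow 2).continuousOn
    · intro x hx
      rw [interior_Ici] at hx
      have hx1 : (1:ℝ) < x := hx
      have hx0 : (0:ℝ) < x := by linarith
      have hd : HasDerivAt (fun x : ℝ => x ^ N - x ^ (2:ℕ))
          (1 * N * x ^ (N - 1) - (2:ℕ) * x ^ (2 - 1) * 1) x :=
        ((hasDerivAt_id x).rpow_const (Or.inl hx0.ne')).sub ((hasDerivAt_id x).pow 2)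
      rw [hd.deriv]
      have hgt : x ^ (1:ℝ) < x ^ (N - 1) :=
        Real.rpow_lt_rpow_of_exponent_lt hx1 (by linarith)
      rw [Real.rpow_one] at hgt
      have hxn : 0 < x ^ (N - 1) := Real.rpow_pos_of_pos hx0 _
      norm_num
      nlinarith [mul_lt_mul_of_pos_left hgt (by linarith : (0:ℝ) < N)]
  -- the common energy is negative
  have hKneg : m ^ N - m ^ (2:ℕ) < 0 := by
    by_contra hge
    push_neg at hge
    have h1m : 1 ≤ m := by
      by_contra hlt
      push_neg at hlt
      have : m ^ (N - 2) < 1 := Real.rpow_lt_one hm0.le hlt (by linarith)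
      have h2 : m ^ N = m ^ (2:ℕ) * m ^ (N - 2) := by
        rw [← Real.rpow_natCast m 2, ← Real.rpow_add hm0]; norm_num
      nlinarith [pow_pos hm0 2]
    have := gmono (mem_Ici.mpr h1m) (mem_Ici.mpr (h1m.trans hmM.le)) hmM
    simp only at this
    linarith [hEeq]
  -- conclusion
  intro t
  have hHt : H t = c / 2 * (m ^ N - m ^ (2:ℕ)) := by
    have := hHconst t b
    rw [this, hH]
    simp [hdb, hm]
  have hHtneg : H t < 0 := by
    rw [hHt]
    exact mul_neg_of_pos_of_neg (by positivity) hKneg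
  have hmain : 2 * (v t) ^ 2 + c / 2 * (u t ^ N - u t ^ 2) < 0 := hHtneg
  refine ⟨hmain, hpos t, ?_⟩
  have hdiffneg : u t ^ N - u t ^ (2:ℕ) < 0 := by
    nlinarith [sq_nonneg (v t)]
  exact aux_lt_one (hpos t) hN2 (by linarith)
end

section
/- Fix an integer n ≥ 3, set N = 2n/(n-2) and u₀ = ((n-2)/n)^((n-2)/4). For α ∈ (u₀, 1), let u_α : ℝ → ℝ be the unique solution of 4u'' - (n-2)²u + n(n-2)u^(N-1) = 0 with u_α(0) = α, u_α'(0) = 0; u_α is a positive, non-constant, periodic function, and let τ(α) denote its minimal positive period. Then the function τ : (u₀, 1) → (0,∞) is continuous. -/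
open Set

noncomputable section PeriodAux

open Real

namespace PeriodAux

variable (n : ℕ)

/-- `c = n - 2`. -/
def pc : ℝ := (n : ℝ) - 2
/-- `N = 2n/(n-2)`. -/
def pN : ℝ := 2 * (n : ℝ) / ((n : ℝ) - 2)
/-- right-hand side of `u'' = fo (u)`. -/
def fo (y : ℝ) : ℝ := ((pc n) ^ 2 * y - (n : ℝ) * pc n * y ^ (pN n - 1)) / 4
/-- potential: `2 u'^2 + Vv (u)` is conserved. -/
def Vv (y : ℝ) : ℝ := (pc n) ^ 2 / 2 * (y ^ (pN n) - y ^ 2)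
/-- the constant equilibrium. -/
def q0 : ℝ := (pc n / (n : ℝ)) ^ (pc n / 4)
/-- Lipschitz constant for `fo` on `[0,1]`. -/
def Lc : ℝ := ((pc n) ^ 2 + (n : ℝ) * pc n * (pN n - 1)) / 4
/-- Gronwall constant. -/
def Kc : ℝ := max 1 (Lc n)

variable {n} (hn : 3 ≤ n)
include hn

lemma hc1 : 1 ≤ pc n := by
  have : (3:ℝ) ≤ (n:ℝ) := by exact_mod_cast hn
  simp only [pc]; linarith

lemma hc0 : 0 < pc n := lt_of_lt_of_le one_pos (hc1 hn)

lemma hn0 : (0:ℝ) < (n:ℝ) := by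
  have : (3:ℝ) ≤ (n:ℝ) := by exact_mod_cast hn
  linarith

lemma pN_sub_two : pN n - 2 = 4 / pc n := by
  have h := hc0 hn
  have hne : (n:ℝ) - 2 ≠ 0 := by simp only [pc] at h; linarith
  simp only [pN, pc]
  field_simp
  ring

lemma pN_sub_two_pos : 0 < pN n - 2 := by
  rw [pN_sub_two hn]
  have := hc0 hn; positivity

lemma pN_gt_two : 2 < pN n := by have := pN_sub_two_pos hn; linarith

lemma pN_sub_one_ge_one : 1 ≤ pN n - 1 := by have := pN_sub_two_pos hn; linarith

lemma pN_ge_one : 1 ≤ pN n := by have := pN_sub_two_pos hn; linarith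

lemma q0_pos : 0 < q0 n := by
  apply Real.rpow_pos_of_pos
  exact div_pos (hc0 hn) (hn0 hn)

lemma base_lt_one : pc n / (n : ℝ) < 1 := by
  rw [div_lt_one (hn0 hn)]
  simp only [pc]; linarith

lemma q0_lt_one : q0 n < 1 := by
  apply Real.rpow_lt_one (le_of_lt (div_pos (hc0 hn) (hn0 hn))) (base_lt_one hn)
  have := hc0 hn; positivity

lemma q0_rpow : q0 n ^ (pN n - 2) = pc n / (n : ℝ) := by
  rw [q0, ← Real.rpow_mul (le_of_lt (div_pos (hc0 hn) (hn0 hn)))]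
  rw [pN_sub_two hn]
  rw [show pc n / 4 * (4 / pc n) = 1 by field_simp [ne_of_gt (hc0 hn)]]
  exact Real.rpow_one _

/-- `fo` is positive strictly below the equilibrium. -/
lemma fo_pos {y : ℝ} (h0 : 0 < y) (h1 : y < q0 n) : 0 < fo n y := by
  have hy : y ^ (pN n - 2) < pc n / (n:ℝ) := by
    rw [← q0_rpow hn]
    exact Real.rpow_lt_rpow (le_of_lt h0) h1 (pN_sub_two_pos hn)
  have hsplit : y ^ (pN n - 1) = y ^ (pN n - 2) * y := by
    rw [← Real.rpow_add_one (ne_of_gt h0) (pN n - 2)]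
    ring_nf

  have hkey : (n:ℝ) * pc n * y ^ (pN n - 1) < (pc n)^2 * y := by
    rw [hsplit]
    have h2 : (n:ℝ) * y ^ (pN n - 2) < pc n := by
      have h3 : y ^ (pN n - 2) * (n:ℝ) < pc n := by
        rw [← lt_div_iff₀ (hn0 hn)]; exact hy
      linarith [h3]
    calc (n:ℝ) * pc n * (y ^ (pN n - 2) * y) = ((n:ℝ) * y ^ (pN n - 2)) * (pc n * y) := by ring
    _ < pc n * (pc n * y) := by
        apply mul_lt_mul_of_pos_right h2
        exact mul_pos (hc0 hn) h0
    _ = (pc n)^2 * y := by ring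
  simp only [fo]
  linarith

/-- `fo` is negative strictly above the equilibrium. -/
lemma fo_neg {y : ℝ} (h1 : q0 n < y) : fo n y < 0 := by
  have h0 : 0 < y := lt_trans (q0_pos hn) h1
  have hy : pc n / (n:ℝ) < y ^ (pN n - 2) := by
    rw [← q0_rpow hn]
    exact Real.rpow_lt_rpow (le_of_lt (q0_pos hn)) h1 (pN_sub_two_pos hn)
  have hsplit : y ^ (pN n - 1) = y ^ (pN n - 2) * y := by
    rw [← Real.rpow_add_one (ne_of_gt h0) (pN n - 2)]
    ring_nf

  have hkey : (pc n)^2 * y < (n:ℝ) * pc n * y ^ (pN n - 1) := by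
    rw [hsplit]
    have h2 : pc n < (n:ℝ) * y ^ (pN n - 2) := by
      have h3 : pc n < y ^ (pN n - 2) * (n:ℝ) := by
        rw [← div_lt_iff₀ (hn0 hn)]; exact hy
      linarith [h3]
    calc (pc n)^2 * y = pc n * (pc n * y) := by ring
    _ < ((n:ℝ) * y ^ (pN n - 2)) * (pc n * y) := by
        apply mul_lt_mul_of_pos_right h2 (mul_pos (hc0 hn) h0)
    _ = (n:ℝ) * pc n * (y ^ (pN n - 2) * y) := by ring
  simp only [fo]
  linarith

-- NEW PART
lemma hasDerivAt_fo (y : ℝ) :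
    HasDerivAt (fo n) (((pc n)^2 - (n:ℝ) * pc n * ((pN n - 1) * y ^ (pN n - 2))) / 4) y := by
  have h1 : HasDerivAt (fun y : ℝ => y ^ (pN n - 1)) ((pN n - 1) * y ^ (pN n - 1 - 1)) y :=
    Real.hasDerivAt_rpow_const (Or.inr (pN_sub_one_ge_one hn))
  have h2 : pN n - 1 - 1 = pN n - 2 := by ring
  rw [h2] at h1
  have hd := (((hasDerivAt_id y).const_mul ((pc n)^2)).sub (h1.const_mul ((n:ℝ) * pc n))).div_const 4
  have heq : (fun y : ℝ => ((pc n)^2 * id y - (n:ℝ) * pc n * y ^ (pN n - 1)) / 4) = fo n := by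
    funext z; simp [fo]
  change HasDerivAt (fun y : ℝ => ((pc n)^2 * id y - (n:ℝ) * pc n * y ^ (pN n - 1)) / 4) _ y at hd
  rw [heq] at hd
  convert hd using 1
  ring

lemma continuous_fo : Continuous (fo n) := by
  have : Differentiable ℝ (fo n) := fun y => (hasDerivAt_fo hn y).differentiableAt
  exact this.continuous

lemma hasDerivAt_Vv (y : ℝ) :
    HasDerivAt (Vv n) (-(4 * fo n y)) y := by
  have h1 : HasDerivAt (fun y : ℝ => y ^ (pN n)) (pN n * y ^ (pN n - 1)) y :=
    Real.hasDerivAt_rpow_const (Or.inr (pN_ge_one hn))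
  have h2 : HasDerivAt (fun y : ℝ => y ^ 2) (2 * y) y := by
    simpa using (hasDerivAt_pow 2 y)
  have h3 := (h1.sub h2).const_mul ((pc n)^2 / 2)
  have key : (pc n)^2 / 2 * (pN n * y ^ (pN n - 1) - 2 * y) = -(4 * fo n y) := by
    have hkey : (pc n)^2 / 2 * pN n = (n:ℝ) * pc n := by
      have hne : (n:ℝ) - 2 ≠ 0 := ne_of_gt (by simpa [pc] using hc0 hn)
      simp only [pN, pc]
      field_simp
    simp only [fo]
    have : (pc n)^2 / 2 * (pN n * y ^ (pN n - 1) - 2 * y)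
        = ((pc n)^2 / 2 * pN n) * y ^ (pN n - 1) - (pc n)^2 * y := by ring
    rw [this, hkey]; ring
  rw [key] at h3
  exact h3

lemma Vv_zero : Vv n 0 = 0 := by
  have : (0:ℝ) ^ (pN n) = 0 := Real.zero_rpow (by have := pN_ge_one hn; intro h; rw [h] at this; norm_num at this)
  simp [Vv, this]

lemma Vv_neg {y : ℝ} (h0 : 0 < y) (h1 : y < 1) : Vv n y < 0 := by
  have h2 : y ^ (pN n) < y ^ (2:ℝ) := by
    apply Real.rpow_lt_rpow_of_exponent_gt h0 h1
    have := pN_sub_two_pos hn; linarith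
  have h3 : y ^ (2:ℝ) = y ^ 2 := by
    rw [show (2:ℝ) = ((2:ℕ):ℝ) by norm_num, Real.rpow_natCast]
  rw [h3] at h2
  have h4 : (0:ℝ) < (pc n)^2 / 2 := by have := hc0 hn; positivity
  have : y ^ pN n - y ^ 2 < 0 := by linarith
  calc Vv n y = (pc n)^2/2 * (y ^ pN n - y^2) := rfl
  _ < 0 := mul_neg_of_pos_of_neg h4 this

lemma Vv_strictAntiOn : StrictAntiOn (Vv n) (Icc 0 (q0 n)) := by
  apply strictAntiOn_of_deriv_neg (convex_Icc _ _)
  · exact fun y _ => ((hasDerivAt_Vv hn y).differentiableAt.continuousAt).continuousWithinAt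
  · intro y hy
    rw [interior_Icc] at hy
    rw [(hasDerivAt_Vv hn y).deriv]
    have : 0 < fo n y := fo_pos hn hy.1 hy.2
    linarith

lemma Vv_strictMonoOn : StrictMonoOn (Vv n) (Ici (q0 n)) := by
  apply strictMonoOn_of_deriv_pos (convex_Ici _)
  · exact fun y _ => ((hasDerivAt_Vv hn y).differentiableAt.continuousAt).continuousWithinAt
  · intro y hy
    rw [interior_Ici] at hy
    rw [(hasDerivAt_Vv hn y).deriv]
    have : fo n y < 0 := fo_neg hn hy
    linarith

lemma Lc_nonneg : 0 ≤ Lc n := by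
  have h1 := hc0 hn
  have h2 := hn0 hn
  have h3 := pN_sub_one_ge_one hn
  simp only [Lc]
  have : 0 ≤ (n:ℝ) * pc n * (pN n - 1) := by positivity
  positivity

omit hn in
lemma Kc_pos : 0 < Kc n := lt_of_lt_of_le one_pos (le_max_left _ _)

omit hn in
lemma one_le_Kc : 1 ≤ Kc n := le_max_left _ _

omit hn in
lemma Lc_le_Kc : Lc n ≤ Kc n := le_max_right _ _

lemma fo_lipschitz {y z : ℝ} (hy : y ∈ Icc (0:ℝ) 1) (hz : z ∈ Icc (0:ℝ) 1) :
    |fo n y - fo n z| ≤ Lc n * |y - z| := by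
  have key := Convex.norm_image_sub_le_of_norm_hasDerivWithin_le
    (f := fo n) (f' := fun y => ((pc n)^2 - (n:ℝ) * pc n * ((pN n - 1) * y ^ (pN n - 2))) / 4)
    (s := Icc (0:ℝ) 1) (C := Lc n)
    (fun x _ => (hasDerivAt_fo hn x).hasDerivWithinAt) ?_ (convex_Icc _ _) hz hy
  · simpa [Real.norm_eq_abs] using key
  · intro x hx
    have h1 := hc0 hn
    have h2 := hn0 hn
    have h3 := pN_sub_one_ge_one hn
    have hb : x ^ (pN n - 2) ≤ 1 :=
      Real.rpow_le_one hx.1 hx.2 (le_of_lt (pN_sub_two_pos hn))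
    have hb0 : 0 ≤ x ^ (pN n - 2) := Real.rpow_nonneg hx.1 _
    rw [Real.norm_eq_abs]
    have habs : |((pc n)^2 - (n:ℝ) * pc n * ((pN n - 1) * x ^ (pN n - 2))) / 4|
        ≤ ((pc n)^2 + (n:ℝ) * pc n * (pN n - 1)) / 4 := by
      rw [abs_div, abs_of_pos (show (0:ℝ) < 4 by norm_num)]
      apply div_le_div_of_nonneg_right ?_ (by norm_num) |>.trans (le_refl _)
      have h6 : 0 ≤ (n:ℝ) * pc n * ((pN n - 1) * x ^ (pN n - 2)) := by positivity
      have h5 : (n:ℝ) * pc n * ((pN n - 1) * x ^ (pN n - 2)) ≤ (n:ℝ) * pc n * (pN n - 1) := by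
        have ha : (pN n - 1) * x ^ (pN n - 2) ≤ pN n - 1 := by nlinarith
        have hb2 : (0:ℝ) ≤ (n:ℝ) * pc n := by positivity
        exact mul_le_mul_of_nonneg_left ha hb2
      rw [abs_le]
      constructor <;> nlinarith [sq_nonneg (pc n)]
    simpa [Lc] using habs
-- PART3
/-- A solution of the autonomous second order ODE. -/
def Sol (n : ℕ) (v : ℝ → ℝ) : Prop :=
  ContDiff ℝ 2 v ∧ ∀ t, deriv (deriv v) t = fo n (v t)

omit hn
lemma reg {v : ℝ → ℝ} (hv : ContDiff ℝ 2 v) :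
    Differentiable ℝ v ∧ Differentiable ℝ (deriv v) ∧ Continuous (deriv (deriv v)) := by
  have h1 : ContDiff ℝ (1+1 : WithTop ℕ∞) v := by norm_num at hv ⊢; exact hv
  rw [contDiff_succ_iff_deriv] at h1
  exact ⟨h1.1, (contDiff_one_iff_deriv.mp h1.2.2).1, (contDiff_one_iff_deriv.mp h1.2.2).2⟩

include hn

lemma energy {v : ℝ → ℝ} (hv : Sol n v) (t : ℝ) :
    2 * (deriv v t)^2 + Vv n (v t) = 2 * (deriv v 0)^2 + Vv n (v 0) := by
  obtain ⟨hd1, hd2, _⟩ := reg hv.1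
  have key : ∀ s : ℝ, HasDerivAt (fun t => 2 * (deriv v t)^2 + Vv n (v t)) 0 s := by
    intro s
    have h1 : HasDerivAt (deriv v) (deriv (deriv v) s) s := (hd2 s).hasDerivAt
    have h2 : HasDerivAt (fun t => 2 * (deriv v t)^2)
        (2 * (2 * deriv v s * deriv (deriv v) s)) s := by
      have : HasDerivAt (fun t => 2 * (deriv v t)^2)
          (2 * (((2:ℕ):ℝ) * deriv v s ^ 1 * deriv (deriv v) s)) s := (h1.pow 2).const_mul (2:ℝ)
      convert this using 1
      ring
    have h3 : HasDerivAt (fun t => Vv n (v t)) (-(4 * fo n (v s)) * deriv v s) s :=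
      (hasDerivAt_Vv hn (v s)).comp s (hd1 s).hasDerivAt
    have h4 := h2.add h3
    have : 2 * (2 * deriv v s * deriv (deriv v) s) + -(4 * fo n (v s)) * deriv v s = 0 := by
      rw [hv.2 s]; ring
    rwa [this] at h4
  have hconst := is_const_of_deriv_eq_zero (fun s => (key s).differentiableAt)
    (fun s => (key s).deriv) t 0
  exact hconst

/-- reflection of a solution is a solution. -/
lemma sol_reflect {v : ℝ → ℝ} (hv : Sol n v) (c : ℝ) :
    Sol n (fun t => v (c - t)) ∧ (∀ t, deriv (fun t => v (c - t)) t = -(deriv v (c - t))) := by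
  obtain ⟨hd1, hd2, _⟩ := reg hv.1
  have hsm : ContDiff ℝ 2 (fun t : ℝ => v (c - t)) :=
    hv.1.comp (contDiff_const.sub contDiff_id)
  have hder : ∀ t, deriv (fun t => v (c - t)) t = -(deriv v (c - t)) := by
    intro t; exact deriv_comp_const_sub v c t
  refine ⟨⟨hsm, ?_⟩, hder⟩
  intro t
  have : deriv (fun t => v (c - t)) = (fun t => -(deriv v (c - t))) := funext hder
  rw [this]
  rw [deriv.fun_neg, deriv_comp_const_sub (deriv v) c t, neg_neg, hv.2 (c - t)]

/-- shift of a solution is a solution. -/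
lemma sol_shift {v : ℝ → ℝ} (hv : Sol n v) (c : ℝ) :
    Sol n (fun t => v (t + c)) ∧ (∀ t, deriv (fun t => v (t + c)) t = deriv v (t + c)) := by
  obtain ⟨hd1, hd2, _⟩ := reg hv.1
  have hsm : ContDiff ℝ 2 (fun t : ℝ => v (t + c)) :=
    hv.1.comp (contDiff_id.add contDiff_const)
  have hder : ∀ t, deriv (fun t => v (t + c)) t = deriv v (t + c) := by
    intro t; exact deriv_comp_add_const v c t
  refine ⟨⟨hsm, ?_⟩, hder⟩
  intro t
  have : deriv (fun t => v (t + c)) = (fun t => deriv v (t + c)) := funext hder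
  rw [this, deriv_comp_add_const (deriv v) c t, hv.2 (t + c)]

/-- Gronwall comparison of two solutions with values in `[0,1]`. -/
lemma growth {v w : ℝ → ℝ} (hv : Sol n v) (hw : Sol n w)
    (hrv : ∀ t, v t ∈ Icc (0:ℝ) 1) (hrw : ∀ t, w t ∈ Icc (0:ℝ) 1) {b : ℝ} (hb : 0 ≤ b)
    {D : ℝ} (hD : max |v 0 - w 0| |deriv v 0 - deriv w 0| ≤ D) :
    ∀ t ∈ Icc 0 b, |v t - w t| ≤ D * Real.exp (Kc n * t)
      ∧ |deriv v t - deriv w t| ≤ D * Real.exp (Kc n * t) := by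
  obtain ⟨hv1, hv2, _⟩ := reg hv.1
  obtain ⟨hw1, hw2, _⟩ := reg hw.1
  set f : ℝ → ℝ × ℝ := fun t => (v t - w t, deriv v t - deriv w t) with hf
  have hf' : ∀ t : ℝ, HasDerivAt f (deriv v t - deriv w t, fo n (v t) - fo n (w t)) t := by
    intro t
    apply HasDerivAt.prodMk
    · exact ((hv1 t).hasDerivAt.sub (hw1 t).hasDerivAt)
    · have := ((hv2 t).hasDerivAt.sub (hw2 t).hasDerivAt)
      rwa [hv.2 t, hw.2 t] at this
  have hcont : ContinuousOn f (Icc 0 b) :=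
    (Continuous.continuousOn (by
      apply Continuous.prodMk
      · exact (hv1.continuous.sub hw1.continuous)
      · exact (hv2.continuous.sub hw2.continuous)))
  have hbound : ∀ x ∈ Ico 0 b, ‖(deriv v x - deriv w x, fo n (v x) - fo n (w x))‖
      ≤ Kc n * ‖f x‖ + 0 := by
    intro x _
    rw [Prod.norm_def]
    have hfx : ‖f x‖ = max ‖v x - w x‖ ‖deriv v x - deriv w x‖ := Prod.norm_def _
    simp only [Real.norm_eq_abs] at hfx ⊢
    rw [add_zero]
    apply max_le
    · calc |deriv v x - deriv w x| ≤ max |v x - w x| |deriv v x - deriv w x| := le_max_right _ _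
      _ = ‖f x‖ := hfx.symm
      _ ≤ Kc n * ‖f x‖ := le_mul_of_one_le_left (norm_nonneg _) (one_le_Kc)
    · calc |fo n (v x) - fo n (w x)| ≤ Lc n * |v x - w x| :=
          fo_lipschitz hn (hrv x) (hrw x)
      _ ≤ Lc n * ‖f x‖ := by
          apply mul_le_mul_of_nonneg_left _ (Lc_nonneg hn)
          rw [hfx]; exact le_max_left _ _
      _ ≤ Kc n * ‖f x‖ := mul_le_mul_of_nonneg_right (Lc_le_Kc) (norm_nonneg _)
  have hstart : ‖f 0‖ ≤ D := by
    rw [Prod.norm_def]; simp only [Real.norm_eq_abs]; exact hD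
  have key := norm_le_gronwallBound_of_norm_deriv_right_le hcont
    (fun x _ => (hf' x).hasDerivWithinAt) hstart hbound
  intro t ht
  have := key t ht
  rw [gronwallBound_ε0, sub_zero] at this
  rw [Prod.norm_def] at this
  simp only [Real.norm_eq_abs] at this
  exact ⟨le_trans (le_max_left _ _) this, le_trans (le_max_right _ _) this⟩

/-- Uniqueness: two solutions with same initial data agree (values and derivatives). -/lemma sol_unique {v w : ℝ → ℝ} (hv : Sol n v) (hw : Sol n w)
    (hrv : ∀ t, v t ∈ Icc (0:ℝ) 1) (hrw : ∀ t, w t ∈ Icc (0:ℝ) 1)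
    (h0 : v 0 = w 0) (h0' : deriv v 0 = deriv w 0) : ∀ t, v t = w t := by
  have key : ∀ (v w : ℝ → ℝ), Sol n v → Sol n w → (∀ t, v t ∈ Icc (0:ℝ) 1) →
      (∀ t, w t ∈ Icc (0:ℝ) 1) → v 0 = w 0 → deriv v 0 = deriv w 0 →
      ∀ t, 0 ≤ t → v t = w t := by
    intro v w hv hw hrv hrw h0 h0' t ht
    have hD : max |v 0 - w 0| |deriv v 0 - deriv w 0| ≤ 0 := by rw [h0, h0']; simp
    have h2 := ((growth hn hv hw hrv hrw ht hD) t ⟨ht, le_refl t⟩).1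
    rw [zero_mul] at h2
    have h3 : |v t - w t| = 0 := le_antisymm h2 (abs_nonneg _)
    exact sub_eq_zero.mp (abs_eq_zero.mp h3)
  intro t
  rcases le_or_gt 0 t with h | h
  · exact key v w hv hw hrv hrw h0 h0' t h
  · obtain ⟨hv', hdv⟩ := sol_reflect hn hv 0
    obtain ⟨hw', hdw⟩ := sol_reflect hn hw 0
    have heq := key _ _ hv' hw' (fun s => hrv _) (fun s => hrw _) (by simpa using h0)
      (by rw [hdv 0, hdw 0]; norm_num [h0']) (-t) (by linarith)
    simpa using heq

/-- Derivatives also agree. -/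
lemma sol_unique_deriv {v w : ℝ → ℝ} (hv : Sol n v) (hw : Sol n w)
    (hrv : ∀ t, v t ∈ Icc (0:ℝ) 1) (hrw : ∀ t, w t ∈ Icc (0:ℝ) 1)
    (h0 : v 0 = w 0) (h0' : deriv v 0 = deriv w 0) : ∀ t, deriv v t = deriv w t := by
  intro t
  have := sol_unique hn hv hw hrv hrw h0 h0'
  have : v = w := funext this
  rw [this]


omit hn in
lemma deriv_periodic {f : ℝ → ℝ} {c : ℝ} (h : Function.Periodic f c) :
    Function.Periodic (deriv f) c := by
  intro x
  rw [← deriv_comp_add_const]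
  congr 1; ext t; exact h t

section Main

variable {α : ℝ} (hα : α ∈ Ioo (q0 n) 1) {u : ℝ → ℝ} (hSol : Sol n u)
  (hu0 : u 0 = α) (hu0' : deriv u 0 = 0) (hupos : ∀ t, 0 < u t)

include hα hSol hu0 hu0' hupos

lemma energy' : ∀ t, 2 * (deriv u t)^2 + Vv n (u t) = Vv n α := by
  intro t
  have := energy hn hSol t
  rw [hu0, hu0'] at this
  simpa using this

lemma Vv_le : ∀ t, Vv n (u t) ≤ Vv n α := by
  intro t
  have h := energy' hn hα hSol hu0 hu0' hupos t
  nlinarith [sq_nonneg (deriv u t)]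

lemma confine : ∀ t, u t ∈ Icc (0:ℝ) 1 := by
  intro t
  have h := Vv_le hn hα hSol hu0 hu0' hupos t
  have hle : u t ≤ α := by
    by_contra hgt
    push_neg at hgt
    have h1 : q0 n ≤ α := le_of_lt hα.1
    have h2 : q0 n ≤ u t := le_trans h1 (le_of_lt hgt)
    have := Vv_strictMonoOn hn (mem_Ici.mpr h1) (mem_Ici.mpr h2) hgt
    linarith
  exact ⟨le_of_lt (hupos t), le_trans hle (le_of_lt hα.2)⟩

/-- a critical value strictly below `α` lies strictly below the equilibrium. -/
lemma crit_below {s : ℝ} (hs : deriv u s = 0) (hlt : u s < α) : u s < q0 n := by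
  have h := energy' hn hα hSol hu0 hu0' hupos s
  rw [hs] at h
  norm_num at h
  by_contra hge
  push_neg at hge
  have := Vv_strictMonoOn hn (mem_Ici.mpr hge) (mem_Ici.mpr (le_of_lt hα.1)) hlt
  linarith

/-- reflection symmetry about any critical point. -/
lemma symm_crit {s : ℝ} (hs : deriv u s = 0) : ∀ t, u (t + s) = u (s - t) := by
  obtain ⟨hv, hdv⟩ := sol_shift hn hSol s
  obtain ⟨hw, hdw⟩ := sol_reflect hn hSol s
  apply sol_unique hn hv hw
  · exact fun t => confine hn hα hSol hu0 hu0' hupos _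
  · exact fun t => confine hn hα hSol hu0 hu0' hupos _
  · simp
  · rw [hdv 0, hdw 0]; simp [hs]

lemma periodic_of_crit {s : ℝ} (hs : deriv u s = 0) : Function.Periodic u (2 * s) := by
  intro x
  have h1 := symm_crit hn hα hSol hu0 hu0' hupos hs (x + s)
  have h2 := symm_crit hn hα hSol hu0 hu0' hupos hu0' (-x)
  have e1 : x + s + s = x + 2 * s := by ring
  have e2 : s - (x + s) = -x := by ring
  rw [e1, e2] at h1
  have e3 : -x + 0 = -x := by ring
  have e4 : (0:ℝ) - -x = x := by ring
  rw [e3, e4] at h2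
  rw [h1, h2]

/-- just after `0` the derivative is negative, uniformly on a small interval. -/
lemma small_neg : ∃ δ > 0, ∀ t, 0 < t → t ≤ δ → deriv u t < 0 := by
  obtain ⟨hd1, hd2, hcont2⟩ := reg hSol.1
  have h0 : deriv (deriv u) 0 < 0 := by
    rw [hSol.2 0, hu0]
    exact fo_neg hn hα.1
  have hopen : IsOpen ((deriv (deriv u)) ⁻¹' (Iio 0)) := isOpen_Iio.preimage hcont2
  obtain ⟨r, hr, hball⟩ := Metric.isOpen_iff.mp hopen 0 h0
  refine ⟨r/2, by linarith, ?_⟩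
  intro t ht htr
  have hneg : ∀ x ∈ Icc (0:ℝ) (r/2), deriv (deriv u) x < 0 := by
    intro x hx
    apply hball
    rw [Metric.mem_ball, Real.dist_eq, sub_zero, abs_of_nonneg hx.1]
    linarith [hx.2]
  have hanti : StrictAntiOn (deriv u) (Icc 0 (r/2)) := by
    apply strictAntiOn_of_deriv_neg (convex_Icc _ _) (hd2.continuous.continuousOn)
    intro x hx
    rw [interior_Icc] at hx
    exact hneg x ⟨le_of_lt hx.1, le_of_lt hx.2⟩
  have := hanti ⟨le_refl 0, by linarith⟩ ⟨le_of_lt ht, htr⟩ ht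
  rwa [hu0'] at this

variable {T : ℝ} (hT : 0 < T) (hper : Function.Periodic u T)
  (hmin : ∀ T', 0 < T' → Function.Periodic u T' → T ≤ T')

include hT hper hmin

/-- Structure of the minimal period: `T/2` is the first critical time. -/
lemma half_period :
    deriv u (T/2) = 0 ∧ (∀ t, 0 < t → t < T/2 → deriv u t < 0) ∧ u (T/2) < q0 n := by
  obtain ⟨hd1, hd2, hcont2⟩ := reg hSol.1
  obtain ⟨δ, hδ, hsmall⟩ := small_neg hn hα hSol hu0 hu0' hupos
  set Z : Set ℝ := {s : ℝ | δ ≤ s ∧ deriv u s = 0} with hZ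
  have hTz : deriv u T = 0 := by
    have := deriv_periodic hper 0
    rw [zero_add, hu0'] at this
    exact this
  have hTZ : T ∈ Z := by
    constructor
    · by_contra hlt
      push_neg at hlt
      exact absurd hTz (ne_of_lt (hsmall T hT (le_of_lt hlt)))
    · exact hTz
  have hclosed : IsClosed Z := by
    have : Z = Ici δ ∩ (deriv u) ⁻¹' {0} := by
      ext x; simp [hZ, mem_Ici]
    rw [this]
    exact isClosed_Ici.inter (isClosed_singleton.preimage hd2.continuous)
  have hbdd : BddBelow Z := ⟨δ, fun x hx => hx.1⟩
  have hne : Z.Nonempty := ⟨T, hTZ⟩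
  set s₁ := sInf Z with hs₁def
  have hs₁Z : s₁ ∈ Z := hclosed.csInf_mem hne hbdd
  have hs₁pos : 0 < s₁ := lt_of_lt_of_le hδ hs₁Z.1
  have hs₁crit : deriv u s₁ = 0 := hs₁Z.2
  have hnozero : ∀ t, 0 < t → t < s₁ → deriv u t < 0 := by
    intro t ht hts
    rcases le_or_gt t δ with h | h
    · exact hsmall t ht h
    · by_contra hge
      push_neg at hge
      have hδneg : deriv u δ < 0 := hsmall δ hδ (le_refl δ)
      have hIVT : (0:ℝ) ∈ Icc (deriv u δ) (deriv u t) := ⟨le_of_lt hδneg, hge⟩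
      obtain ⟨ξ, hξmem, hξ⟩ := intermediate_value_Icc (le_of_lt h)
        (hd2.continuous.continuousOn) hIVT
      have hξZ : ξ ∈ Z := ⟨hξmem.1, hξ⟩
      have := csInf_le hbdd hξZ
      have : ξ < s₁ := lt_of_le_of_lt hξmem.2 hts
      linarith [csInf_le hbdd hξZ]
  have hper2 : Function.Periodic u (2 * s₁) :=
    periodic_of_crit hn hα hSol hu0 hu0' hupos hs₁crit
  have hTle : T ≤ 2 * s₁ := hmin _ (by linarith) hper2
  have hanti : StrictAntiOn u (Icc 0 s₁) := by
    apply strictAntiOn_of_deriv_neg (convex_Icc _ _) (hd1.continuous.continuousOn)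
    intro x hx
    rw [interior_Icc] at hx
    exact hnozero x hx.1 hx.2
  have hus₁ : u s₁ < α := by
    have := hanti ⟨le_refl 0, le_of_lt hs₁pos⟩ ⟨le_of_lt hs₁pos, le_refl s₁⟩ hs₁pos
    rwa [hu0] at this
  have hTeq : T = 2 * s₁ := by
    by_contra hne'
    have hTlt : T < 2 * s₁ := lt_of_le_of_ne hTle hne'
    have hpersub : Function.Periodic u (2 * s₁ - T) := hper2.sub_period hper
    have h1 : T ≤ 2 * s₁ - T := hmin _ (by linarith) hpersub
    have h2 : T ≤ s₁ := by linarith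
    have h3 : s₁ ≤ T := by
      rcases lt_or_ge T s₁ with h | h
      · exact absurd hTz (ne_of_lt (hnozero T hT h))
      · exact h
    have h4 : T = s₁ := le_antisymm h2 h3
    have : u T = α := by
      have := hper 0
      rw [zero_add, hu0] at this
      exact this
    rw [h4] at this
    linarith
  have hhalf : T / 2 = s₁ := by linarith
  rw [hhalf]
  refine ⟨hs₁crit, hnozero, ?_⟩
  exact crit_below hn hα hSol hu0 hu0' hupos hs₁crit hus₁


end Main

set_option maxHeartbeats 1600000 in
/-- Main lemma: continuity of the minimal period. -/
lemma tau_cont {τ : ℝ → ℝ} {u : ℝ → ℝ → ℝ}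
    (hsol : ∀ α ∈ Ioo (q0 n) 1,
      Sol n (u α) ∧ u α 0 = α ∧ deriv (u α) 0 = 0 ∧ ∀ t, 0 < u α t)
    (hτ : ∀ α ∈ Ioo (q0 n) 1, 0 < τ α ∧ Function.Periodic (u α) (τ α) ∧
      ∀ T, 0 < T → Function.Periodic (u α) T → τ α ≤ T) :
    ContinuousOn τ (Ioo (q0 n) 1) := by
  rw [Metric.continuousOn_iff]
  intro αs hαs ε hε
  -- data for the base point
  obtain ⟨SolW, hw0, hw0', hwpos⟩ := hsol αs hαs
  obtain ⟨hTpos, hperW, hminW⟩ := hτ αs hαs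
  set w := u αs with hw
  set ss : ℝ := τ αs / 2 with hss
  have hsspos : 0 < ss := by rw [hss]; linarith
  obtain ⟨hcritW, hnegW, hbelowW⟩ :=
    half_period hn hαs SolW hw0 hw0' hwpos hTpos hperW hminW
  obtain ⟨hwd1, hwd2, hwc2⟩ := reg SolW.1
  set βs : ℝ := w ss with hβs
  have hβpos : 0 < βs := hwpos ss
  have hfoβ : 0 < fo n βs := fo_pos hn hβpos hbelowW
  have hrw : ∀ t, w t ∈ Icc (0:ℝ) 1 := confine hn hαs SolW hw0 hw0' hwpos
  -- the level q strictly between q0 and αs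
  set q : ℝ := (q0 n + αs) / 2 with hq
  have hq1 : q0 n < q := by rw [hq]; have := hαs.1; linarith
  have hq2 : q < αs := by rw [hq]; have := hαs.1; linarith
  set ηq : ℝ := (αs - q) / 2 with hηq
  have hηqpos : 0 < ηq := by rw [hηq]; linarith
  -- ρ : near 0, w stays above q + ηq
  obtain ⟨ρ₀, hρ₀pos, hρ₀⟩ := Metric.continuousAt_iff.mp (hwd1.continuous.continuousAt (x := 0)) ηq hηqpos
  set ρ : ℝ := min (ρ₀ / 2) (ss / 2) with hρ
  have hρpos : 0 < ρ := lt_min (by linarith) (by linarith)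
  have hρw : ∀ t ∈ Icc (0:ℝ) ρ, q + ηq < w t := by
    intro t ht
    have h1 : dist t 0 < ρ₀ := by
      rw [Real.dist_eq, sub_zero, abs_of_nonneg ht.1]
      calc t ≤ ρ := ht.2
      _ ≤ ρ₀ / 2 := min_le_left _ _
      _ < ρ₀ := by linarith
    have h2 := hρ₀ h1
    rw [Real.dist_eq, hw0] at h2
    have := abs_lt.mp h2
    rw [hηq]
    linarith [this.1]
  -- r : the window around βs where fo is comparable to fo βs
  obtain ⟨r₀, hr₀pos, hr₀⟩ := Metric.continuousAt_iff.mp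
    ((continuous_fo hn).continuousAt (x := βs)) (fo n βs / 8) (by linarith)
  set r : ℝ := r₀ / 2 with hr
  have hrpos : 0 < r := by rw [hr]; linarith
  have hfo_win : ∀ y, |y - βs| ≤ r → 7/8 * fo n βs < fo n y ∧ fo n y < 9/8 * fo n βs := by
    intro y hy
    have h1 : dist y βs < r₀ := by rw [Real.dist_eq]; rw [hr] at hy; linarith
    have h2 := hr₀ h1
    rw [Real.dist_eq] at h2
    have := abs_lt.mp h2
    constructor <;> linarith [this.1, this.2]
  -- time window near ss where w is close to βs
  obtain ⟨ε₃, hε₃pos, hε₃⟩ := Metric.continuousAt_iff.mp (hwd1.continuous.continuousAt (x := ss))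
    (r / 2) (by linarith)
  -- choose ε₂
  set ε₂ : ℝ := min (min (ε / 4) (ss / 4)) (min 1 (ε₃ / 2)) with hε₂
  have hε₂pos : 0 < ε₂ := by
    apply lt_min (lt_min (by linarith) (by linarith)) (lt_min one_pos (by linarith))
  have hε₂ε : ε₂ ≤ ε / 4 := le_trans (min_le_left _ _) (min_le_left _ _)
  have hε₂ss : ε₂ ≤ ss / 4 := le_trans (min_le_left _ _) (min_le_right _ _)
  have hε₂one : ε₂ ≤ 1 := le_trans (min_le_right _ _) (min_le_left _ _)
  have hε₂ε₃ : ε₂ ≤ ε₃ / 2 := le_trans (min_le_right _ _) (min_le_right _ _)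
  have hw_win : ∀ t, |t - ss| ≤ ε₂ → |w t - βs| < r / 2 := by
    intro t ht
    have h1 : dist t ss < ε₃ := by rw [Real.dist_eq]; linarith
    have h2 := hε₃ h1
    rwa [Real.dist_eq] at h2
  have hρss : ρ ≤ ss - ε₂ := by
    have h1 : ρ ≤ ss / 2 := min_le_right _ _
    linarith
  -- c₁ : maximum of w' on [ρ, ss - ε₂] is negative
  obtain ⟨tm, htm, htmax'⟩ := (isCompact_Icc (a := ρ) (b := ss - ε₂)).exists_isMaxOn
    (nonempty_Icc.mpr hρss) (hwd2.continuous.continuousOn)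
  have htmax : ∀ x ∈ Icc ρ (ss - ε₂), deriv w x ≤ deriv w tm := fun x hx => htmax' hx
  set c₁ : ℝ := deriv w tm with hc₁
  have hc₁neg : c₁ < 0 := by
    apply hnegW tm (lt_of_lt_of_le hρpos htm.1)
    calc tm ≤ ss - ε₂ := htm.2
    _ < ss := by linarith
  -- choose δ'
  set δ' : ℝ := min (min ηq (-c₁ / 2)) (min (r / 2) (fo n βs * ε₂ / 2)) with hδ'
  have hδ'pos : 0 < δ' := by
    apply lt_min (lt_min hηqpos (by linarith)) (lt_min (by linarith) (by positivity))
  have hδ'ηq : δ' ≤ ηq := le_trans (min_le_left _ _) (min_le_left _ _)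
  have hδ'c₁ : δ' ≤ -c₁ / 2 := le_trans (min_le_left _ _) (min_le_right _ _)
  have hδ'r : δ' ≤ r / 2 := le_trans (min_le_right _ _) (min_le_left _ _)
  have hδ'β : δ' ≤ fo n βs * ε₂ / 2 := le_trans (min_le_right _ _) (min_le_right _ _)
  -- choose δα
  set δα : ℝ := δ' / Real.exp (Kc n * (ss + 1)) with hδα
  have hδαpos : 0 < δα := div_pos hδ'pos (Real.exp_pos _)
  refine ⟨δα, hδαpos, ?_⟩
  intro α hα hdist
  -- data for the nearby point
  obtain ⟨SolV, hv0, hv0', hvpos⟩ := hsol α hα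
  obtain ⟨hTvpos, hperV, hminV⟩ := hτ α hα
  set v := u α with hv
  obtain ⟨hcritV, hnegV, hbelowV⟩ :=
    half_period hn hα SolV hv0 hv0' hvpos hTvpos hperV hminV
  obtain ⟨hvd1, hvd2, hvc2⟩ := reg SolV.1
  have hrv : ∀ t, v t ∈ Icc (0:ℝ) 1 := confine hn hα SolV hv0 hv0' hvpos
  set sv : ℝ := τ α / 2 with hsv
  have hsvpos : 0 < sv := by rw [hsv]; linarith
  -- Gronwall comparison on [0, ss + 1]
  have hD : max |v 0 - w 0| |deriv v 0 - deriv w 0| ≤ |α - αs| := by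
    rw [hv0, hw0, hv0', hw0']
    simp
  have hgrow := growth hn SolV SolW hrv hrw (b := ss + 1) (by linarith) hD
  have hG : ∀ t ∈ Icc (0:ℝ) (ss + 1), |v t - w t| < δ' ∧ |deriv v t - deriv w t| < δ' := by
    intro t ht
    obtain ⟨h1, h2⟩ := hgrow t ht
    have hexp : Real.exp (Kc n * t) ≤ Real.exp (Kc n * (ss + 1)) := by
      apply Real.exp_le_exp.mpr
      apply mul_le_mul_of_nonneg_left ht.2 (le_of_lt (Kc_pos (n := n)))
    have hkey : |α - αs| * Real.exp (Kc n * t) < δ' := by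
      calc |α - αs| * Real.exp (Kc n * t) ≤ |α - αs| * Real.exp (Kc n * (ss + 1)) :=
            mul_le_mul_of_nonneg_left hexp (abs_nonneg _)
      _ < δα * Real.exp (Kc n * (ss + 1)) := by
            apply mul_lt_mul_of_pos_right _ (Real.exp_pos _)
            rwa [Real.dist_eq] at hdist
      _ = δ' := by rw [hδα]; field_simp
    exact ⟨lt_of_le_of_lt h1 hkey, lt_of_le_of_lt h2 hkey⟩
  -- Claim A : v' < 0 on (0, ss - ε₂]
  have claimA : ∀ t, 0 < t → t ≤ ss - ε₂ → deriv v t < 0 := by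
    intro t ht hts
    rcases le_or_gt t ρ with hcase | hcase
    · -- small-time argument : v stays above q, so v'' < 0
      have hvq : ∀ x ∈ Icc (0:ℝ) ρ, q < v x := by
        intro x hx
        have h1 := (hG x ⟨hx.1, by linarith [hx.2, hρss, hε₂one]⟩).1
        have h2 := hρw x hx
        have := abs_lt.mp h1
        linarith [this.1, hδ'ηq]
      have hanti : StrictAntiOn (deriv v) (Icc 0 ρ) := by
        apply strictAntiOn_of_deriv_neg (convex_Icc _ _) (hvd2.continuous.continuousOn)
        intro x hx
        rw [interior_Icc] at hx
        rw [SolV.2 x]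
        exact fo_neg hn (lt_trans hq1 (hvq x ⟨le_of_lt hx.1, le_of_lt hx.2⟩))
      have := hanti ⟨le_refl 0, le_of_lt hρpos⟩ ⟨le_of_lt ht, hcase⟩ ht
      rwa [hv0'] at this
    · -- bulk argument : w' ≤ c₁ < 0 and v' close to w'
      have h1 : deriv w t ≤ c₁ := htmax t ⟨le_of_lt hcase, hts⟩
      have h2 := (hG t ⟨le_of_lt ht, by linarith [hε₂one]⟩).2
      have := abs_lt.mp h2
      linarith [this.2, hδ'c₁]
  -- consequence : sv > ss - ε₂
  have hlower : ss - ε₂ < sv := by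
    by_contra hle
    push_neg at hle
    exact absurd hcritV (ne_of_lt (claimA sv hsvpos hle))
  -- Claim B : sv ≤ ss + ε₂
  have hupper : sv ≤ ss + ε₂ := by
    by_contra hgt
    push_neg at hgt
    -- then v' < 0 on the whole window
    have hvneg : ∀ t, 0 < t → t ≤ ss + ε₂ → deriv v t < 0 := by
      intro t ht hts
      exact hnegV t ht (lt_of_le_of_lt hts hgt)
    -- window membership facts
    have hwinJ : ∀ t, ss - ε₂ ≤ t → t ≤ ss + ε₂ → |v t - βs| < r := by
      intro t h1 h2
      have hm : |t - ss| ≤ ε₂ := abs_le.mpr ⟨by linarith, by linarith⟩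
      have h3 := hw_win t hm
      have h4 := (hG t ⟨by linarith [hsspos, hε₂ss], by linarith [hε₂one]⟩).1
      have h5 := abs_lt.mp h3
      have h6 := abs_lt.mp h4
      apply abs_lt.mpr
      constructor <;> [linarith [hδ'r]; linarith [hδ'r]]
    have hwinW : ∀ t, ss - ε₂ ≤ t → t ≤ ss + ε₂ → |w t - βs| < r := by
      intro t h1 h2
      have hm : |t - ss| ≤ ε₂ := abs_le.mpr ⟨by linarith, by linarith⟩
      have h3 := hw_win t hm
      have := abs_lt.mp h3
      apply abs_lt.mpr
      exact ⟨by linarith, by linarith⟩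
    -- bound w' (ss - ε₂) from below via MVT on [ss - ε₂, ss]
    have hMVT1 : ∃ ξ ∈ Ioo (ss - ε₂) ss, deriv (deriv w) ξ
        = (deriv w ss - deriv w (ss - ε₂)) / (ss - (ss - ε₂)) := by
      apply exists_deriv_eq_slope (deriv w) (by linarith)
        (hwd2.continuous.continuousOn)
        (fun x _ => (hwd2 x).differentiableWithinAt)
    obtain ⟨ξ, hξ, hξeq⟩ := hMVT1
    have hξwin : fo n (w ξ) < 9/8 * fo n βs := by
      apply (hfo_win (w ξ) (le_of_lt (hwinW ξ (le_of_lt hξ.1) (by linarith [hξ.2])))).2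
    rw [SolW.2 ξ] at hξeq
    have hwder : deriv w ss = 0 := hcritW
    have hε₂ne : ss - (ss - ε₂) = ε₂ := by ring
    rw [hwder, hε₂ne] at hξeq
    have hwlow : -(9/8 * fo n βs) * ε₂ < deriv w (ss - ε₂) := by
      have h7 : (0 - deriv w (ss - ε₂)) / ε₂ < 9/8 * fo n βs := by rw [← hξeq]; exact hξwin
      have h8 := (div_lt_iff₀ hε₂pos).mp h7
      linarith
    -- v' at ss - ε₂
    have hvlow : -(9/8 * fo n βs) * ε₂ - δ' < deriv v (ss - ε₂) := by
      have h2 := (hG (ss - ε₂) ⟨by linarith [hsspos, hε₂ss], by linarith [hε₂one]⟩).2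
      have := abs_lt.mp h2
      linarith [this.1]
    -- MVT on [ss - ε₂, ss + ε₂] for v'
    have hMVT2 : ∃ ξ' ∈ Ioo (ss - ε₂) (ss + ε₂), deriv (deriv v) ξ'
        = (deriv v (ss + ε₂) - deriv v (ss - ε₂)) / (ss + ε₂ - (ss - ε₂)) := by
      apply exists_deriv_eq_slope (deriv v) (by linarith)
        (hvd2.continuous.continuousOn)
        (fun x _ => (hvd2 x).differentiableWithinAt)
    obtain ⟨ξ', hξ', hξ'eq⟩ := hMVT2
    have hξ'win : 7/8 * fo n βs < fo n (v ξ') := by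
      apply (hfo_win (v ξ') (le_of_lt (hwinJ ξ' (le_of_lt hξ'.1) (le_of_lt hξ'.2)))).1
    rw [SolV.2 ξ'] at hξ'eq
    have h2ε : ss + ε₂ - (ss - ε₂) = 2 * ε₂ := by ring
    rw [h2ε] at hξ'eq
    have hslope : 7/8 * fo n βs < (deriv v (ss + ε₂) - deriv v (ss - ε₂)) / (2 * ε₂) := by
      rw [← hξ'eq]; exact hξ'win
    have h9 := (lt_div_iff₀ (by linarith : (0:ℝ) < 2 * ε₂)).mp hslope
    have hPpos : 0 < fo n βs * ε₂ := mul_pos hfoβ hε₂pos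
    have hfinal : 0 < deriv v (ss + ε₂) := by
      linarith [h9, hvlow, hδ'β, hPpos]
    have := hvneg (ss + ε₂) (by linarith [hsspos]) (le_refl _)
    linarith
  -- conclusion
  rw [Real.dist_eq]
  have h1 : τ α = 2 * sv := by rw [hsv]; ring
  have h2 : τ αs = 2 * ss := by rw [hss]; ring
  rw [abs_lt]
  constructor
  · linarith [hε₂ε, hε, hlower, h1, h2]
  · linarith [hε₂ε, hε, hupper, h1, h2]


end PeriodAux

end PeriodAux

/-- For `n ≥ 3`, `N = 2n/(n-2)`, `u₀ = ((n-2)/n)^((n-2)/4)`, and the family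
`u_α` of positive non-constant periodic solutions of `4u'' - (n-2)²u + n(n-2)u^(N-1) = 0`
with `u_α(0) = α`, `u_α'(0) = 0` for `α ∈ (u₀,1)`, the minimal positive period `τ(α)` is a
continuous function of `α` on `(u₀,1)`. -/
theorem period_function_continuous
    (n : ℕ) (hn : 3 ≤ n) (N : ℝ) (hN : N = 2 * (n : ℝ) / ((n : ℝ) - 2))
    (u₀ : ℝ) (hu₀ : u₀ = (((n : ℝ) - 2) / (n : ℝ)) ^ (((n : ℝ) - 2) / 4))
    (u : ℝ → ℝ → ℝ) (τ : ℝ → ℝ)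
    (hsol : ∀ α ∈ Ioo u₀ 1,
      ContDiff ℝ 2 (u α) ∧ u α 0 = α ∧ deriv (u α) 0 = 0 ∧
      ∀ t : ℝ, 4 * deriv (deriv (u α)) t - ((n : ℝ) - 2) ^ 2 * u α t
          + (n : ℝ) * ((n : ℝ) - 2) * u α t ^ (N - 1) = 0)
    (hpos : ∀ α ∈ Ioo u₀ 1, ∀ t : ℝ, 0 < u α t)
    (hnc : ∀ α ∈ Ioo u₀ 1, ∃ t₁ t₂ : ℝ, u α t₁ ≠ u α t₂)
    (hτ : ∀ α ∈ Ioo u₀ 1,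
      0 < τ α ∧ Function.Periodic (u α) (τ α) ∧
      ∀ T : ℝ, 0 < T → Function.Periodic (u α) T → τ α ≤ T) :
    ContinuousOn τ (Ioo u₀ 1) := by
  subst hN hu₀
  have hq0 : (((n : ℝ) - 2) / (n : ℝ)) ^ (((n : ℝ) - 2) / 4) = PeriodAux.q0 n := rfl
  rw [hq0] at hsol hpos hτ ⊢
  apply PeriodAux.tau_cont hn (τ := τ) (u := u) ?_ ?_
  · intro α hα
    obtain ⟨h2, h0, h0', hode⟩ := hsol α hα
    refine ⟨⟨h2, ?_⟩, h0, h0', fun t => hpos α hα t⟩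
    intro t
    show deriv (deriv (u α)) t = PeriodAux.fo n (u α t)
    simp only [PeriodAux.fo, PeriodAux.pc, PeriodAux.pN]
    linarith [hode t]
  · intro α hα
    exact hτ α hα
end

section
/- Fix an integer n ≥ 3, set N = 2n/(n-2) and u₀ = ((n-2)/n)^((n-2)/4). For α ∈ (u₀, 1), let u_α : ℝ → ℝ be the unique solution of 4u'' - (n-2)²u + n(n-2)u^(N-1) = 0 with u_α(0) = α, u_α'(0) = 0, and let τ(α) denote its minimal positive period. Then τ(α) → +∞ as α → 1 from the left. -/
open Set Filter Real

private lemma energy_const {f : ℝ → ℝ} {a N : ℝ} (ha : 3 ≤ a) (hN : N = 2 * a / (a - 2))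
    (hf : ContDiff ℝ 2 f) (hfpos : ∀ t, 0 < f t)
    (hode : ∀ t : ℝ, 4 * deriv (deriv f) t - (a - 2) ^ 2 * f t
          + a * (a - 2) * f t ^ (N - 1) = 0) (t : ℝ) :
    2 * (deriv f t) ^ 2 + ((a - 2) ^ 2 / 2) * (f t) ^ N - ((a - 2) ^ 2 / 2) * (f t) ^ 2
      = 2 * (deriv f 0) ^ 2 + ((a - 2) ^ 2 / 2) * (f 0) ^ N - ((a - 2) ^ 2 / 2) * (f 0) ^ 2 := by
  have ha2 : (0:ℝ) < a - 2 := by linarith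
  have hdiff : Differentiable ℝ f ∧ Differentiable ℝ (deriv f) := by
    have h2 : (2 : WithTop ℕ∞) = 1 + 1 := by norm_num
    rw [h2, contDiff_succ_iff_deriv] at hf
    exact ⟨hf.1, hf.2.2.differentiable one_ne_zero⟩
  set E : ℝ → ℝ := fun s => 2 * (deriv f s) ^ 2 + ((a - 2) ^ 2 / 2) * (f s) ^ N
      - ((a - 2) ^ 2 / 2) * (f s) ^ 2 with hE
  have key : ∀ s, HasDerivAt E 0 s := by
    intro s
    have hfs : HasDerivAt f (deriv f s) s := (hdiff.1 s).hasDerivAt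
    have hfs' : HasDerivAt (deriv f) (deriv (deriv f) s) s := (hdiff.2 s).hasDerivAt
    have hP : HasDerivAt (fun y => f y ^ N) (deriv f s * N * f s ^ (N - 1)) s :=
      hfs.rpow_const (Or.inl (hfpos s).ne')
    have hQ : HasDerivAt (fun y => f y ^ 2) ((2 : ℕ) * f s ^ 1 * deriv f s) s := hfs.pow 2
    have hR : HasDerivAt (fun y => (deriv f y) ^ 2)
        ((2 : ℕ) * deriv f s ^ 1 * deriv (deriv f) s) s := hfs'.pow 2
    have hcomb := ((hR.const_mul (2:ℝ)).add (hP.const_mul ((a - 2) ^ 2 / 2))).sub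
        (hQ.const_mul ((a - 2) ^ 2 / 2))
    refine hcomb.congr_deriv (Eq.symm ?_)
    have h := hode s
    have hcN : (a - 2) ^ 2 / 2 * N = a * (a - 2) := by
      rw [hN]; field_simp
    push_cast
    linear_combination (-(deriv f s)) * h - (deriv f s * f s ^ (N - 1)) * hcN
  have := is_const_of_deriv_eq_zero (fun x => (key x).differentiableAt)
      (fun x => (key x).deriv) t 0
  simpa [hE] using this

private lemma u0_facts {a N u₀ : ℝ} (ha : 3 ≤ a) (hN : N = 2 * a / (a - 2))
    (hu₀ : u₀ = ((a - 2) / a) ^ ((a - 2) / 4)) :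
    0 < u₀ ∧ u₀ < 1 ∧ u₀ ^ (N - 2) = (a - 2) / a ∧ 2 < N := by
  have ha2 : (0:ℝ) < a - 2 := by linarith
  have ha0 : (0:ℝ) < a := by linarith
  have hb : 0 < (a - 2) / a := div_pos ha2 ha0
  have hb1 : (a - 2) / a < 1 := (div_lt_one ha0).2 (by linarith)
  refine ⟨?_, ?_, ?_, ?_⟩
  · rw [hu₀]; exact Real.rpow_pos_of_pos hb _
  · rw [hu₀]; exact Real.rpow_lt_one hb.le hb1 (by positivity)
  · rw [hu₀, ← Real.rpow_mul hb.le]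
    have h1 : (a - 2) / 4 * (N - 2) = 1 := by
      rw [hN]; field_simp; ring
    rw [h1, Real.rpow_one]
  · have h2 : N - 2 = 4 / (a - 2) := by rw [hN]; field_simp; ring
    have : (0:ℝ) < 4 / (a - 2) := by positivity
    linarith

private lemma G_strictMonoOn {a N u₀ : ℝ} (ha : 3 ≤ a) (hN : N = 2 * a / (a - 2))
    (hu₀ : u₀ = ((a - 2) / a) ^ ((a - 2) / 4)) :
    StrictMonoOn (fun x : ℝ => x ^ N - x ^ 2) (Icc u₀ 1) := by
  obtain ⟨h0, h1, hpow, hN2⟩ := u0_facts ha hN hu₀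
  have ha0 : (0:ℝ) < a := by linarith
  apply strictMonoOn_of_deriv_pos (convex_Icc _ _)
  · apply ContinuousOn.sub
    · exact ContinuousOn.rpow_const continuousOn_id
        (fun x hx => Or.inl (ne_of_gt (lt_of_lt_of_le h0 hx.1)))
    · exact (continuous_pow 2).continuousOn
  · intro x hx
    rw [interior_Icc] at hx
    have ha2 : (0:ℝ) < a - 2 := by linarith
    have hane : a ≠ 0 := ha0.ne'
    have ha2ne : a - 2 ≠ 0 := ha2.ne'
    have hx0 : 0 < x := h0.trans hx.1
    have hd : HasDerivAt (fun x : ℝ => x ^ N - x ^ 2)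
        (N * x ^ (N - 1) - (2:ℕ) * x ^ 1) x :=
      (Real.hasDerivAt_rpow_const (Or.inl hx0.ne')).sub (hasDerivAt_pow 2 x)
    rw [hd.deriv]
    have hxN2 : u₀ ^ (N - 2) < x ^ (N - 2) :=
      Real.rpow_lt_rpow h0.le hx.1 (by linarith)
    have hgt : (a - 2) / a < x ^ (N - 2) := hpow ▸ hxN2
    have hsplit : x ^ (N - 1) = x * x ^ (N - 2) := by
      rw [show N - 1 = 1 + (N - 2) by ring, Real.rpow_add hx0, Real.rpow_one]
    have hNpos : 0 < N := by linarith
    have hkey : N * x * ((a - 2) / a) < N * x * x ^ (N - 2) :=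
      mul_lt_mul_of_pos_left hgt (mul_pos hNpos hx0)
    have h2x : N * ((a - 2) / a) = 2 := by
      rw [hN]; field_simp
    push_cast
    rw [pow_one, hsplit]
    nlinarith [hkey, h2x]

private lemma rpow_lt_sq {x N : ℝ} (h0 : 0 < x) (h1 : x < 1) (hN : 2 < N) :
    x ^ N < x ^ (2:ℕ) := by
  have h := Real.rpow_lt_rpow_of_exponent_gt h0 h1 hN
  rwa [show ((2:ℝ) : ℝ) = ((2:ℕ) : ℝ) by norm_num, Real.rpow_natCast] at h

private lemma tendsto_part {a N u₀ : ℝ} (ha : 3 ≤ a) (hN2 : 2 < N)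
    (hu₀0 : 0 < u₀) (hu₀1 : u₀ < 1) :
    Tendsto (fun α : ℝ => (Real.log u₀ -
        Real.log (Real.sqrt ((a / 2) * (α ^ 2 - α ^ N)))) / a)
      (nhdsWithin 1 (Ioo u₀ 1)) atTop := by
  have ha0 : (0:ℝ) < a := by linarith
  have h1 : Tendsto (fun α : ℝ => (a / 2) * (α ^ 2 - α ^ N))
      (nhdsWithin 1 (Ioo u₀ 1)) (nhdsWithin 0 (Ioi 0)) := by
    rw [tendsto_nhdsWithin_iff]
    constructor
    · have hc : ContinuousAt (fun α : ℝ => (a / 2) * (α ^ 2 - α ^ N)) 1 := by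
        apply ContinuousAt.mul continuousAt_const
        exact ((continuous_pow 2).continuousAt).sub
          (Real.continuousAt_rpow_const 1 N (Or.inl one_ne_zero))
      have hval : (a / 2) * ((1:ℝ) ^ 2 - (1:ℝ) ^ N) = 0 := by
        simp [Real.one_rpow]
      have h5 : Tendsto (fun α : ℝ => (a / 2) * (α ^ 2 - α ^ N))
          (nhdsWithin 1 (Ioo u₀ 1)) (nhds ((a / 2) * ((1:ℝ) ^ 2 - (1:ℝ) ^ N))) :=
        hc.tendsto.mono_left nhdsWithin_le_nhds
      rwa [hval] at h5
    · filter_upwards [self_mem_nhdsWithin] with α hα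
      have hs := rpow_lt_sq (hu₀0.trans hα.1) hα.2 hN2
      have : (0:ℝ) < α ^ 2 - α ^ N := by simpa using sub_pos.2 hs
      exact mem_Ioi.2 (by positivity)
  have h2 : Tendsto (fun α : ℝ => Real.sqrt ((a / 2) * (α ^ 2 - α ^ N)))
      (nhdsWithin 1 (Ioo u₀ 1)) (nhdsWithin 0 (Ioi 0)) := by
    rw [tendsto_nhdsWithin_iff] at h1 ⊢
    constructor
    · have := (Real.continuous_sqrt.tendsto 0).comp h1.1
      simpa [Function.comp_def] using this
    · filter_upwards [h1.2] with α hα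
      exact mem_Ioi.2 (Real.sqrt_pos.2 hα)
  have h3 := Real.tendsto_log_nhdsGT_zero.comp h2
  have h4 : Tendsto (fun α : ℝ =>
      Real.log u₀ - Real.log (Real.sqrt ((a / 2) * (α ^ 2 - α ^ N))))
      (nhdsWithin 1 (Ioo u₀ 1)) atTop := by
    have := tendsto_atTop_add_const_left _ (Real.log u₀)
      (tendsto_neg_atBot_atTop.comp h3)
    simpa [Function.comp, sub_eq_add_neg] using this
  exact h4.atTop_div_const ha0

private lemma le_of_sq_le_sq' {x y : ℝ} (hx : 0 ≤ x) (hy : 0 < y) (h : x ^ 2 ≤ y ^ 2) :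
    x ≤ y := by nlinarith

private lemma gronwall_aux {g g' : ℝ → ℝ} {K t₀ T : ℝ}
    (hder : ∀ t, HasDerivAt g (g' t) t) (hgnn : ∀ t, 0 ≤ g t)
    (hb : ∀ t ∈ Ico t₀ T, |g' t| ≤ K * g t) (hle : t₀ ≤ T) :
    g T ≤ g t₀ * Real.exp (K * (T - t₀)) := by
  have hdiffg : Differentiable ℝ g := fun t => (hder t).differentiableAt
  have h := norm_le_gronwallBound_of_norm_deriv_right_le (f := g) (f' := g')
    (δ := ‖g t₀‖) (K := K) (ε := 0) (a := t₀) (b := T)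
    hdiffg.continuous.continuousOn (fun t _ => (hder t).hasDerivWithinAt) le_rfl
    (fun t ht => by
      rw [Real.norm_eq_abs, Real.norm_eq_abs, abs_of_nonneg (hgnn t), add_zero]
      exact hb t ht)
    T ⟨hle, le_rfl⟩
  rw [gronwallBound_ε0, Real.norm_eq_abs, Real.norm_eq_abs, abs_of_nonneg (hgnn T),
    abs_of_nonneg (hgnn t₀)] at h
  exact h

set_option maxHeartbeats 2000000 in
/-- In the setting of the period function `τ` for
`4u'' - (n-2)²u + n(n-2)u^(N-1) = 0`, one has `τ(α) → +∞` as `α → 1⁻` (within the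
domain `(u₀,1)`). -/
theorem period_function_tendsto_atTop
    (n : ℕ) (hn : 3 ≤ n) (N : ℝ) (hN : N = 2 * (n : ℝ) / ((n : ℝ) - 2))
    (u₀ : ℝ) (hu₀ : u₀ = (((n : ℝ) - 2) / (n : ℝ)) ^ (((n : ℝ) - 2) / 4))
    (u : ℝ → ℝ → ℝ) (τ : ℝ → ℝ)
    (hsol : ∀ α ∈ Ioo u₀ 1,
      ContDiff ℝ 2 (u α) ∧ u α 0 = α ∧ deriv (u α) 0 = 0 ∧
      ∀ t : ℝ, 4 * deriv (deriv (u α)) t - ((n : ℝ) - 2) ^ 2 * u α t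
          + (n : ℝ) * ((n : ℝ) - 2) * u α t ^ (N - 1) = 0)
    (hpos : ∀ α ∈ Ioo u₀ 1, ∀ t : ℝ, 0 < u α t)
    (hnc : ∀ α ∈ Ioo u₀ 1, ∃ t₁ t₂ : ℝ, u α t₁ ≠ u α t₂)
    (hτ : ∀ α ∈ Ioo u₀ 1,
      0 < τ α ∧ Function.Periodic (u α) (τ α) ∧
      ∀ T : ℝ, 0 < T → Function.Periodic (u α) T → τ α ≤ T) :
    Filter.Tendsto τ (nhdsWithin 1 (Ioo u₀ 1)) Filter.atTop := by
  set a : ℝ := (n : ℝ) with ha_def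
  have ha : 3 ≤ a := by rw [ha_def]; exact_mod_cast hn
  obtain ⟨hu₀0, hu₀1, hu₀pow, hN2⟩ := u0_facts ha hN hu₀
  have ha2 : (0:ℝ) < a - 2 := by linarith
  have ha0 : (0:ℝ) < a := by linarith
  -- the key per-α lower bound
  have key : ∀ α ∈ Ioo u₀ 1,
      (Real.log u₀ - Real.log (Real.sqrt ((a / 2) * (α ^ 2 - α ^ N)))) / a ≤ τ α := by
    intro α hα
    obtain ⟨hf2, hf0, hd0, hode⟩ := hsol α hα
    obtain ⟨hτpos, hper, -⟩ := hτ α hα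
    set f : ℝ → ℝ := u α with hf_def
    have hfpos : ∀ t, 0 < f t := hpos α hα
    have hα0 : 0 < α := hu₀0.trans hα.1
    have hα1 : α < 1 := hα.2
    have hdiff : Differentiable ℝ f ∧ Differentiable ℝ (deriv f) := by
      have h2 : (2 : WithTop ℕ∞) = 1 + 1 := by norm_num
      have hf2' := hf2
      rw [h2, contDiff_succ_iff_deriv] at hf2'
      exact ⟨hf2'.1, hf2'.2.2.differentiable one_ne_zero⟩
    -- energy identity
    have hE : ∀ t, 2 * (deriv f t) ^ 2 + ((a - 2) ^ 2 / 2) * (f t) ^ N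
        - ((a - 2) ^ 2 / 2) * (f t) ^ 2
        = ((a - 2) ^ 2 / 2) * α ^ N - ((a - 2) ^ 2 / 2) * α ^ 2 := by
      intro t
      have h := energy_const ha hN hf2 hfpos hode t
      rw [hf0, hd0] at h
      linarith [h]
    have hαN : α ^ N < α ^ 2 := rpow_lt_sq hα0 hα1 hN2
    have hcpos : (0:ℝ) < (a - 2) ^ 2 / 2 := by positivity
    -- the solution stays below 1
    have hf1 : ∀ t, f t < 1 := by
      intro t
      by_contra hge
      push_neg at hge
      have h := hE t
      have h2 : f t ^ 2 ≤ f t ^ N := by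
        calc f t ^ 2 = f t ^ ((2:ℕ) : ℝ) := (Real.rpow_natCast _ 2).symm
        _ ≤ f t ^ N := Real.rpow_le_rpow_of_exponent_le hge (by push_cast; linarith)
      linarith [h, sq_nonneg (deriv f t), mul_lt_mul_of_pos_left hαN hcpos,
        mul_le_mul_of_nonneg_left h2 hcpos.le]
    have hfN1 : ∀ t, f t ^ (N - 1) ≤ f t := by
      intro t
      have h := Real.rpow_le_rpow_of_exponent_ge (hfpos t) (hf1 t).le
        (by linarith : (1:ℝ) ≤ N - 1)
      rwa [Real.rpow_one] at h
    -- second derivative bound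
    have hd2 : ∀ t, |deriv (deriv f) t| ≤ a ^ 2 * f t := by
      intro t
      have h := hode t
      have h1 := hfN1 t
      have h2 := hfpos t
      have h3 : (0:ℝ) ≤ f t ^ (N - 1) := (Real.rpow_pos_of_pos h2 _).le
      have ha9 : 3 * a ≤ a ^ 2 := by
        have := mul_le_mul_of_nonneg_left ha ha0.le
        linarith [this]
      have hb1 : (a - 2) ^ 2 * f t ≤ 4 * a ^ 2 * f t := by
        have hq : (a - 2) ^ 2 ≤ 4 * a ^ 2 := by linarith [ha9]
        have := mul_le_mul_of_nonneg_right hq h2.le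
        linarith [this]
      have hb2 : (0:ℝ) ≤ a * (a - 2) * f t ^ (N - 1) := by positivity
      have hb3 : a * (a - 2) * f t ^ (N - 1) ≤ a * (a - 2) * f t :=
        mul_le_mul_of_nonneg_left h1 (by positivity)
      have hb4 : a * (a - 2) * f t ≤ 4 * a ^ 2 * f t := by
        have hq : a * (a - 2) ≤ 4 * a ^ 2 := by linarith [ha9]
        have := mul_le_mul_of_nonneg_right hq h2.le
        linarith [this]
      have hb5 : (0:ℝ) ≤ (a - 2) ^ 2 * f t := by positivity
      rw [abs_le]
      constructor
      · linarith [h, hb3, hb4, hb5]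
      · linarith [h, hb1, hb2]
    -- minimum of f on a period
    obtain ⟨t₀, ht₀mem, ht₀min⟩ := isCompact_Icc.exists_isMinOn
      (nonempty_Icc.2 hτpos.le) hf2.continuous.continuousOn
    have hglobal : ∀ s, f t₀ ≤ f s := by
      intro s
      obtain ⟨y, hy, hsy⟩ := hper.exists_mem_Ico₀ hτpos s
      rw [hsy]
      exact isMinOn_iff.mp ht₀min y (Ico_subset_Icc_self hy)
    obtain ⟨t₁, ht₁mem, ht₁max⟩ := isCompact_Icc.exists_isMaxOn
      (nonempty_Icc.2 hτpos.le) hf2.continuous.continuousOn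
    have hglobmax : ∀ s, f s ≤ f t₁ := by
      intro s
      obtain ⟨y, hy, hsy⟩ := hper.exists_mem_Ico₀ hτpos s
      rw [hsy]
      exact isMaxOn_iff.mp ht₁max y (Ico_subset_Icc_self hy)
    set β : ℝ := f t₀ with hβ_def
    set M : ℝ := f t₁ with hM_def
    have hβpos : 0 < β := hfpos t₀
    have hβα : β ≤ α := by have h := hglobal 0; rwa [hf0] at h
    have hαM : α ≤ M := by have h := hglobmax 0; rwa [hf0] at h
    have hd0t₀ : deriv f t₀ = 0 := by
      have hloc : IsLocalMin f t₀ := Filter.Eventually.of_forall hglobal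
      exact hloc.deriv_eq_zero
    have hd0t₁ : deriv f t₁ = 0 := by
      have hloc : IsLocalMax f t₁ := Filter.Eventually.of_forall hglobmax
      exact hloc.deriv_eq_zero
    -- energy at the extrema
    have hGβ : β ^ N - β ^ 2 = α ^ N - α ^ 2 := by
      have h := hE t₀
      rw [hd0t₀] at h
      have h' : ((a-2)^2/2) * (β ^ N - β ^ 2) = ((a-2)^2/2) * (α ^ N - α ^ 2) := by
        ring_nf at h ⊢; linarith [h]
      exact mul_left_cancel₀ hcpos.ne' h'
    have hGM : M ^ N - M ^ 2 = α ^ N - α ^ 2 := by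
      have h := hE t₁
      rw [hd0t₁] at h
      have h' : ((a-2)^2/2) * (M ^ N - M ^ 2) = ((a-2)^2/2) * (α ^ N - α ^ 2) := by
        ring_nf at h ⊢; linarith [h]
      exact mul_left_cancel₀ hcpos.ne' h'
    have hmono := G_strictMonoOn ha hN hu₀
    -- β < α
    have hβlt : β < α := by
      rcases lt_or_eq_of_le hβα with h | h
      · exact h
      · exfalso
        have hM1 : M < 1 := hf1 t₁
        have hMIcc : M ∈ Icc u₀ 1 := ⟨hα.1.le.trans hαM, hM1.le⟩
        have hαIcc : α ∈ Icc u₀ 1 := ⟨hα.1.le, hα1.le⟩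
        have hMα : M = α := by
          apply hmono.injOn hMIcc hαIcc
          show M ^ N - M ^ 2 = α ^ N - α ^ 2
          rw [hGM]
        obtain ⟨s₁, s₂, hne⟩ := hnc α hα
        apply hne
        have e1 : ∀ s, f s = α := fun s =>
          le_antisymm (hMα ▸ hglobmax s) (h ▸ hglobal s)
        rw [show u α s₁ = f s₁ from rfl, show u α s₂ = f s₂ from rfl, e1 s₁, e1 s₂]
    -- β < u₀
    have hβu₀ : β < u₀ := by
      by_contra hge
      push_neg at hge
      have h1 : β ∈ Icc u₀ 1 := ⟨hge, (hf1 t₀).le⟩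
      have h2 : α ∈ Icc u₀ 1 := ⟨hα.1.le, hα1.le⟩
      have h3 := hmono h1 h2 hβlt
      exact absurd hGβ (ne_of_lt h3)
    -- bound on β²
    have hβN : β ^ N = β ^ 2 * β ^ (N - 2) := by
      rw [show N = ((2:ℕ):ℝ) + (N - 2) by push_cast; ring, Real.rpow_add hβpos,
        Real.rpow_natCast]
      ring_nf
    have hβpow : β ^ (N - 2) ≤ (a - 2) / a := by
      have h := Real.rpow_le_rpow hβpos.le hβu₀.le (by linarith : (0:ℝ) ≤ N - 2)
      rwa [hu₀pow] at h
    have hβsq : β ^ 2 ≤ (a / 2) * (α ^ 2 - α ^ N) := by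
      rw [hβN] at hGβ
      have k2 : a * (β ^ 2 * β ^ (N - 2)) ≤ β ^ 2 * (a - 2) := by
        have h := mul_le_mul_of_nonneg_left hβpow (sq_nonneg β)
        have h' := mul_le_mul_of_nonneg_left h ha0.le
        calc a * (β ^ 2 * β ^ (N - 2)) ≤ a * (β ^ 2 * ((a - 2) / a)) := h'
        _ = β ^ 2 * (a - 2) := by field_simp
      have hGβ' : a * (β ^ 2 * β ^ (N - 2) - β ^ 2) = a * (α ^ N - α ^ 2) := by
        rw [show β ^ 2 * β ^ (N - 2) - β ^ 2 = -(β ^ 2 - β ^ 2 * β ^ (N-2)) by ring,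
          show α ^ N - α ^ 2 = -(α ^ 2 - α ^ N) by ring]
        rw [show β ^ 2 - β ^ 2 * β ^ (N-2) = α ^ 2 - α ^ N by linarith [hGβ]]
      linarith [k2, hGβ']
    -- Gronwall estimate
    have hgderiv : ∀ t, HasDerivAt (fun s => (deriv f s) ^ 2 + a ^ 2 * (f s) ^ 2)
        (2 * deriv f t * deriv (deriv f) t + a ^ 2 * (2 * f t * deriv f t)) t := by
      intro t
      have hfs : HasDerivAt f (deriv f t) t := (hdiff.1 t).hasDerivAt
      have hfs' : HasDerivAt (deriv f) (deriv (deriv f) t) t := (hdiff.2 t).hasDerivAt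
      have h1 := hfs'.pow 2
      have h2 := (hfs.pow 2).const_mul (a ^ 2)
      refine (h1.add h2).congr_deriv (Eq.symm ?_)
      push_cast
      ring
    have hgnn : ∀ t, (0:ℝ) ≤ (deriv f t) ^ 2 + a ^ 2 * (f t) ^ 2 := by
      intro t
      positivity
    have hbound : ∀ t ∈ Ico t₀ (τ α),
        |2 * deriv f t * deriv (deriv f) t + a ^ 2 * (2 * f t * deriv f t)|
          ≤ (2 * a) * ((deriv f t) ^ 2 + a ^ 2 * (f t) ^ 2) := by
      intro t _
      have habs := abs_le.mp (hd2 t)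
      have hfp := hfpos t
      have hD2 : (deriv (deriv f) t) ^ 2 ≤ (a ^ 2 * f t) ^ 2 :=
        sq_le_sq' habs.1 habs.2
      have hV : |deriv f t| ^ 2 = deriv f t ^ 2 := sq_abs _
      have hV1 : deriv f t ≤ |deriv f t| := le_abs_self _
      have hV2 : -|deriv f t| ≤ deriv f t := neg_abs_le _
      have hkey : 2 * (a * f t) * |deriv f t| ≤ deriv f t ^ 2 + a ^ 2 * f t ^ 2 := by
        linarith [sq_nonneg (|deriv f t| - a * f t), hV]
      have hUD : 2 * deriv f t * deriv (deriv f) t ≤ 2 * |deriv f t| * (a ^ 2 * f t) := by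
        calc 2 * deriv f t * deriv (deriv f) t ≤ |2 * deriv f t * deriv (deriv f) t| :=
          le_abs_self _
        _ = 2 * |deriv f t| * |deriv (deriv f) t| := by
          rw [abs_mul, abs_mul, abs_of_nonneg (by norm_num : (0:ℝ) ≤ 2)]
        _ ≤ 2 * |deriv f t| * (a ^ 2 * f t) := by
          apply mul_le_mul_of_nonneg_left (hd2 t) (by positivity)
      have hUD2 : -(2 * |deriv f t| * (a ^ 2 * f t)) ≤ 2 * deriv f t * deriv (deriv f) t := by
        have h := hUD
        have h2' : -(2 * deriv f t * deriv (deriv f) t)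
            ≤ 2 * |deriv f t| * (a ^ 2 * f t) := by
          calc -(2 * deriv f t * deriv (deriv f) t)
              ≤ |2 * deriv f t * deriv (deriv f) t| := neg_le_abs _
          _ = 2 * |deriv f t| * |deriv (deriv f) t| := by
            rw [abs_mul, abs_mul, abs_of_nonneg (by norm_num : (0:ℝ) ≤ 2)]
          _ ≤ 2 * |deriv f t| * (a ^ 2 * f t) := by
            apply mul_le_mul_of_nonneg_left (hd2 t) (by positivity)
        linarith
      have hFU : a ^ 2 * (2 * f t * deriv f t) ≤ 2 * |deriv f t| * (a ^ 2 * f t) := by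
        have := mul_le_mul_of_nonneg_left hV1 (by positivity : (0:ℝ) ≤ 2 * (a ^ 2 * f t))
        linarith [this]
      have hFU2 : -(2 * |deriv f t| * (a ^ 2 * f t)) ≤ a ^ 2 * (2 * f t * deriv f t) := by
        have := mul_le_mul_of_nonneg_left hV2 (by positivity : (0:ℝ) ≤ 2 * (a ^ 2 * f t))
        linarith [this]
      have hsum : 4 * |deriv f t| * (a ^ 2 * f t)
          ≤ 2 * a * (deriv f t ^ 2 + a ^ 2 * f t ^ 2) := by
        have := mul_le_mul_of_nonneg_left hkey ha0.le
        linarith [this]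
      rw [abs_le]
      constructor
      · linarith
      · linarith
    have ht₀τ : t₀ ≤ τ α := ht₀mem.2
    have hgr := gronwall_aux hgderiv hgnn hbound ht₀τ
    have hfτ : f (τ α) = α := by
      have h := hper 0
      rwa [zero_add, hf0] at h
    rw [hfτ, hd0t₀] at hgr
    -- hgr : deriv f (τ α) ^ 2 + a ^ 2 * α ^ 2 ≤ (0 ^ 2 + a ^ 2 * β ^ 2) * exp (...)
    -- convert the Gronwall estimate into α ≤ β exp(a τ)
    have e2 : Real.exp (2 * a * (τ α - t₀)) ≤ Real.exp (2 * a * τ α) := by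
      apply Real.exp_le_exp.2
      linarith [mul_nonneg ha0.le ht₀mem.1]
    have e4 : a ^ 2 * α ^ 2 ≤ a ^ 2 * (β ^ 2 * Real.exp (2 * a * τ α)) := by
      have e2' : a ^ 2 * β ^ 2 * Real.exp (2 * a * (τ α - t₀))
          ≤ a ^ 2 * β ^ 2 * Real.exp (2 * a * τ α) :=
        mul_le_mul_of_nonneg_left e2 (by positivity)
      linarith [hgr, e2', sq_nonneg (deriv f (τ α))]
    have e3 : α ^ 2 ≤ β ^ 2 * Real.exp (2 * a * τ α) :=
      le_of_mul_le_mul_left e4 (by positivity)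
    have e5 : α ≤ β * Real.exp (a * τ α) := by
      have hsq : (β * Real.exp (a * τ α)) ^ 2 = β ^ 2 * Real.exp (2 * a * τ α) := by
        rw [mul_pow, ← Real.exp_nat_mul]
        push_cast
        ring_nf
      apply le_of_sq_le_sq' hα0.le (mul_pos hβpos (Real.exp_pos (a * τ α)))
      rw [hsq]
      exact e3
    have hsq2 : β ≤ Real.sqrt ((a / 2) * (α ^ 2 - α ^ N)) := by
      have h := Real.sqrt_le_sqrt hβsq
      rwa [Real.sqrt_sq hβpos.le] at h
    have hrpos : 0 < Real.sqrt ((a / 2) * (α ^ 2 - α ^ N)) := lt_of_lt_of_le hβpos hsq2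
    have e6 : α ≤ Real.sqrt ((a / 2) * (α ^ 2 - α ^ N)) * Real.exp (a * τ α) :=
      le_trans e5 (mul_le_mul_of_nonneg_right hsq2 (Real.exp_pos _).le)
    have e7 : Real.log α ≤ Real.log (Real.sqrt ((a / 2) * (α ^ 2 - α ^ N))) + a * τ α := by
      have h := (Real.log_le_log_iff hα0 (by positivity)).2 e6
      rwa [Real.log_mul hrpos.ne' (Real.exp_pos _).ne', Real.log_exp] at h
    have e8 : Real.log u₀ ≤ Real.log α := (Real.log_le_log_iff hu₀0 hα0).2 hα.1.le
    rw [div_le_iff₀ ha0]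
    linarith [e7, e8]
  apply tendsto_atTop_mono' _ _ (tendsto_part ha hN2 hu₀0 hu₀1)
  filter_upwards [self_mem_nhdsWithin] with α hα
  exact key α hα
end

section
/- Fix an integer n ≥ 3, set N = 2n/(n-2) and u₀ = ((n-2)/n)^((n-2)/4). For α ∈ (u₀, 1), let u_α : ℝ → ℝ be the unique solution of 4u'' - (n-2)²u + n(n-2)u^(N-1) = 0 with u_α(0) = α, u_α'(0) = 0, and let τ(α) denote its minimal positive period. Then τ(α) → 2π/√(n-2) as α → u₀ from the right. -/
open Set Real Filter Topology
open scoped NNReal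

private lemma sturm_hasDeriv (v v' v'' : ℝ → ℝ)
    (hv : ∀ t, HasDerivAt v (v' t) t) (hv' : ∀ t, HasDerivAt v' (v'' t) t)
    (r c : ℝ) (t : ℝ) :
    HasDerivAt (fun t => v t * (r * Real.cos (r * (t - c))) - v' t * Real.sin (r * (t - c)))
      ((-(r ^ 2 * v t) - v'' t) * Real.sin (r * (t - c))) t := by
  have hlin : HasDerivAt (fun t : ℝ => r * (t - c)) r t := by
    simpa using ((hasDerivAt_id t).sub_const c).const_mul r
  have hcos : HasDerivAt (fun t => Real.cos (r * (t - c))) (-Real.sin (r * (t - c)) * r) t :=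
    (Real.hasDerivAt_cos _).comp t hlin
  have hsin : HasDerivAt (fun t => Real.sin (r * (t - c))) (Real.cos (r * (t - c)) * r) t :=
    (Real.hasDerivAt_sin _).comp t hlin
  have := ((hv t).mul (hcos.const_mul r)).sub ((hv' t).mul hsin)
  refine this.congr_deriv ?_
  ring

private lemma sturm_ftc (v v' v'' : ℝ → ℝ)
    (hv : ∀ t, HasDerivAt v (v' t) t) (hv' : ∀ t, HasDerivAt v' (v'' t) t)
    (hc'' : Continuous v'') (r c x y : ℝ) :
    (v y * (r * Real.cos (r * (y - c))) - v' y * Real.sin (r * (y - c)))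
      - (v x * (r * Real.cos (r * (x - c))) - v' x * Real.sin (r * (x - c)))
      = ∫ t in x..y, (-(r ^ 2 * v t) - v'' t) * Real.sin (r * (t - c)) := by
  have hdv : Differentiable ℝ v := fun t => (hv t).differentiableAt
  have hcv : Continuous v := hdv.continuous
  refine (intervalIntegral.integral_eq_sub_of_hasDerivAt
    (fun t _ => sturm_hasDeriv v v' v'' hv hv' r c t) ?_).symm
  apply Continuous.intervalIntegrable
  continuity

/-- Sturm-type comparison: if `v'' ≤ -λ v` and `v ≥ 0` on an interval of length `π/√λ`,
then `v` is nonpositive at the right endpoint. -/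
private lemma sturm_upper (v v' v'' : ℝ → ℝ)
    (hv : ∀ t, HasDerivAt v (v' t) t) (hv' : ∀ t, HasDerivAt v' (v'' t) t)
    (hc'' : Continuous v'')
    (lam c d : ℝ) (hlam : 0 < lam) (hd : d = c + π / Real.sqrt lam)
    (hnn : ∀ t ∈ Icc c d, 0 ≤ v t)
    (hode : ∀ t ∈ Icc c d, v'' t ≤ -lam * v t) :
    v d ≤ 0 := by
  set r := Real.sqrt lam with hr
  have hr0 : 0 < r := Real.sqrt_pos.mpr hlam
  have hr2 : r ^ 2 = lam := Real.sq_sqrt hlam.le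
  have hcd : c ≤ d := by
    rw [hd]; linarith [div_pos Real.pi_pos hr0]
  have key := sturm_ftc v v' v'' hv hv' hc'' r c c d
  have hWc : v c * (r * Real.cos (r * (c - c))) - v' c * Real.sin (r * (c - c))
      = r * v c := by simp; ring
  have hrd : r * (d - c) = π := by
    rw [hd]
    have : c + π / r - c = π / r := by ring
    rw [this]
    field_simp
  have hWd : v d * (r * Real.cos (r * (d - c))) - v' d * Real.sin (r * (d - c))
      = -(r * v d) := by rw [hrd]; simp; ring
  rw [hWc, hWd] at key
  have hint : 0 ≤ ∫ t in c..d, (-(r ^ 2 * v t) - v'' t) * Real.sin (r * (t - c)) := by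
    apply intervalIntegral.integral_nonneg hcd
    intro t ht
    have h1 : 0 ≤ Real.sin (r * (t - c)) := by
      apply Real.sin_nonneg_of_nonneg_of_le_pi
      · nlinarith [ht.1]
      · nlinarith [ht.2]
    have h3 : 0 ≤ -(r ^ 2 * v t) - v'' t := by
      rw [hr2]; linarith [hode t ht]
    exact mul_nonneg h3 h1
  nlinarith [hnn c ⟨le_refl c, hcd⟩]

/-- Sturm-type comparison: `v'' ≥ -λ v`, `v ≥ 0` between consecutive zeros `a < b` with
`v'(b) < 0` forces `b - a ≥ π/√λ`. -/
private lemma sturm_lower (v v' v'' : ℝ → ℝ)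
    (hv : ∀ t, HasDerivAt v (v' t) t) (hv' : ∀ t, HasDerivAt v' (v'' t) t)
    (hc'' : Continuous v'')
    (lam a b : ℝ) (hlam : 0 < lam) (hab : a < b) (hlen : b - a < π / Real.sqrt lam)
    (hva : v a = 0) (hvb : v b = 0)
    (hnn : ∀ t ∈ Icc a b, 0 ≤ v t)
    (hode : ∀ t ∈ Icc a b, -lam * v t ≤ v'' t)
    (hvb' : v' b < 0) : False := by
  set r := Real.sqrt lam with hr
  have hr0 : 0 < r := Real.sqrt_pos.mpr hlam
  have hr2 : r ^ 2 = lam := Real.sq_sqrt hlam.le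
  have key := sturm_ftc v v' v'' hv hv' hc'' r a a b
  have hWa : v a * (r * Real.cos (r * (a - a))) - v' a * Real.sin (r * (a - a))
      = 0 := by simp [hva]
  have hrb0 : 0 < r * (b - a) := by nlinarith
  have hrbpi : r * (b - a) < π := by
    have := (lt_div_iff₀ hr0).mp hlen
    nlinarith
  have hint : (∫ t in a..b, (-(r ^ 2 * v t) - v'' t) * Real.sin (r * (t - a))) ≤ 0 := by
    have h0 : 0 ≤ ∫ t in a..b, -((-(r ^ 2 * v t) - v'' t) * Real.sin (r * (t - a))) := by
      apply intervalIntegral.integral_nonneg hab.le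
      intro t ht
      have h1 : 0 ≤ Real.sin (r * (t - a)) := by
        apply Real.sin_nonneg_of_nonneg_of_le_pi
        · nlinarith [ht.1]
        · nlinarith [ht.2]
      have h3 : -(r ^ 2 * v t) - v'' t ≤ 0 := by
        rw [hr2]; linarith [hode t ht]
      nlinarith
    rw [intervalIntegral.integral_neg] at h0
    linarith
  rw [hWa] at key
  have hsb : 0 < Real.sin (r * (b - a)) := Real.sin_pos_of_pos_of_lt_pi hrb0 hrbpi
  have hWb : 0 < v b * (r * Real.cos (r * (b - a))) - v' b * Real.sin (r * (b - a)) := by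
    rw [hvb]
    simp
    nlinarith
  linarith [key, hint, hWb]


private noncomputable def Gf (n : ℕ) (N : ℝ) (x : ℝ) : ℝ :=
  (((n : ℝ) - 2) ^ 2 * x - (n : ℝ) * ((n : ℝ) - 2) * x ^ (N - 1)) / 4

private noncomputable def Vf (n : ℕ) (N : ℝ) (x : ℝ) : ℝ :=
  ((n : ℝ) * ((n : ℝ) - 2) / (4 * N)) * x ^ N - (((n : ℝ) - 2) ^ 2 / 8) * x ^ 2

/-- `x^(N-1) = x^(N-2) * x` for `x > 0`. -/
private lemma rpow_split (N : ℝ) {x : ℝ} (hx : 0 < x) : x ^ (N - 1) = x ^ (N - 2) * x := by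
  have h : N - 1 = (N - 2) + 1 := by ring
  rw [h, Real.rpow_add hx, Real.rpow_one]

section basic
variable {n : ℕ} (hn : 3 ≤ n) {N : ℝ} (hN : N = 2 * (n : ℝ) / ((n : ℝ) - 2))
  {u₀ : ℝ} (hu₀ : u₀ = (((n : ℝ) - 2) / (n : ℝ)) ^ (((n : ℝ) - 2) / 4))

include hn

private lemma nR3 : (3 : ℝ) ≤ (n : ℝ) := by exact_mod_cast hn
private lemma c2pos : (0 : ℝ) < (n : ℝ) - 2 := by linarith [nR3 hn]
private lemma npos : (0 : ℝ) < (n : ℝ) := by linarith [nR3 hn]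

include hN

private lemma hN2 : N - 2 = 4 / ((n : ℝ) - 2) := by
  have h := c2pos hn
  rw [hN]; field_simp; ring

private lemma hN2pos : 0 < N - 2 := by
  have := c2pos hn
  rw [hN2 hn hN]; positivity

private lemma hN1ge : 1 ≤ N - 1 := by linarith [hN2pos hn hN]
private lemma hNge : 1 ≤ N := by linarith [hN2pos hn hN]
private lemma hNpos : 0 < N := by linarith [hN2pos hn hN]

private lemma hasDerivAt_rpowN {p : ℝ} (hp : 1 ≤ p) (x : ℝ) :
    HasDerivAt (fun y : ℝ => y ^ p) (p * x ^ (p - 1)) x :=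
  Real.hasDerivAt_rpow_const (Or.inr hp)

/-- derivative of `Gf` -/
private lemma hasDerivAt_Gf (x : ℝ) :
    HasDerivAt (Gf n N)
      ((((n : ℝ) - 2) ^ 2 - (n : ℝ) * ((n : ℝ) - 2) * (N - 1) * x ^ (N - 2)) / 4) x := by
  have h1 := hasDerivAt_rpowN hn hN (hN1ge hn hN) x
  have h2 := ((hasDerivAt_id x).const_mul (((n : ℝ) - 2) ^ 2)).sub
    (h1.const_mul ((n : ℝ) * ((n : ℝ) - 2)))
  have h3 := h2.div_const 4
  refine h3.congr_deriv ?_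
  have : N - 1 - 1 = N - 2 := by ring
  rw [this]; ring

/-- derivative of `Vf` -/
private lemma hasDerivAt_Vf (x : ℝ) :
    HasDerivAt (Vf n N) (-(Gf n N x)) x := by
  have h1 := hasDerivAt_rpowN hn hN (hNge hn hN) x
  have h2 : HasDerivAt (fun y : ℝ => y ^ 2) (2 * x) x := by
    simpa using hasDerivAt_pow 2 x
  have h3 := (h1.const_mul ((n : ℝ) * ((n : ℝ) - 2) / (4 * N))).sub
    (h2.const_mul ((((n : ℝ) - 2) ^ 2 / 8)))
  refine h3.congr_deriv ?_
  have hNne : N ≠ 0 := ne_of_gt (hNpos hn hN)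
  unfold Gf
  field_simp
  ring

private lemma contG : Continuous (Gf n N) := by
  have h : Differentiable ℝ (Gf n N) := fun x => (hasDerivAt_Gf hn hN x).differentiableAt
  exact h.continuous

private lemma contV : Continuous (Vf n N) := by
  have h : Differentiable ℝ (Vf n N) := fun x => (hasDerivAt_Vf hn hN x).differentiableAt
  exact h.continuous

include hu₀

private lemma u₀pos : 0 < u₀ := by
  rw [hu₀]; exact Real.rpow_pos_of_pos (div_pos (c2pos hn) (npos hn)) _

private lemma u₀lt1 : u₀ < 1 := by
  rw [hu₀]
  apply Real.rpow_lt_one (le_of_lt (div_pos (c2pos hn) (npos hn)))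
  · rw [div_lt_one (npos hn)]; linarith [nR3 hn]
  · linarith [c2pos hn]

private lemma u₀pow : u₀ ^ (N - 2) = ((n : ℝ) - 2) / (n : ℝ) := by
  have hb : (0:ℝ) ≤ (((n : ℝ) - 2) / (n : ℝ)) := le_of_lt (div_pos (c2pos hn) (npos hn))
  have he : (((n : ℝ) - 2) / 4) * (N - 2) = 1 := by
    have h2 := (c2pos hn).ne'
    rw [hN2 hn hN]
    field_simp
  rw [hu₀, ← Real.rpow_mul hb, he, Real.rpow_one]

private lemma Gf_u₀ : Gf n N u₀ = 0 := by
  have h1 : u₀ ^ (N - 1) = (((n : ℝ) - 2) / (n : ℝ)) * u₀ := by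
    rw [rpow_split N (u₀pos hn hN hu₀), u₀pow hn hN hu₀]
  unfold Gf
  rw [h1]
  have := npos hn
  field_simp
  ring

private lemma Gf_pos {x : ℝ} (hx0 : 0 < x) (hx : x < u₀) : 0 < Gf n N x := by
  have hxp : x ^ (N - 2) < ((n : ℝ) - 2) / (n : ℝ) := by
    rw [← u₀pow hn hN hu₀]
    exact Real.rpow_lt_rpow hx0.le hx (hN2pos hn hN)
  have hsplit := rpow_split N hx0
  have hn0 := npos hn
  have hc2 := c2pos hn
  have hxpow : 0 < x ^ (N - 2) := Real.rpow_pos_of_pos hx0 _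
  unfold Gf
  rw [hsplit]
  have h4 : (n : ℝ) * x ^ (N - 2) < (n : ℝ) - 2 := by
    have := (lt_div_iff₀ hn0).mp hxp
    nlinarith
  nlinarith [mul_pos (mul_pos hc2 hx0) (sub_pos.mpr h4)]

private lemma Gf_neg {x : ℝ} (hx : u₀ < x) : Gf n N x < 0 := by
  have hx0 : 0 < x := lt_trans (u₀pos hn hN hu₀) hx
  have hxp : ((n : ℝ) - 2) / (n : ℝ) < x ^ (N - 2) := by
    rw [← u₀pow hn hN hu₀]
    exact Real.rpow_lt_rpow (u₀pos hn hN hu₀).le hx (hN2pos hn hN)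
  have hsplit := rpow_split N hx0
  have hn0 := npos hn
  have hc2 := c2pos hn
  unfold Gf
  rw [hsplit]
  have h4 : ((n : ℝ) - 2) < (n : ℝ) * x ^ (N - 2) := by
    rw [div_lt_iff₀ hn0] at hxp; nlinarith
  nlinarith [mul_pos (mul_pos hc2 hx0) (sub_pos.mpr h4)]

private lemma Vf_strictMonoOn : StrictMonoOn (Vf n N) (Ici u₀) := by
  apply strictMonoOn_of_deriv_pos (convex_Ici u₀) (contV hn hN).continuousOn
  intro x hx
  rw [interior_Ici] at hx
  rw [(hasDerivAt_Vf hn hN x).deriv]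
  have := Gf_neg hn hN hu₀ hx
  linarith

private lemma Vf_strictAntiOn : StrictAntiOn (Vf n N) (Icc 0 u₀) := by
  apply strictAntiOn_of_deriv_neg (convex_Icc 0 u₀) (contV hn hN).continuousOn
  intro x hx
  rw [interior_Icc] at hx
  rw [(hasDerivAt_Vf hn hN x).deriv]
  have := Gf_pos hn hN hu₀ hx.1 hx.2
  linarith

private lemma G'u₀ : ((((n : ℝ) - 2) ^ 2 - (n : ℝ) * ((n : ℝ) - 2) * (N - 1) * u₀ ^ (N - 2)) / 4)
    = -((n : ℝ) - 2) := by
  rw [u₀pow hn hN hu₀, hN]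
  have h1 := (c2pos hn).ne'
  have h2 := (npos hn).ne'
  field_simp
  ring

/-- The nonlinear remainder `h` has vanishing value and derivative at `0`. -/
private lemma hasDerivAt_hfun :
    HasDerivAt (fun x => Gf n N (u₀ + x) + ((n : ℝ) - 2) * x) 0 0 := by
  have h0 : HasDerivAt (Gf n N) ((((n : ℝ) - 2) ^ 2
      - (n : ℝ) * ((n : ℝ) - 2) * (N - 1) * u₀ ^ (N - 2)) / 4) (u₀ + 0) := by
    simpa using hasDerivAt_Gf hn hN u₀
  have h1 := h0.comp_const_add u₀ 0
  have h2 := h1.add ((hasDerivAt_id (0:ℝ)).const_mul ((n : ℝ) - 2))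
  have h3 : ((((n : ℝ) - 2) ^ 2 - (n : ℝ) * ((n : ℝ) - 2) * (N - 1) * u₀ ^ (N - 2)) / 4)
      + ((n : ℝ) - 2) = 0 := by
    rw [G'u₀ hn hN hu₀]; ring
  exact h2.congr_deriv (by linarith [h3])

end basic

open scoped NNReal


section reg
variable {u : ℝ → ℝ} (hu : ContDiff ℝ 2 u)
include hu

private lemma reg1 : ∀ t, HasDerivAt u (deriv u t) t := by
  intro t
  exact ((hu.differentiable (by norm_num)) t).hasDerivAt

private lemma reg_cd1 : ContDiff ℝ 1 (deriv u) := by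
  have h : ContDiff ℝ (1 + 1) u := by norm_num; exact hu
  exact (contDiff_succ_iff_deriv.mp h).2.2

private lemma reg2 : ∀ t, HasDerivAt (deriv u) (deriv (deriv u) t) t := by
  intro t
  exact (((reg_cd1 hu).differentiable one_ne_zero) t).hasDerivAt

private lemma reg_cont2 : Continuous (deriv (deriv u)) :=
  (contDiff_one_iff_deriv.mp (reg_cd1 hu)).2

end reg

/-- Periodicity from a repeated phase point, via uniqueness of ODE solutions. -/
private lemma mk_periodic (n : ℕ) (N : ℝ) (u : ℝ → ℝ) (hu : ContDiff ℝ 2 u)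
    (hode : ∀ t, deriv (deriv u) t = Gf n N (u t))
    (l r : ℝ) (hbd : ∀ t, u t ∈ Icc l r)
    (C : ℝ≥0) (hGlip : LipschitzOnWith C (Gf n N) (Icc l r))
    (a P : ℝ) (hP : 0 < P) (hua : u (a + P) = u a) (hua' : deriv u (a + P) = deriv u a) :
    Function.Periodic u P := by
  -- the vector field
  set F : ℝ × ℝ → ℝ × ℝ := fun p => (p.2, Gf n N p.1) with hF
  set s : Set (ℝ × ℝ) := Icc l r ×ˢ (univ : Set ℝ) with hs
  have hFlip : LipschitzOnWith (max 1 C) F s := by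
    rw [lipschitzOnWith_iff_dist_le_mul]
    intro p hp q hq
    have h2 : dist (Gf n N p.1) (Gf n N q.1) ≤ C * dist p.1 q.1 := by
      have := (lipschitzOnWith_iff_dist_le_mul.mp hGlip) p.1 hp.1 q.1 hq.1
      exact_mod_cast this
    have h1 : dist (F p) (F q) = max (dist p.2 q.2) (dist (Gf n N p.1) (Gf n N q.1)) :=
      Prod.dist_eq
    have h0 : dist p q = max (dist p.1 q.1) (dist p.2 q.2) := Prod.dist_eq
    rw [h1, h0]
    have hm1 : (1:ℝ) ≤ ((max 1 C : ℝ≥0) : ℝ) := by exact_mod_cast le_max_left 1 C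
    have hm2 : ((C:ℝ)) ≤ ((max 1 C : ℝ≥0) : ℝ) := by exact_mod_cast le_max_right 1 C
    have hd1 : (0:ℝ) ≤ dist p.1 q.1 := dist_nonneg
    have hd2 : (0:ℝ) ≤ dist p.2 q.2 := dist_nonneg
    have hC0 : (0:ℝ) ≤ C := C.coe_nonneg
    apply max_le
    · have := le_max_right (dist p.1 q.1) (dist p.2 q.2)
      nlinarith
    · have := le_max_left (dist p.1 q.1) (dist p.2 q.2)
      nlinarith
  -- the two solutions
  have hd1 := reg1 hu
  have hd2 := reg2 hu
  set f : ℝ → ℝ × ℝ := fun t => (u t, deriv u t) with hf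
  have hfd : ∀ t, HasDerivAt f (F (f t)) t := by
    intro t
    have := (hd1 t).prodMk (hd2 t)
    rw [hode t] at this
    exact this
  have hg : ∀ t, HasDerivAt (fun s => f (s + P)) (F (f (t + P))) t := by
    intro t
    exact (hfd (t + P)).comp_add_const t P
  have key : ∀ t : ℝ, f (t + P) = f t := by
    intro t
    have hmem : a ∈ Ioo (min t a - 1) (max t a + 1) := by
      constructor
      · have := min_le_right t a; linarith
      · have := le_max_right t a; linarith
    have := ODE_solution_unique_of_mem_Icc (v := fun _ : ℝ => F) (s := fun _ => s)
      (fun _ _ => hFlip) hmem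
      (fun x _ => ((hg x).continuousAt).continuousWithinAt)
      (fun x _ => hg x)
      (fun x _ => by exact ⟨hbd (x + P), trivial⟩)
      (fun x _ => ((hfd x).continuousAt).continuousWithinAt)
      (fun x _ => hfd x)
      (fun x _ => by exact ⟨hbd x, trivial⟩)
      (by
        show f (a + P) = f a
        simp only [hf]
        rw [hua, hua'])
    have ht : t ∈ Icc (min t a - 1) (max t a + 1) := by
      constructor
      · have := min_le_left t a; linarith
      · have := le_max_left t a; linarith
    exact this ht
  intro t
  have := key t
  exact congrArg Prod.fst this


/-- If `u` has positive derivative at `a`, it exceeds `u a` somewhere in `(a,b)`. -/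
private lemma exists_gt_right {u : ℝ → ℝ} {d a : ℝ} (hd : HasDerivAt u d a) (hd0 : 0 < d)
    (b : ℝ) (hab : a < b) : ∃ t, a < t ∧ t < b ∧ u a < u t := by
  have h1 : Tendsto (slope u a) (𝓝[≠] a) (𝓝 d) := hasDerivAt_iff_tendsto_slope.mp hd
  have h2 : Tendsto (slope u a) (𝓝[>] a) (𝓝 d) :=
    h1.mono_left (nhdsWithin_mono a (fun x hx => ne_of_gt hx))
  have h3 : ∀ᶠ t in 𝓝[>] a, 0 < slope u a t := h2.eventually (eventually_gt_nhds hd0)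
  have h4 : ∀ᶠ t in 𝓝[>] a, t ∈ Ioo a b :=
    eventually_of_mem (Ioo_mem_nhdsGT hab) (fun x hx => hx)
  obtain ⟨t, ht3, ht4⟩ := (h3.and h4).exists
  refine ⟨t, ht4.1, ht4.2, ?_⟩
  have h5 : 0 < t - a := sub_pos.mpr ht4.1
  have h6 : slope u a t = (u t - u a) / (t - a) := slope_def_field u a t
  rw [h6] at ht3
  have := mul_pos ht3 h5
  rw [div_mul_cancel₀ _ (ne_of_gt h5)] at this
  linarith

/-- Constant sign propagation on a zero-free interval. -/
private lemma no_zero_sign {u : ℝ → ℝ} (hcu : Continuous u) {u₀ a b : ℝ}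
    (hnz : ∀ t, a < t → t < b → u t ≠ u₀)
    {t₀ : ℝ} (ht₀ : a < t₀ ∧ t₀ < b ∧ u₀ < u t₀) :
    ∀ t, a < t → t < b → u₀ < u t := by
  intro t hta htb
  rcases lt_trichotomy (u t) u₀ with h | h | h
  · exfalso
    rcases le_total t t₀ with hle | hle
    · have hsub : Icc t t₀ ⊆ Ioo a b := fun x hx => ⟨lt_of_lt_of_le hta hx.1,
        lt_of_le_of_lt hx.2 ht₀.2.1⟩
      have := intermediate_value_Icc hle (hcu.continuousOn (s := Icc t t₀))
      have hmem : u₀ ∈ Icc (u t) (u t₀) := ⟨le_of_lt h, le_of_lt ht₀.2.2⟩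
      obtain ⟨z, hz, hz'⟩ := this hmem
      exact hnz z (hsub hz).1 (hsub hz).2 hz'
    · have hsub : Icc t₀ t ⊆ Ioo a b := fun x hx => ⟨lt_of_lt_of_le ht₀.1 hx.1,
        lt_of_le_of_lt hx.2 htb⟩
      have := intermediate_value_Icc' hle (hcu.continuousOn (s := Icc t₀ t))
      have hmem : u₀ ∈ Icc (u t) (u t₀) := ⟨le_of_lt h, le_of_lt ht₀.2.2⟩
      obtain ⟨z, hz, hz'⟩ := this hmem
      exact hnz z (hsub hz).1 (hsub hz).2 hz'
  · exact absurd h (hnz t hta htb)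
  · exact h

/-- If `u > c` on `(a,b)` and `u b = c` then the derivative of `u` at `b` is `≤ 0`. -/
private lemma left_lim_nonpos {u : ℝ → ℝ} {d b : ℝ} (hd : HasDerivAt u d b) {a c : ℝ}
    (hab : a < b) (hpos : ∀ t, a < t → t < b → c < u t) (hub : u b = c) : d ≤ 0 := by
  have h1 : Tendsto (slope u b) (𝓝[≠] b) (𝓝 d) := hasDerivAt_iff_tendsto_slope.mp hd
  have hsub : Ioo a b ⊆ {b}ᶜ := fun x hx => ne_of_lt hx.2
  have h2 : Tendsto (slope u b) (𝓝[Ioo a b] b) (𝓝 d) :=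
    h1.mono_left (nhdsWithin_mono b hsub)
  have hne : (𝓝[Ioo a b] b).NeBot := by
    apply mem_closure_iff_nhdsWithin_neBot.mp
    rw [closure_Ioo (ne_of_lt hab)]
    exact ⟨le_of_lt hab, le_refl b⟩
  have h3 : ∀ᶠ t in 𝓝[Ioo a b] b, slope u b t ≤ 0 := by
    apply eventually_of_mem self_mem_nhdsWithin
    intro t ht
    have hnum : 0 < u t - u b := by
      rw [hub]; linarith [hpos t ht.1 ht.2]
    have hden : t - b < 0 := sub_neg.mpr ht.2
    have : slope u b t = (u t - u b) / (t - b) := slope_def_field u b t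
    rw [this]
    exact le_of_lt (div_neg_of_pos_of_neg hnum hden)
  exact le_of_tendsto h2 h3

set_option maxHeartbeats 2000000 in
private lemma period_bounds
    {n : ℕ} (hn : 3 ≤ n) {N : ℝ} (hN : N = 2 * (n : ℝ) / ((n : ℝ) - 2))
    {u₀ : ℝ} (hu₀ : u₀ = (((n : ℝ) - 2) / (n : ℝ)) ^ (((n : ℝ) - 2) / 4))
    {ε : ℝ} (hε0 : 0 < ε) (hε1 : ε ≤ 1/2)
    {ρ : ℝ}
    (hρ : ∀ x : ℝ, |x| ≤ ρ → |Gf n N (u₀ + x) + ((n:ℝ)-2)*x| ≤ ε * |x|)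
    {α : ℝ} (hα1 : u₀ < α)
    {u : ℝ → ℝ} (hu : ContDiff ℝ 2 u) (hu0 : u 0 = α) (hu'0 : deriv u 0 = 0)
    (hode : ∀ t, deriv (deriv u) t = Gf n N (u t))
    (hbd : ∀ t, |u t - u₀| ≤ min ρ (u₀/2))
    {T : ℝ} (hT : 0 < T) (hper : Function.Periodic u T)
    (hmin : ∀ T' : ℝ, 0 < T' → Function.Periodic u T' → T ≤ T') :
    2*π/Real.sqrt ((n:ℝ)-2+ε) ≤ T ∧ T ≤ 2*π/Real.sqrt ((n:ℝ)-2-ε) := by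
  have hc2 : (1:ℝ) ≤ (n:ℝ) - 2 := by linarith [nR3 hn]
  have hu₀pos : 0 < u₀ := u₀pos hn hN hu₀
  set lamm : ℝ := (n:ℝ) - 2 - ε with hlamm_def
  set lamp : ℝ := (n:ℝ) - 2 + ε with hlamp_def
  have hlamm : 0 < lamm := by rw [hlamm_def]; linarith
  have hlamp : 0 < lamp := by rw [hlamp_def]; linarith
  set L : ℝ := π / Real.sqrt lamm with hL_def
  set L' : ℝ := π / Real.sqrt lamp with hL'_def
  have hL0 : 0 < L := by rw [hL_def]; exact div_pos Real.pi_pos (Real.sqrt_pos.mpr hlamm)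
  have hL'0 : 0 < L' := by rw [hL'_def]; exact div_pos Real.pi_pos (Real.sqrt_pos.mpr hlamp)
  have hd1 := reg1 hu
  have hd2 := reg2 hu
  have hcu : Continuous u := hu.continuous
  have hcu'' : Continuous (deriv (deriv u)) := reg_cont2 hu
  have hvd1 : ∀ t, HasDerivAt (fun t => u t - u₀) (deriv u t) t :=
    fun t => (hd1 t).sub_const u₀
  have hwd1 : ∀ t, HasDerivAt (fun t => u₀ - u t) (-(deriv u t)) t :=
    fun t => (hd1 t).const_sub u₀
  have hwd2 : ∀ t, HasDerivAt (fun t => -(deriv u t)) (-(deriv (deriv u) t)) t :=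
    fun t => (hd2 t).neg
  have hcw'' : Continuous (fun t => -(deriv (deriv u) t)) := hcu''.neg
  -- energy conservation
  have hEd : ∀ t, HasDerivAt (fun t => (deriv u t)^2/2 + Vf n N (u t)) 0 t := by
    intro t
    have h1 : HasDerivAt (fun t => (deriv u t)^2/2)
        (2 * (deriv u t) ^ 1 * deriv (deriv u) t / 2) t := ((hd2 t).pow 2).div_const 2
    have h2 : HasDerivAt (fun t => Vf n N (u t)) (-(Gf n N (u t)) * deriv u t) t :=
      (hasDerivAt_Vf hn hN (u t)).comp t (hd1 t)
    have h3 := h1.add h2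
    have h4 : 2 * (deriv u t) ^ 1 * deriv (deriv u) t / 2 + (-(Gf n N (u t)) * deriv u t) = 0 := by
      rw [hode t]; ring
    rw [h4] at h3
    exact h3
  have henergy : ∀ t, (deriv u t)^2/2 + Vf n N (u t) = Vf n N α := by
    intro t
    have hdiff : Differentiable ℝ (fun t => (deriv u t)^2/2 + Vf n N (u t)) :=
      fun s => (hEd s).differentiableAt
    have := is_const_of_deriv_eq_zero hdiff (fun s => (hEd s).deriv) t 0
    rw [this, hu0, hu'0]
    norm_num
  have hVα : Vf n N u₀ < Vf n N α :=
    Vf_strictMonoOn hn hN hu₀ (mem_Ici.mpr (le_refl u₀)) (mem_Ici.mpr hα1.le) hα1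
  -- no tangential zeros
  have hnz' : ∀ t, u t = u₀ → deriv u t ≠ 0 := by
    intro t h h'
    have h2 := henergy t
    rw [h, h'] at h2
    norm_num at h2
    linarith
  have hρ' : ∀ t, |u t - u₀| ≤ ρ := fun t => le_trans (hbd t) (min_le_left _ _)
  have hh : ∀ t, |Gf n N (u t) + ((n:ℝ)-2)*(u t - u₀)| ≤ ε * |u t - u₀| := by
    intro t
    have h := hρ (u t - u₀) (hρ' t)
    have harg : u₀ + (u t - u₀) = u t := by ring
    rwa [harg] at h
  -- one-sided differential inequalities
  have hA : ∀ t, 0 ≤ u t - u₀ → deriv (deriv u) t ≤ -lamm * (u t - u₀) := by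
    intro t ht
    obtain ⟨l1, l2⟩ := abs_le.mp (hh t)
    rw [abs_of_nonneg ht] at l2
    rw [hode t, hlamm_def]
    linarith
  have hB : ∀ t, 0 ≤ u t - u₀ → -lamp * (u t - u₀) ≤ deriv (deriv u) t := by
    intro t ht
    obtain ⟨l1, l2⟩ := abs_le.mp (hh t)
    rw [abs_of_nonneg ht] at l1
    rw [hode t, hlamp_def]
    linarith
  have hC : ∀ t, u t - u₀ ≤ 0 → -lamm * (u t - u₀) ≤ deriv (deriv u) t := by
    intro t ht
    obtain ⟨l1, l2⟩ := abs_le.mp (hh t)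
    rw [abs_of_nonpos ht] at l1
    rw [hode t, hlamm_def]
    linarith
  have hD : ∀ t, u t - u₀ ≤ 0 → deriv (deriv u) t ≤ -lamp * (u t - u₀) := by
    intro t ht
    obtain ⟨l1, l2⟩ := abs_le.mp (hh t)
    rw [abs_of_nonpos ht] at l2
    rw [hode t, hlamp_def]
    linarith
  -- every interval of length L contains a zero of u - u₀
  have hzeros : ∀ c : ℝ, ∃ z, z ∈ Icc c (c + L) ∧ u z = u₀ := by
    intro c
    by_contra hcon
    push_neg at hcon
    have hcd : c ≤ c + L := by linarith
    have hdichot : (∀ t ∈ Icc c (c + L), u₀ < u t) ∨ (∀ t ∈ Icc c (c + L), u t < u₀) := by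
      rcases lt_or_gt_of_ne (hcon c ⟨le_refl c, hcd⟩) with h | h
      · right
        intro t ht
        rcases lt_or_gt_of_ne (hcon t ht) with h' | h'
        · exact h'
        · exfalso
          obtain ⟨z, hz, hz'⟩ := intermediate_value_Icc ht.1
            (hcu.continuousOn (s := Icc c t)) (⟨le_of_lt h, le_of_lt h'⟩ : u₀ ∈ Icc (u c) (u t))
          exact hcon z ⟨hz.1, le_trans hz.2 ht.2⟩ hz'
      · left
        intro t ht
        rcases lt_or_gt_of_ne (hcon t ht) with h' | h'
        · exfalso
          obtain ⟨z, hz, hz'⟩ := intermediate_value_Icc' ht.1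
            (hcu.continuousOn (s := Icc c t)) (⟨le_of_lt h', le_of_lt h⟩ : u₀ ∈ Icc (u t) (u c))
          exact hcon z ⟨hz.1, le_trans hz.2 ht.2⟩ hz'
        · exact h'
    rcases hdichot with hpos | hneg
    · have hres := sturm_upper (fun t => u t - u₀) (deriv u) (deriv (deriv u)) hvd1 hd2 hcu''
        lamm c (c + L) hlamm (by rw [hL_def])
        (fun t ht => by
          show 0 ≤ u t - u₀
          linarith [hpos t ht])
        (fun t ht => hA t (by linarith [hpos t ht]))
      have h2 := hpos (c + L) ⟨hcd, le_refl _⟩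
      linarith
    · have hres := sturm_upper (fun t => u₀ - u t) (fun t => -(deriv u t))
        (fun t => -(deriv (deriv u) t)) hwd1 hwd2 hcw''
        lamm c (c + L) hlamm (by rw [hL_def])
        (fun t ht => by
          show 0 ≤ u₀ - u t
          linarith [hneg t ht])
        (fun t ht => by
          show -(deriv (deriv u) t) ≤ -lamm * (u₀ - u t)
          have := hC t (by linarith [hneg t ht])
          linarith)
      have h2 := hneg (c + L) ⟨hcd, le_refl _⟩
      linarith
  -- first zero strictly after a given zero
  have hnext : ∀ a, u a = u₀ → ∃ b, a < b ∧ b ≤ a + L ∧ u b = u₀ ∧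
      ∀ t, a < t → t < b → u t ≠ u₀ := by
    intro a ha
    have hslope : Filter.Tendsto (slope u a) (nhdsWithin a {a}ᶜ) (nhds (deriv u a)) :=
      hasDerivAt_iff_tendsto_slope.mp (hd1 a)
    have hev : ∀ᶠ t in nhdsWithin a {a}ᶜ, slope u a t ≠ 0 :=
      hslope.eventually_ne (hnz' a ha)
    obtain ⟨η, hη0, hη⟩ : ∃ η > 0, ∀ t, t ≠ a → |t - a| < η → u t ≠ u₀ := by
      rw [eventually_nhdsWithin_iff, Metric.eventually_nhds_iff] at hev
      obtain ⟨η, hη0, hη⟩ := hev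
      refine ⟨η, hη0, fun t ht hlt => ?_⟩
      have h1 := hη (show dist t a < η by rwa [Real.dist_eq]) (by simpa using ht)
      intro hu0'
      apply h1
      rw [slope_def_field, hu0', ha, sub_self, zero_div]
    set S := {t : ℝ | a + η/2 ≤ t ∧ u t = u₀} with hS_def
    have hSne : S.Nonempty := by
      obtain ⟨z, hz, hz'⟩ := hzeros (a + η/2)
      exact ⟨z, hz.1, hz'⟩
    have hSclosed : IsClosed S := by
      have : S = {t : ℝ | a + η/2 ≤ t} ∩ {t : ℝ | u t = u₀} := rfl
      rw [this]
      exact IsClosed.inter (isClosed_le continuous_const continuous_id)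
        (isClosed_eq hcu continuous_const)
    have hSbdd : BddBelow S := ⟨a, fun t ht => by
      have := ht.1; linarith⟩
    set b := sInf S with hb_def
    have hbS : b ∈ S := hSclosed.csInf_mem hSne hSbdd
    have hab : a < b := by
      have := hbS.1; linarith
    have hbL : b ≤ a + L := by
      have hδ : ∀ γ : ℝ, 0 < γ → γ ≤ η/2 → b ≤ a + γ + L := by
        intro γ hγ0 hγη
        obtain ⟨z, hz, hz'⟩ := hzeros (a + γ)
        have hza : a < z := by linarith [hz.1]
        have hzS : z ∈ S := by
          constructor
          · by_contra hzlt
            push_neg at hzlt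
            have h1 : |z - a| < η := by
              rw [abs_of_pos (by linarith : (0:ℝ) < z - a)]
              linarith
            exact hη z (ne_of_gt hza) h1 hz'
          · exact hz'
        have := csInf_le hSbdd hzS
        linarith [hz.2]
      by_contra hgt
      push_neg at hgt
      set γ0 := min (η/2) ((b - (a + L))/2) with hγ0_def
      have h1 : 0 < γ0 := lt_min (by linarith) (by linarith)
      have h2 := hδ γ0 h1 (min_le_left _ _)
      have h3 : γ0 ≤ (b - (a + L))/2 := min_le_right _ _
      linarith
    refine ⟨b, hab, hbL, hbS.2, ?_⟩
    intro t hta htb ht0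
    rcases le_or_gt (a + η/2) t with h | h
    · have hts : t ∈ S := ⟨h, ht0⟩
      have := csInf_le hSbdd hts
      linarith
    · have h1 : |t - a| < η := by
        rw [abs_of_pos (by linarith : (0:ℝ) < t - a)]
        linarith
      exact hη t (ne_of_gt hta) h1 ht0
  -- the two step lemmas
  have hstepP : ∀ a b, u a = u₀ → u b = u₀ → a < b → (∀ t, a < t → t < b → u t ≠ u₀) →
      0 < deriv u a → deriv u b < 0 ∧ L' ≤ b - a := by
    intro a b ha hb hab hnz hda
    obtain ⟨t₀, ht₀1, ht₀2, ht₀3⟩ := exists_gt_right (hd1 a) hda b hab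
    rw [ha] at ht₀3
    have hsgn : ∀ t, a < t → t < b → u₀ < u t :=
      no_zero_sign hcu hnz ⟨ht₀1, ht₀2, ht₀3⟩
    have hdb : deriv u b < 0 :=
      lt_of_le_of_ne (left_lim_nonpos (hd1 b) hab hsgn hb) (hnz' b hb)
    refine ⟨hdb, ?_⟩
    by_contra hlt
    push_neg at hlt
    have hnn : ∀ t ∈ Icc a b, 0 ≤ u t - u₀ := by
      intro t ht
      rcases eq_or_lt_of_le ht.1 with h | h
      · rw [← h, ha]; norm_num
      rcases eq_or_lt_of_le ht.2 with h' | h'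
      · rw [h', hb]; norm_num
      · linarith [hsgn t h h']
    exact sturm_lower (fun t => u t - u₀) (deriv u) (deriv (deriv u)) hvd1 hd2 hcu''
      lamp a b hlamp hab (by rw [← hL'_def]; exact hlt)
      (by show u a - u₀ = 0; rw [ha]; ring)
      (by show u b - u₀ = 0; rw [hb]; ring)
      (fun t ht => hnn t ht)
      (fun t ht => hB t (hnn t ht))
      hdb
  have hstepN : ∀ a b, u a = u₀ → u b = u₀ → a < b → (∀ t, a < t → t < b → u t ≠ u₀) →
      deriv u a < 0 → 0 < deriv u b ∧ L' ≤ b - a := by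
    intro a b ha hb hab hnz hda
    obtain ⟨t₀, ht₀1, ht₀2, ht₀3⟩ := exists_gt_right (hwd1 a) (by linarith : 0 < -(deriv u a))
      b hab
    have ht₀3' : (0:ℝ) < u₀ - u t₀ := by
      have : u₀ - u a = 0 := by rw [ha]; ring
      linarith
    have hcw : Continuous (fun t => u₀ - u t) := continuous_const.sub hcu
    have hnzw : ∀ t, a < t → t < b → (u₀ - u t) ≠ (0:ℝ) := by
      intro t h1 h2 h3
      exact hnz t h1 h2 (by linarith)
    have hsgnw : ∀ t, a < t → t < b → (0:ℝ) < u₀ - u t :=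
      no_zero_sign hcw hnzw ⟨ht₀1, ht₀2, ht₀3'⟩
    have hdb : 0 < deriv u b := by
      have h1 : -(deriv u b) ≤ 0 :=
        left_lim_nonpos (hwd1 b) hab hsgnw (by rw [hb]; ring)
      have h2 := hnz' b hb
      rcases lt_or_gt_of_ne h2 with h | h
      · linarith
      · exact h
    refine ⟨hdb, ?_⟩
    by_contra hlt
    push_neg at hlt
    have hnn : ∀ t ∈ Icc a b, (0:ℝ) ≤ u₀ - u t := by
      intro t ht
      rcases eq_or_lt_of_le ht.1 with h | h
      · rw [← h, ha]; norm_num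
      rcases eq_or_lt_of_le ht.2 with h' | h'
      · rw [h', hb]; norm_num
      · linarith [hsgnw t h h']
    exact sturm_lower (fun t => u₀ - u t) (fun t => -(deriv u t))
      (fun t => -(deriv (deriv u) t)) hwd1 hwd2 hcw''
      lamp a b hlamp hab (by rw [← hL'_def]; exact hlt)
      (by show u₀ - u a = 0; rw [ha]; ring)
      (by show u₀ - u b = 0; rw [hb]; ring)
      (fun t ht => hnn t ht)
      (fun t ht => by
        show -lamp * (u₀ - u t) ≤ -(deriv (deriv u) t)
        have := hD t (by linarith [hnn t ht])
        linarith)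
      (by show -(deriv u b) < 0; linarith)
  -- assemble three consecutive zeros
  obtain ⟨a, ha', hza⟩ := hzeros 0
  obtain ⟨b, hab, hbL, hb0, hnzab⟩ := hnext a hza
  obtain ⟨c, hbc, hcL, hc0, hnzbc⟩ := hnext b hb0
  have hda_ne : deriv u a ≠ 0 := hnz' a hza
  have hmain : L' ≤ b - a ∧ L' ≤ c - b ∧
      ((0 < deriv u a ∧ deriv u b < 0 ∧ 0 < deriv u c) ∨
       (deriv u a < 0 ∧ 0 < deriv u b ∧ deriv u c < 0)) := by
    rcases lt_or_gt_of_ne hda_ne with h | h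
    · obtain ⟨h1, h2⟩ := hstepN a b hza hb0 hab hnzab h
      obtain ⟨h3, h4⟩ := hstepP b c hb0 hc0 hbc hnzbc h1
      exact ⟨h2, h4, Or.inr ⟨h, h1, h3⟩⟩
    · obtain ⟨h1, h2⟩ := hstepP a b hza hb0 hab hnzab h
      obtain ⟨h3, h4⟩ := hstepN b c hb0 hc0 hbc hnzbc h1
      exact ⟨h2, h4, Or.inl ⟨h, h1, h3⟩⟩
  have hsq : (deriv u a)^2 = (deriv u c)^2 := by
    have e1 := henergy a
    have e2 := henergy c
    rw [hza] at e1
    rw [hc0] at e2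
    linarith
  have hderiv_eq : deriv u c = deriv u a := by
    have h1 : (deriv u c - deriv u a) * (deriv u c + deriv u a) = 0 := by nlinarith
    rcases mul_eq_zero.mp h1 with h | h
    · linarith
    · exfalso
      rcases hmain.2.2 with ⟨p1, p2, p3⟩ | ⟨p1, p2, p3⟩
      · nlinarith
      · nlinarith
  -- Lipschitz data for uniqueness
  have hGdiff : Differentiable ℝ (Gf n N) := fun x => (hasDerivAt_Gf hn hN x).differentiableAt
  have hGderiv : deriv (Gf n N) = fun x =>
      ((((n : ℝ) - 2) ^ 2 - (n : ℝ) * ((n : ℝ) - 2) * (N - 1) * x ^ (N - 2)) / 4) :=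
    funext fun x => (hasDerivAt_Gf hn hN x).deriv
  have hGcont : Continuous (deriv (Gf n N)) := by
    rw [hGderiv]
    exact ((continuous_const.sub (continuous_const.mul (Real.continuous_rpow_const
      (le_of_lt (hN2pos hn hN))))).div_const 4)
  set l : ℝ := u₀ - u₀/2 with hl_def
  set r : ℝ := u₀ + u₀/2 with hr_def
  have hbdIcc : ∀ t, u t ∈ Icc l r := by
    intro t
    have h1 := le_trans (hbd t) (min_le_right _ _)
    obtain ⟨h2, h3⟩ := abs_le.mp h1
    exact ⟨by rw [hl_def]; linarith, by rw [hr_def]; linarith⟩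
  obtain ⟨C0, hC0⟩ := (isCompact_Icc (a := l) (b := r)).exists_bound_of_continuousOn
    hGcont.continuousOn
  have hGlip : LipschitzOnWith ⟨max C0 0, le_max_right _ _⟩ (Gf n N) (Icc l r) := by
    apply Convex.lipschitzOnWith_of_nnnorm_deriv_le (fun x _ => hGdiff x) ?_ (convex_Icc l r)
    intro x hx
    have h1 := hC0 x hx
    apply NNReal.coe_le_coe.mp
    simp only [coe_nnnorm, NNReal.coe_mk]
    exact le_trans h1 (le_max_left _ _)
  have hPer2 : Function.Periodic u (c - a) := by
    apply mk_periodic n N u hu hode l r hbdIcc _ hGlip a (c - a)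
      (by linarith [hmain.1, hmain.2.1, hL'0])
      (by rw [show a + (c - a) = c by ring, hc0, hza])
      (by rw [show a + (c - a) = c by ring, hderiv_eq])
  have hT1 : T ≤ c - a := hmin _ (by linarith [hmain.1, hmain.2.1, hL'0]) hPer2
  have hvaT : u (a + T) = u₀ := (hper a).trans hza
  have hdaT : deriv u (a + T) = deriv u a := by
    have hfun : (fun s => u (s + T)) = u := funext hper
    have h1 : deriv (fun s => u (s + T)) a = deriv u (a + T) := deriv_comp_add_const u T a
    rw [hfun] at h1
    exact h1.symm
  have hge : c ≤ a + T := by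
    by_contra hlt
    push_neg at hlt
    have hain : a < a + T := by linarith
    rcases lt_trichotomy (a + T) b with h | h | h
    · exact hnzab (a + T) hain h hvaT
    · rcases hmain.2.2 with ⟨p1, p2, p3⟩ | ⟨p1, p2, p3⟩
      · rw [h] at hdaT; linarith
      · rw [h] at hdaT; linarith
    · exact hnzbc (a + T) h hlt hvaT
  constructor
  · have h1 : 2 * L' ≤ c - a := by linarith [hmain.1, hmain.2.1]
    have h2 : 2*π/Real.sqrt lamp = 2 * L' := by rw [hL'_def]; ring
    linarith
  · have h1 : c - a ≤ 2 * L := by linarith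
    have h2 : 2*π/Real.sqrt lamm = 2 * L := by rw [hL_def]; ring
    linarith
private lemma energy_const_s15 {n : ℕ} (hn : 3 ≤ n) {N : ℝ} (hN : N = 2 * (n : ℝ) / ((n : ℝ) - 2))
    {α : ℝ} {u : ℝ → ℝ} (hu : ContDiff ℝ 2 u) (hu0 : u 0 = α) (hu'0 : deriv u 0 = 0)
    (hode : ∀ t, deriv (deriv u) t = Gf n N (u t)) :
    ∀ t, (deriv u t)^2/2 + Vf n N (u t) = Vf n N α := by
  have hd1 := reg1 hu
  have hd2 := reg2 hu
  have hEd : ∀ t, HasDerivAt (fun t => (deriv u t)^2/2 + Vf n N (u t)) 0 t := by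
    intro t
    have h1 : HasDerivAt (fun t => (deriv u t)^2/2)
        (2 * (deriv u t) ^ 1 * deriv (deriv u) t / 2) t := ((hd2 t).pow 2).div_const 2
    have h2 : HasDerivAt (fun t => Vf n N (u t)) (-(Gf n N (u t)) * deriv u t) t :=
      (hasDerivAt_Vf hn hN (u t)).comp t (hd1 t)
    have h3 := h1.add h2
    have h4 : 2 * (deriv u t) ^ 1 * deriv (deriv u) t / 2 + (-(Gf n N (u t)) * deriv u t) = 0 := by
      rw [hode t]; ring
    rw [h4] at h3
    exact h3
  intro t
  have hdiff : Differentiable ℝ (fun t => (deriv u t)^2/2 + Vf n N (u t)) :=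
    fun s => (hEd s).differentiableAt
  have := is_const_of_deriv_eq_zero hdiff (fun s => (hEd s).deriv) t 0
  rw [this, hu0, hu'0]
  norm_num

private lemma hfun_small {n : ℕ} (hn : 3 ≤ n) {N : ℝ} (hN : N = 2 * (n : ℝ) / ((n : ℝ) - 2))
    {u₀ : ℝ} (hu₀ : u₀ = (((n : ℝ) - 2) / (n : ℝ)) ^ (((n : ℝ) - 2) / 4))
    {ε : ℝ} (hε : 0 < ε) :
    ∃ ρ > 0, ∀ x : ℝ, |x| ≤ ρ → |Gf n N (u₀ + x) + ((n:ℝ)-2)*x| ≤ ε * |x| := by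
  have h := hasDerivAt_hfun hn hN hu₀
  have hlo := hasDerivAt_iff_isLittleO.mp h
  have h0 : Gf n N (u₀ + 0) = 0 := by
    rw [add_zero, Gf_u₀ hn hN hu₀]
  have hev := hlo.def hε
  rw [Metric.eventually_nhds_iff] at hev
  obtain ⟨η, hη0, hη⟩ := hev
  refine ⟨η/2, by linarith, fun x hx => ?_⟩
  have hd : dist x 0 < η := by
    rw [Real.dist_eq, sub_zero]
    calc |x| ≤ η/2 := hx
      _ < η := by linarith
  have h1 := hη hd
  have hGu : Gf n N u₀ = 0 := Gf_u₀ hn hN hu₀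
  simp only [hGu, add_zero, h0, smul_eq_mul, sub_zero, mul_zero, zero_add, zero_sub,
    sub_neg_eq_add, Real.norm_eq_abs] at h1
  exact h1

private lemma orbit_bound {n : ℕ} (hn : 3 ≤ n) {N : ℝ} (hN : N = 2 * (n : ℝ) / ((n : ℝ) - 2))
    {u₀ : ℝ} (hu₀ : u₀ = (((n : ℝ) - 2) / (n : ℝ)) ^ (((n : ℝ) - 2) / 4))
    {ε₂ : ℝ} (hε₂0 : 0 < ε₂) (hε₂1 : ε₂ ≤ u₀/2) :
    ∃ δ > 0, ∀ α : ℝ, u₀ < α → α < u₀ + δ → ∀ u : ℝ → ℝ,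
      (∀ t, (deriv u t)^2/2 + Vf n N (u t) = Vf n N α) → (∀ t, 0 < u t) →
      ∀ t, |u t - u₀| ≤ ε₂ := by
  have hu₀pos := u₀pos hn hN hu₀
  have hmono := Vf_strictMonoOn hn hN hu₀
  have hanti := Vf_strictAntiOn hn hN hu₀
  have hV1 : Vf n N u₀ < Vf n N (u₀ - ε₂) := by
    apply hanti (⟨by linarith, by linarith⟩ : u₀ - ε₂ ∈ Icc 0 u₀)
      (⟨by linarith, le_refl u₀⟩ : u₀ ∈ Icc 0 u₀)
    linarith
  have hV2 : Vf n N u₀ < Vf n N (u₀ + ε₂) := by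
    apply hmono (mem_Ici.mpr (le_refl u₀)) (mem_Ici.mpr (by linarith))
    linarith
  set m := min (Vf n N (u₀ - ε₂)) (Vf n N (u₀ + ε₂)) - Vf n N u₀ with hm_def
  have hm0 : 0 < m := by
    rw [hm_def]
    rcases le_total (Vf n N (u₀ - ε₂)) (Vf n N (u₀ + ε₂)) with h | h
    · rw [min_eq_left h]; linarith
    · rw [min_eq_right h]; linarith
  have hcont : ContinuousAt (Vf n N) u₀ := (contV hn hN).continuousAt
  obtain ⟨δ₁, hδ₁0, hδ₁⟩ := Metric.continuousAt_iff.mp hcont m hm0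
  refine ⟨min δ₁ ε₂, lt_min hδ₁0 hε₂0, ?_⟩
  intro α hα1 hα2 u henergy hpos t
  have hVα : Vf n N α < Vf n N u₀ + m := by
    have hd : dist α u₀ < δ₁ := by
      rw [Real.dist_eq, abs_of_pos (by linarith : (0:ℝ) < α - u₀)]
      have := min_le_left δ₁ ε₂
      linarith
    have := hδ₁ hd
    rw [Real.dist_eq, abs_lt] at this
    linarith [this.2]
  have hVut : Vf n N (u t) ≤ Vf n N α := by
    have := henergy t
    nlinarith [sq_nonneg (deriv u t)]
  have hub : u t ≤ u₀ + ε₂ := by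
    by_contra hcgt
    push_neg at hcgt
    have hst := hmono (mem_Ici.mpr (by linarith : u₀ ≤ u₀ + ε₂))
      (mem_Ici.mpr (by linarith : u₀ ≤ u t)) hcgt
    have hmin := min_le_right (Vf n N (u₀ - ε₂)) (Vf n N (u₀ + ε₂))
    linarith
  have hlb : u₀ - ε₂ ≤ u t := by
    by_contra hclt
    push_neg at hclt
    have hst := hanti (⟨le_of_lt (hpos t), by linarith⟩ : u t ∈ Icc 0 u₀)
      (⟨by linarith, by linarith⟩ : u₀ - ε₂ ∈ Icc 0 u₀) hclt
    have hmin := min_le_left (Vf n N (u₀ - ε₂)) (Vf n N (u₀ + ε₂))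
    linarith
  rw [abs_le]
  constructor <;> linarith
/-- In the setting of the period function `τ` for
`4u'' - (n-2)²u + n(n-2)u^(N-1) = 0`, one has `τ(α) → 2π/√(n-2)` as `α → u₀⁺` (within the
domain `(u₀,1)`). -/
theorem period_function_limit_at_u0
    (n : ℕ) (hn : 3 ≤ n) (N : ℝ) (hN : N = 2 * (n : ℝ) / ((n : ℝ) - 2))
    (u₀ : ℝ) (hu₀ : u₀ = (((n : ℝ) - 2) / (n : ℝ)) ^ (((n : ℝ) - 2) / 4))
    (u : ℝ → ℝ → ℝ) (τ : ℝ → ℝ)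
    (hsol : ∀ α ∈ Ioo u₀ 1,
      ContDiff ℝ 2 (u α) ∧ u α 0 = α ∧ deriv (u α) 0 = 0 ∧
      ∀ t : ℝ, 4 * deriv (deriv (u α)) t - ((n : ℝ) - 2) ^ 2 * u α t
          + (n : ℝ) * ((n : ℝ) - 2) * u α t ^ (N - 1) = 0)
    (hpos : ∀ α ∈ Ioo u₀ 1, ∀ t : ℝ, 0 < u α t)
    (hnc : ∀ α ∈ Ioo u₀ 1, ∃ t₁ t₂ : ℝ, u α t₁ ≠ u α t₂)
    (hτ : ∀ α ∈ Ioo u₀ 1,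
      0 < τ α ∧ Function.Periodic (u α) (τ α) ∧
      ∀ T : ℝ, 0 < T → Function.Periodic (u α) T → τ α ≤ T) :
    Filter.Tendsto τ (nhdsWithin u₀ (Ioo u₀ 1))
      (nhds (2 * Real.pi / Real.sqrt ((n : ℝ) - 2))) := by
  have hc2 : (1:ℝ) ≤ (n:ℝ) - 2 := by linarith [nR3 hn]
  have hu₀pos := u₀pos hn hN hu₀
  rw [Metric.tendsto_nhdsWithin_nhds]
  intro ε' hε'
  -- continuity of x ↦ 2π/√x at n - 2
  have hcont : ContinuousAt (fun x : ℝ => 2 * π / Real.sqrt x) ((n:ℝ) - 2) := by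
    apply ContinuousAt.div continuousAt_const Real.continuous_sqrt.continuousAt
    rw [Real.sqrt_ne_zero']
    linarith
  obtain ⟨δ₁, hδ₁0, hδ₁⟩ := Metric.continuousAt_iff.mp hcont ε' hε'
  set ε := min (δ₁/2) (1/2) with hε_def
  have hε0 : 0 < ε := lt_min (by linarith) (by norm_num)
  have hε1 : ε ≤ 1/2 := min_le_right _ _
  have hεδ : ε < δ₁ := lt_of_le_of_lt (min_le_left _ _) (by linarith)
  have hb1 : dist (2 * π / Real.sqrt ((n:ℝ) - 2 + ε)) (2 * π / Real.sqrt ((n:ℝ) - 2)) < ε' := by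
    apply hδ₁
    rw [Real.dist_eq, show (n:ℝ) - 2 + ε - ((n:ℝ) - 2) = ε by ring, abs_of_pos hε0]
    exact hεδ
  have hb2 : dist (2 * π / Real.sqrt ((n:ℝ) - 2 - ε)) (2 * π / Real.sqrt ((n:ℝ) - 2)) < ε' := by
    apply hδ₁
    rw [Real.dist_eq, show (n:ℝ) - 2 - ε - ((n:ℝ) - 2) = -ε by ring, abs_neg, abs_of_pos hε0]
    exact hεδ
  obtain ⟨ρ, hρ0, hρ⟩ := hfun_small hn hN hu₀ hε0
  have hε₂0 : 0 < min ρ (u₀/2) := lt_min hρ0 (by linarith)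
  obtain ⟨δ, hδ0, hδprop⟩ := orbit_bound hn hN hu₀ hε₂0 (min_le_right ρ (u₀/2))
  refine ⟨δ, hδ0, ?_⟩
  intro α hα hdist
  obtain ⟨hcd, hu0α, hu'0α, hodeα⟩ := hsol α hα
  have hode' : ∀ t, deriv (deriv (u α)) t = Gf n N (u α t) := by
    intro t
    have h1 := hodeα t
    unfold Gf
    linarith
  have henergy := energy_const_s15 hn hN hcd hu0α hu'0α hode'
  have hα2 : α < u₀ + δ := by
    rw [Real.dist_eq, abs_of_pos (by linarith [hα.1] : (0:ℝ) < α - u₀)] at hdist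
    linarith
  have hbd : ∀ t, |u α t - u₀| ≤ min ρ (u₀/2) :=
    hδprop α hα.1 hα2 (u α) henergy (hpos α hα)
  obtain ⟨hT0, hTper, hTmin⟩ := hτ α hα
  obtain ⟨hlow, hhigh⟩ := period_bounds hn hN hu₀ hε0 hε1 hρ hα.1 hcd hu0α hu'0α hode' hbd
    hT0 hTper hTmin
  rw [Real.dist_eq, abs_lt]
  rw [Real.dist_eq, abs_lt] at hb1 hb2
  constructor
  · linarith [hb1.1]
  · linarith [hb2.2]
end
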